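/- For closed PCF_v expressions ⊢ e1 : T and ⊢ e2 : T, e1 ≈ e2 (the initial configurations C_{e1} and C_{e2} are weakly bisimilar) if and only if ⟦e1⟧ = ⟦e2⟧. -/

import Mathlib

set_option linter.unusedVariables false
set_option linter.unnecessarySeqFocus false

namespace PCFv

/-- Concatenation of a list of lists. -/
def flat {β : Type _} : List (List β) → List β
  | [] => []
  | l :: ls => l ++ flat ls

/-! ## Types, constants and primitive operations of PCF_v -/

inductive Ty : Type
  | bool | int | unit
  | arrow (a b : Ty)
  | prod (Ts : List Ty)

inductive Const : Type
  | unit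
  | bool (b : Bool)
  | int (n : Int)
  deriving DecidableEq

def Const.ty : Const → Ty
  | .unit => .unit
  | .bool _ => .bool
  | .int _ => .int

inductive PrimOp : Type
  | add | sub | mul | le | neg | conj | disj | eqc
  deriving DecidableEq

def PrimOp.eval : PrimOp → List Const → Option Const
  | .add, [.int m, .int n] => some (.int (m + n))
  | .sub, [.int m, .int n] => some (.int (m - n))
  | .mul, [.int m, .int n] => some (.int (m * n))
  | .le,  [.int m, .int n] => some (.bool (decide (m ≤ n)))
  | .neg, [.bool b] => some (.bool (!b))
  | .conj, [.bool a, .bool b] => some (.bool (a && b))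
  | .disj, [.bool a, .bool b] => some (.bool (a || b))
  | .eqc, [c1, c2] => some (.bool (decide (c1 = c2)))
  | _, _ => none

inductive PrimTy : PrimOp → List Ty → Ty → Prop
  | add : PrimTy .add [.int, .int] .int
  | sub : PrimTy .sub [.int, .int] .int
  | mul : PrimTy .mul [.int, .int] .int
  | le : PrimTy .le [.int, .int] .bool
  | neg : PrimTy .neg [.bool] .bool
  | conj : PrimTy .conj [.bool, .bool] .bool
  | disj : PrimTy .disj [.bool, .bool] .bool
  | eqc {T : Ty} (h : T = .int ∨ T = .bool ∨ T = .unit) : PrimTy .eqc [T, T] .bool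

/-! ## Expressions (with abstract function names, used by the LTSs) -/

/-- Expressions in de Bruijn representation.  `fixfun T1 T2 b` is the recursive
function `λ^f x. b` (variable 0 is `x`, variable 1 is `f`); `aname a j T` is an
abstract (opponent-generated) function name `α_T^j`; `letTup n e b` is the
tuple-deconstructing let `let (x_1,…,x_n) = e in b` (variables `0..n-1`). -/
inductive Expr : Type
  | var (n : Nat)
  | aname (a j : Nat) (T : Ty)
  | const (c : Const)
  | fixfun (T1 T2 : Ty) (body : Expr)
  | tuple (es : List Expr)
  | prim (op : PrimOp) (es : List Expr)
  | app (e1 e2 : Expr)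
  | ite (b e1 e2 : Expr)
  | letTup (n : Nat) (e body : Expr)

instance : Inhabited Expr := ⟨.const .unit⟩

/-- Simultaneous substitution of the closed values `vs` for the variables
`d, …, d + vs.length - 1` (under `d` binders). -/
def Expr.inst (vs : List Expr) : Nat → Expr → Expr
  | d, .var n =>
      if n < d then .var n
      else
        match vs[n - d]? with
        | some v => v
        | none => .var (n - vs.length)
  | _, .aname a j T => .aname a j T
  | _, .const c => .const c
  | d, .fixfun T1 T2 b => .fixfun T1 T2 (Expr.inst vs (d + 2) b)
  | d, .tuple es => .tuple (es.attach.map fun x => Expr.inst vs d x.1)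
  | d, .prim op es => .prim op (es.attach.map fun x => Expr.inst vs d x.1)
  | d, .app e1 e2 => .app (Expr.inst vs d e1) (Expr.inst vs d e2)
  | d, .ite b e1 e2 => .ite (Expr.inst vs d b) (Expr.inst vs d e1) (Expr.inst vs d e2)
  | d, .letTup n e b => .letTup n (Expr.inst vs d e) (Expr.inst vs (d + n) b)
termination_by d e => sizeOf e
decreasing_by all_goals (simp_wf <;> first
  | omega
  | (have := List.sizeOf_lt_of_mem x.2; omega))

/-- Abstract function names occurring in an expression. -/
def Expr.anames : Expr → List Nat
  | .var _ => []
  | .aname a _ _ => [a]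
  | .const _ => []
  | .fixfun _ _ b => b.anames
  | .tuple es => flat (es.attach.map fun x => x.1.anames)
  | .prim _ es => flat (es.attach.map fun x => x.1.anames)
  | .app e1 e2 => e1.anames ++ e2.anames
  | .ite b e1 e2 => b.anames ++ e1.anames ++ e2.anames
  | .letTup _ e b => e.anames ++ b.anames
termination_by e => sizeOf e
decreasing_by all_goals (simp_wf <;> first
  | omega
  | (have := List.sizeOf_lt_of_mem x.2; omega))

inductive IsValue : Expr → Prop
  | const (c : Const) : IsValue (.const c)
  | aname (a j : Nat) (T : Ty) : IsValue (.aname a j T)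
  | fixfun (T1 T2 : Ty) (b : Expr) : IsValue (.fixfun T1 T2 b)
  | tuple {es : List Expr} (h : ∀ e ∈ es, IsValue e) : IsValue (.tuple es)

/-! ## Typing -/

/-- Typing judgement, parameterised by whether abstract function names are
allowed.  `Typed := TypedA false` is the typing judgement of pure PCF_v,
`TypedN := TypedA true` additionally types abstract function names. -/
inductive TypedA (allow : Bool) : List Ty → Expr → Ty → Prop
  | var {Γ n T} (h : Γ[n]? = some T) : TypedA allow Γ (.var n) T
  | aname {Γ a j T1 T2} (hallow : allow = true) :
      TypedA allow Γ (.aname a j (.arrow T1 T2)) (.arrow T1 T2)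
  | const {Γ c} : TypedA allow Γ (.const c) c.ty
  | fixfun {Γ T1 T2 b} (h : TypedA allow (T1 :: .arrow T1 T2 :: Γ) b T2) :
      TypedA allow Γ (.fixfun T1 T2 b) (.arrow T1 T2)
  | tuple {Γ} {es : List Expr} {Ts : List Ty} (hlen : es.length = Ts.length)
      (h : ∀ (i : Nat) (e : Expr) (T : Ty), es[i]? = some e → Ts[i]? = some T → TypedA allow Γ e T) :
      TypedA allow Γ (.tuple es) (.prod Ts)
  | prim {Γ op T} {es : List Expr} {Ts : List Ty} (hty : PrimTy op Ts T) (hlen : es.length = Ts.length)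
      (h : ∀ (i : Nat) (e : Expr) (T' : Ty), es[i]? = some e → Ts[i]? = some T' → TypedA allow Γ e T') :
      TypedA allow Γ (.prim op es) T
  | app {Γ e1 e2 T1 T2} (h1 : TypedA allow Γ e1 (.arrow T1 T2))
      (h2 : TypedA allow Γ e2 T1) : TypedA allow Γ (.app e1 e2) T2
  | ite {Γ b e1 e2 T} (hb : TypedA allow Γ b .bool) (h1 : TypedA allow Γ e1 T)
      (h2 : TypedA allow Γ e2 T) : TypedA allow Γ (.ite b e1 e2) T
  | letTup {Γ e b Ts T} (he : TypedA allow Γ e (.prod Ts))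
      (hb : TypedA allow (Ts ++ Γ) b T) : TypedA allow Γ (.letTup Ts.length e b) T

abbrev Typed := TypedA false
abbrev TypedN := TypedA true

/-! ## Reduction semantics -/

inductive BStep : Expr → Expr → Prop
  | beta {T1 T2 b v} (hv : IsValue v) :
      BStep (.app (.fixfun T1 T2 b) v) (Expr.inst [v, .fixfun T1 T2 b] 0 b)
  | prim {op : PrimOp} {cs : List Const} {c : Const} (h : op.eval cs = some c) :
      BStep (.prim op (cs.map Expr.const)) (.const c)
  | letTup {n vs b} (hv : ∀ v ∈ vs, IsValue v) (hlen : vs.length = n) :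
      BStep (.letTup n (.tuple vs) b) (Expr.inst vs 0 b)
  | iteT {e1 e2} : BStep (.ite (.const (.bool true)) e1 e2) e1
  | iteF {e1 e2} : BStep (.ite (.const (.bool false)) e1 e2) e2

/-- Single-hole evaluation contexts, with typed holes. -/
inductive ECtx : Type
  | hole (T : Ty)
  | tupleC (vs : List Expr) (E : ECtx) (es : List Expr)
  | primC (op : PrimOp) (vs : List Expr) (E : ECtx) (es : List Expr)
  | appL (E : ECtx) (e : Expr)
  | appR (v : Expr) (E : ECtx)
  | iteC (E : ECtx) (e1 e2 : Expr)
  | letC (n : Nat) (E : ECtx) (b : Expr)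

def ECtx.plug : ECtx → Expr → Expr
  | .hole _, e => e
  | .tupleC vs E es, e => .tuple (vs ++ E.plug e :: es)
  | .primC op vs E es, e => .prim op (vs ++ E.plug e :: es)
  | .appL E e2, e => .app (E.plug e) e2
  | .appR v E, e => .app v (E.plug e)
  | .iteC E e1 e2, e => .ite (E.plug e) e1 e2
  | .letC n E b, e => .letTup n (E.plug e) b

def ECtx.holeTy : ECtx → Ty
  | .hole T => T
  | .tupleC _ E _ => E.holeTy
  | .primC _ _ E _ => E.holeTy
  | .appL E _ => E.holeTy
  | .appR _ E => E.holeTy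
  | .iteC E _ _ => E.holeTy
  | .letC _ E _ => E.holeTy

/-- Well-formedness of evaluation contexts: everything to the left of the hole
is a value. -/
inductive ECtx.Wf : ECtx → Prop
  | hole (T) : ECtx.Wf (.hole T)
  | tupleC {vs E es} (h : ∀ v ∈ vs, IsValue v) (hE : ECtx.Wf E) :
      ECtx.Wf (.tupleC vs E es)
  | primC {op vs E es} (h : ∀ v ∈ vs, IsValue v) (hE : ECtx.Wf E) :
      ECtx.Wf (.primC op vs E es)
  | appL {E e} (hE : ECtx.Wf E) : ECtx.Wf (.appL E e)
  | appR {v E} (hv : IsValue v) (hE : ECtx.Wf E) : ECtx.Wf (.appR v E)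
  | iteC {E e1 e2} (hE : ECtx.Wf E) : ECtx.Wf (.iteC E e1 e2)
  | letC {n E b} (hE : ECtx.Wf E) : ECtx.Wf (.letC n E b)

/-- Small-step reduction `e → e'`. -/
inductive Red : Expr → Expr → Prop
  | mk {E a b} (hwf : ECtx.Wf E) (h : BStep a b) : Red (E.plug a) (E.plug b)

/-- `e ⇓`: `e` reduces to a value. -/
def Terminates (e : Expr) : Prop := ∃ v, IsValue v ∧ Relation.ReflTransGen Red e v

/-! ## Contexts and contextual equivalence -/

/-- Multi-holed contexts `D` (with indexed, typed holes). -/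
inductive Ctx : Type
  | hole (i : Nat) (T : Ty)
  | var (n : Nat)
  | const (c : Const)
  | fixfun (T1 T2 : Ty) (D : Ctx)
  | tuple (Ds : List Ctx)
  | prim (op : PrimOp) (Ds : List Ctx)
  | app (D1 D2 : Ctx)
  | ite (D1 D2 D3 : Ctx)
  | letTup (n : Nat) (D1 D2 : Ctx)

/-- `D[e]`: fill every hole of `D` with the (closed) expression `e`. -/
def Ctx.fill : Ctx → Expr → Expr
  | .hole _ _, e => e
  | .var n, _ => .var n
  | .const c, _ => .const c
  | .fixfun T1 T2 D, e => .fixfun T1 T2 (D.fill e)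
  | .tuple Ds, e => .tuple (Ds.attach.map fun x => x.1.fill e)
  | .prim op Ds, e => .prim op (Ds.attach.map fun x => x.1.fill e)
  | .app D1 D2, e => .app (D1.fill e) (D2.fill e)
  | .ite D1 D2 D3, e => .ite (D1.fill e) (D2.fill e) (D3.fill e)
  | .letTup n D1 D2, e => .letTup n (D1.fill e) (D2.fill e)
termination_by D _ => sizeOf D
decreasing_by all_goals (simp_wf <;> first
  | omega
  | (have := List.sizeOf_lt_of_mem x.2; omega))

/-- Contextual equivalence `e1 ≅ e2` for closed expressions. -/
def CtxEquiv (e1 e2 : Expr) : Prop :=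
  ∀ D : Ctx, Typed [] (D.fill e1) .unit → Typed [] (D.fill e2) .unit →
    (Terminates (D.fill e1) ↔ Terminates (D.fill e2))

/-! ## Applicative contexts -/

/-- The diverging expression `⊥_Unit`. -/
def botUnit : Expr := .app (.fixfun .unit .unit (.app (.var 1) (.var 0))) (.const .unit)

/-- Applicative contexts `E_a ::= [·]_T | E_a v | if E_a = c then () else ⊥ | π_i(E_a)`. -/
inductive ACtx : Type
  | hole (T : Ty)
  | app (E : ACtx) (v : Expr)
  | iteEq (E : ACtx) (c : Const)
  | proj (n i : Nat) (E : ACtx)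

def ACtx.fill : ACtx → Expr → Expr
  | .hole _, e => e
  | .app E v, e => .app (E.fill e) v
  | .iteEq E c, e => .ite (.prim .eqc [E.fill e, .const c]) (.const .unit) botUnit
  | .proj n i E, e => .letTup n (E.fill e) (.var i)

/-- Well-formedness of applicative contexts: the arguments are values. -/
inductive ACtx.Wf : ACtx → Prop
  | hole (T) : ACtx.Wf (.hole T)
  | app {E v} (hv : IsValue v) (hE : ACtx.Wf E) : ACtx.Wf (.app E v)
  | iteEq {E c} (hE : ACtx.Wf E) : ACtx.Wf (.iteEq E c)
  | proj {n i E} (hE : ACtx.Wf E) : ACtx.Wf (.proj n i E)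

/-! ## The plain LTS (Figure 2) -/

/-- Abstract values: values in which every function is an abstract name.
These are the values `D[α̅]` supplied by the opponent. -/
inductive AVal : Type
  | const (c : Const)
  | name (a : Nat) (T : Ty)
  | tuple (vs : List AVal)

instance : Inhabited AVal := ⟨.const .unit⟩

def AVal.names : AVal → List Nat
  | .const _ => []
  | .name a _ => [a]
  | .tuple vs => flat (vs.attach.map fun x => x.1.names)
termination_by v => sizeOf v
decreasing_by all_goals (simp_wf <;> first
  | omega
  | (have := List.sizeOf_lt_of_mem x.2; omega))

/-- `v.toExpr j`: the expression `D[α̅^j]` denoted by an abstract value,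
annotating every abstract name with the index `j`. -/
def AVal.toExpr (j : Nat) : AVal → Expr
  | .const c => .const c
  | .name a T => .aname a j T
  | .tuple vs => .tuple (vs.attach.map fun x => x.1.toExpr j)
termination_by v => sizeOf v
decreasing_by all_goals (simp_wf <;> first
  | omega
  | (have := List.sizeOf_lt_of_mem x.2; omega))

/-- Typing of abstract values (names must be of function type). -/
inductive AValTy : AVal → Ty → Prop
  | const (c : Const) : AValTy (.const c) c.ty
  | name (a : Nat) (T1 T2 : Ty) : AValTy (.name a (.arrow T1 T2)) (.arrow T1 T2)
  | tuple {vs : List AVal} {Ts : List Ty} (hlen : vs.length = Ts.length)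
      (h : ∀ (i : Nat) (v : AVal) (T : Ty), vs[i]? = some v → Ts[i]? = some T → AValTy v T) :
      AValTy (.tuple vs) (.prod Ts)

/-- Function-free value contexts `D` with indexed, typed holes (ultimate patterns). -/
inductive VCtx : Type
  | const (c : Const)
  | hole (i : Nat) (T : Ty)
  | tuple (Ds : List VCtx)

instance : Inhabited VCtx := ⟨.const .unit⟩

/-! ### Ultimate pattern decomposition of proponent values -/

mutual
/-- Decompose a value into an ultimate pattern and the list of its functions;
the `Nat` argument/result threads the next fresh hole index. -/
def ulpAux : Expr → Nat → Option (VCtx × List Expr × Nat)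
  | .const c, n => some (.const c, [], n)
  | .fixfun T1 T2 b, n => some (.hole n (.arrow T1 T2), [.fixfun T1 T2 b], n + 1)
  | .aname a j T, n => some (.hole n T, [.aname a j T], n + 1)
  | .tuple es, n =>
      match ulpList es n with
      | some (Ds, fs, n') => some (.tuple Ds, fs, n')
      | none => none
  | _, _ => none

def ulpList : List Expr → Nat → Option (List VCtx × List Expr × Nat)
  | [], n => some ([], [], n)
  | e :: es, n =>
      match ulpAux e n with
      | some (D, fs, n') =>
          match ulpList es n' with
          | some (Ds, fs', n'') => some (D :: Ds, fs ++ fs', n'')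
          | none => none
      | none => none
end

/-- `ulp v = some (D, v̅)` is the ultimate pattern decomposition of the value `v`. -/
def ulp (v : Expr) : Option (VCtx × List Expr) :=
  match ulpAux v 0 with
  | some (D, fs, _) => some (D, fs)
  | none => none

/-! ### Moves, traces and memories -/

/-- Moves of the plain LTS: proponent calls `α̅(D)`, proponent returns
`ret(D)`, opponent calls `i(v)` and opponent returns `ret(v)`. -/
inductive Move : Type
  | pcall (a : Nat) (T : Ty) (D : VCtx)
  | pret (D : VCtx)
  | ocall (i : Nat) (v : AVal)
  | oret (v : AVal)

instance : Inhabited Move := ⟨.pret (.const .unit)⟩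

abbrev Trace := List Move

def Move.isP : Move → Bool
  | .pcall .. => true
  | .pret _ => true
  | _ => false

/-- Abstract names introduced by a move (opponent moves introduce names). -/
def Move.intros : Move → List Nat
  | .ocall _ v => v.names
  | .oret v => v.names
  | _ => []

def traceIntros (t : Trace) : List Nat := flat (t.map Move.intros)

/-- The moves extending the proponent-ending trace `t` in `M`. -/
def nextMoves (M : Set Trace) (t : Trace) : Set Move := {η | t ++ [η] ∈ M}

def EndsP (t : Trace) : Prop := ∃ t' m, t = t' ++ [m] ∧ m.isP = true

/-- Legality of a memory `M`: any proponent-ending trace has at most one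
extension in `M`, and each abstract name is introduced at most once in `M`. -/
def LegalM (M : Set Trace) : Prop :=
  (∀ t, EndsP t → ∀ η₁ η₂, η₁ ∈ nextMoves M t → η₂ ∈ nextMoves M t → η₁ = η₂) ∧
  (∀ a t₁ t₂, t₁ ∈ M → t₂ ∈ M → a ∈ traceIntros t₁ → a ∈ traceIntros t₂ →
      t₁ <+: t₂ ∨ t₂ <+: t₁) ∧
  (∀ a t, t ∈ M → (t.countP fun m => decide (a ∈ m.intros)) ≤ 1)

def MNames (M : Set Trace) : Set Nat := {a | ∃ t ∈ M, a ∈ traceIntros t}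

/-! ### Configurations -/

/-- The component `A`: a partial map from pairs (abstract name, index) to the
proponent knowledge available when the name was used. -/
abbrev AMap := Nat → Nat → Option (List Expr)

def AMap.empty : AMap := fun _ _ => none

def AMap.upd (A : AMap) (ns : List Nat) (j : Nat) (k : List Expr) : AMap :=
  fun a j' => if a ∈ ns ∧ j' = j then some k else A a j'

def AMap.names (A : AMap) : Set Nat := {a | ∃ j, (A a j).isSome}

/-- Configurations of the plain LTS: proponent `⟨A; M; K; t; e; V⟩` and
opponent `⟨A; M; K; t; V; u̅⟩`. -/
inductive Conf : Type
  | prop (A : AMap) (M : Set Trace) (K : List (Trace × ECtx)) (t : Trace)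
      (e : Expr) (V : List (List Expr))
  | opp (A : AMap) (M : Set Trace) (K : List (Trace × ECtx)) (t : Trace)
      (V : List (List Expr)) (u : List Expr)

def Conf.Mset : Conf → Set Trace
  | .prop _ M _ _ _ _ => M
  | .opp _ M _ _ _ _ => M

def Conf.Amap : Conf → AMap
  | .prop A _ _ _ _ _ => A
  | .opp A _ _ _ _ _ => A

def Conf.tr : Conf → Trace
  | .prop _ _ _ t _ _ => t
  | .opp _ _ _ t _ _ => t

/-- The abstract names of a configuration. -/
def Conf.names (C : Conf) : Set Nat :=
  AMap.names C.Amap ∪ MNames C.Mset ∪ {a | a ∈ traceIntros C.tr}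

def Conf.Initial : Conf → Prop := fun C => ∃ e, C = .prop AMap.empty ∅ [] [] e []

def Conf.Final : Conf → Prop := fun C => ∃ A M t V u, C = .opp A M [] t V u

/-- The initial configuration `C_e` of a closed expression. -/
def initConf (e : Expr) : Conf := .prop AMap.empty ∅ [] [] e []

/-! ### Transitions -/

inductive Lab : Type
  | tau
  | mv (η : Move)

inductive Step : Conf → Lab → Conf → Prop
  | propTau {A M K t e e' V} (h : Red e e') :
      Step (.prop A M K t e V) .tau (.prop A M K t e' V)
  | propRetBarb {A M t v V D vs} (hv : IsValue v) (hulp : ulp v = some (D, vs)) :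
      Step (.prop A M [] t v V) (.mv (.pret D)) (.opp A M [] [] [] vs)
  | propRet {A M K t v u V D vs} (hv : IsValue v) (hulp : ulp v = some (D, vs))
      (hK : K ≠ []) :
      Step (.prop A M K t v (u :: V)) .tau
        (.opp A (insert (t ++ [.pret D]) M) K (t ++ [.pret D]) V (u ++ vs))
  | propCall {A M K t E a j T1 T2 v V D vs u}
      (hv : IsValue v) (hulp : ulp v = some (D, vs))
      (hwf : ECtx.Wf E) (hT : E.holeTy = T2) (hA : A a j = some u) :
      Step (.prop A M K t (E.plug (.app (.aname a j (.arrow T1 T2)) v)) V) .tau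
        (.opp A (insert [Move.pcall a (.arrow T1 T2) D] M)
          ((t, E) :: K) [Move.pcall a (.arrow T1 T2) D] V (u ++ vs))
  | opRet {A M K t₀ E t V u w T' j}
      (hnext : nextMoves M t ⊆ {Move.oret w})
      (hty : AValTy w T') (hT : E.holeTy = T') (hnodup : w.names.Nodup)
      (hj : ∀ a ∈ w.names, A a j = none)
      (hleg : LegalM (insert (t ++ [Move.oret w]) M)) :
      Step (.opp A M ((t₀, E) :: K) t V u) .tau
        (.prop (A.upd w.names j u) (insert (t ++ [Move.oret w]) M) K t₀
          (E.plug (w.toExpr j)) V)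
  | opCallBarb {A M u i vi w T1 T2}
      (hi : u[i]? = some vi) (hty : TypedN [] vi (.arrow T1 T2))
      (hw : AValTy w T1) (hnodup : w.names.Nodup)
      (hfresh : ∀ a ∈ w.names, (∀ j, A a j = none) ∧ a ∉ MNames M) :
      Step (.opp A M [] [] [] u) (.mv (.ocall i w))
        (.prop (A.upd w.names 0 []) M [] [] (.app vi (w.toExpr 0)) [])
  | opCall {A M K t V u i vi w T1 T2 j}
      (hK : K ≠ [])
      (hnext : nextMoves M t ⊆ {Move.ocall i w})
      (hi : u[i]? = some vi) (hty : TypedN [] vi (.arrow T1 T2))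
      (hw : AValTy w T1) (hnodup : w.names.Nodup)
      (hj : ∀ a ∈ w.names, A a j = none)
      (hleg : LegalM (insert (t ++ [Move.ocall i w]) M)) :
      Step (.opp A M K t V u) .tau
        (.prop (A.upd w.names j u) (insert (t ++ [Move.ocall i w]) M) K
          (t ++ [Move.ocall i w]) (.app vi (w.toExpr j)) (u :: V))

/-- `C ⤇ C'`: reflexive-transitive closure of τ-transitions. -/
def Taus : Conf → Conf → Prop := Relation.ReflTransGen (fun C C' => Step C .tau C')

/-- `C ⤇^η C'`. -/
def WStep (C : Conf) (η : Move) (C' : Conf) : Prop :=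
  ∃ C₁ C₂, Taus C C₁ ∧ Step C₁ (.mv η) C₂ ∧ Taus C₂ C'

/-- `C ⤇^{η₁ η₂} C'`. -/
def WStep2 (C : Conf) (η₁ η₂ : Move) (C' : Conf) : Prop :=
  ∃ C₁, WStep C η₁ C₁ ∧ WStep C₁ η₂ C'

/-- `C ⤇^t C'` for a trace `t` of visible moves. -/
inductive WTrace : Conf → Trace → Conf → Prop
  | nil {C C'} (h : Taus C C') : WTrace C [] C'
  | cons {C C₁ C' η t} (h : WStep C η C₁) (ht : WTrace C₁ t C') : WTrace C (η :: t) C'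

/-- The semantics `⟦e⟧` of a closed expression. -/
def Sem (e : Expr) : Set (Trace × Set Trace) :=
  {p | ∃ A t' V v, WTrace (initConf e) p.1 (.opp A p.2 [] t' V v)}

/-! ### Weak (bi-)simulation -/

def IsWeakSim (R : Conf → Conf → Prop) : Prop :=
  ∀ C1 C2, R C1 C2 →
    (C1.Initial → ∀ D' C1', WStep C1 (.pret D') C1' →
        ∃ C2', WStep C2 (.pret D') C2' ∧ R C1' C2') ∧
    (C1.Final → ∀ i w D' C1', (∀ a ∈ AVal.names w, a ∉ C2.names) →
        WStep2 C1 (.ocall i w) (.pret D') C1' →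
        ∃ C2', WStep2 C2 (.ocall i w) (.pret D') C2' ∧ R C1' C2') ∧
    C2.Mset ⊆ C1.Mset

/-- Weak bisimilarity of configurations. -/
def Bisim (C1 C2 : Conf) : Prop :=
  ∃ R : Conf → Conf → Prop,
    IsWeakSim R ∧ IsWeakSim (fun a b => R b a) ∧ R C1 C2

/-- `e1 ≈ e2`: bisimilarity of closed expressions. -/
def ExprBisim (e1 e2 : Expr) : Prop := Bisim (initConf e1) (initConf e2)

/-! ## The game-LTS (Figure 3) -/

/-- Moves of the game-LTS: proponent calls `α̅(D)[β̅]`, proponent returns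
`ret(D)[β̅]`, opponent calls `β̅(D)[α̅]`, opponent returns `ret(D)[α̅]`.
Opponent names `α` and proponent names `β` are taken from two (disjoint)
copies of `ℕ`. -/
inductive GMove : Type
  | pcall (a : Nat) (D : VCtx) (bs : List Nat)
  | pret (D : VCtx) (bs : List Nat)
  | ocall (b : Nat) (D : VCtx) (as : List Nat)
  | oret (D : VCtx) (as : List Nat)

instance : Inhabited GMove := ⟨.pret (.const .unit) []⟩

abbrev GTrace := List GMove

def GMove.isP : GMove → Bool
  | .pcall .. => true
  | .pret .. => true
  | _ => false

def GMove.isO (m : GMove) : Bool := !m.isP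

def GMove.isCall : GMove → Bool
  | .pcall .. => true
  | .ocall .. => true
  | _ => false

/-- Names introduced by a move. -/
def GMove.intro : GMove → List Nat
  | .pcall _ _ bs => bs
  | .pret _ bs => bs
  | .ocall _ _ as => as
  | .oret _ as => as

def GMove.introO (m : GMove) : List Nat := if m.isP then [] else m.intro
def GMove.introP (m : GMove) : List Nat := if m.isP then m.intro else []

/-- Proponent names occurring in a move. -/
def GMove.pns : GMove → List Nat
  | .pcall _ _ bs => bs
  | .pret _ bs => bs
  | .ocall b _ _ => [b]
  | .oret _ _ => []

/-- Opponent names occurring in a move. -/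
def GMove.ons : GMove → List Nat
  | .pcall a _ _ => [a]
  | .pret _ _ => []
  | .ocall _ _ as => as
  | .oret _ as => as

def GTrace.pns (t : GTrace) : List Nat := flat (t.map GMove.pns)
def GTrace.ons (t : GTrace) : List Nat := flat (t.map GMove.ons)

/-! ### Complete traces, legal traces -/

mutual
/-- The grammar `CT_OP`. -/
inductive CTOP : GTrace → Prop
  | nil : CTOP []
  | cons {b D as t1 D' bs t2} (h1 : CTPO t1) (h2 : CTOP t2) :
      CTOP (.ocall b D as :: t1 ++ .pret D' bs :: t2)

/-- The grammar `CT_PO`. -/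
inductive CTPO : GTrace → Prop
  | nil : CTPO []
  | cons {a D bs t1 D' as t2} (h1 : CTOP t1) (h2 : CTPO t2) :
      CTPO (.pcall a D bs :: t1 ++ .oret D' as :: t2)
end

/-- Complete traces of shape `CT_P`. -/
def CTP (t : GTrace) : Prop := ∃ D bs t', t = .pret D bs :: t' ∧ CTOP t'

/-- Complete traces of shape `CT_O`. -/
def CTO (t : GTrace) : Prop := ∃ D as t', t = .oret D as :: t' ∧ CTPO t'

/-- Complete traces. -/
def CompleteCT (t : GTrace) : Prop := CTP t ∨ CTO t

/-- Traces: prefixes of complete traces. -/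
def IsGTrace (t : GTrace) : Prop := ∃ t', t <+: t' ∧ CompleteCT t'

/-- The name conditions for legality of traces. -/
def LegalConds (t : GTrace) : Prop :=
  ∀ t₁ m t₂, t = t₁ ++ m :: t₂ →
    m.intro.Nodup ∧
    match m with
    | .pcall a _ bs => (∀ b ∈ bs, b ∉ GTrace.pns t₁) ∧ ∃ m' ∈ t₁, a ∈ GMove.introO m'
    | .pret _ bs => ∀ b ∈ bs, b ∉ GTrace.pns t₁
    | .ocall b _ as => (∀ a ∈ as, a ∉ GTrace.ons t₁) ∧ ∃ m' ∈ t₁, b ∈ GMove.introP m'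
    | .oret _ as => ∀ a ∈ as, a ∉ GTrace.ons t₁

/-- Legal traces. -/
def GLegal (t : GTrace) : Prop := IsGTrace t ∧ LegalConds t

/-! ### Justifiers and views -/

/-- Index of the move of `t` introducing the opponent name `a`. -/
def introIdxO (t : GTrace) (a : Nat) : Option Nat :=
  (List.range t.length).find? fun j => decide (a ∈ GMove.introO t[j]!)

/-- Index of the move of `t` introducing the proponent name `b`. -/
def introIdxP (t : GTrace) (b : Nat) : Option Nat :=
  (List.range t.length).find? fun j => decide (b ∈ GMove.introP t[j]!)

/-- The stack of indices of currently open (unanswered) calls of `t`. -/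
def pendingAux : List GMove → Nat → List Nat → List Nat
  | [], _, st => st
  | m :: rest, k, st =>
      pendingAux rest (k + 1) (if m.isCall then k :: st else st.tail)

def pending (t : GTrace) : List Nat := pendingAux t 0 []

/-- The justifier of the move at index `k` of `t`: for calls, the move
introducing the called name; for returns, the open call being answered. -/
def justifier (t : GTrace) (k : Nat) : Option Nat :=
  match t[k]? with
  | some (.pcall a _ _) => introIdxO (t.take k) a
  | some (.ocall b _ _) => introIdxP (t.take k) b
  | some (.pret _ _) => (pending (t.take k)).head?
  | some (.oret _ _) => (pending (t.take k)).head?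
  | none => none

/-- The P-view `⌈t⌉`. -/
def pview (t : GTrace) : GTrace :=
  if h : t.length ≤ 1 then t
  else
    if (t[t.length - 1]!).isP then pview (t.take (t.length - 1)) ++ [t[t.length - 1]!]
    else
      match justifier t (t.length - 1) with
      | some j =>
          pview (t.take (min j (t.length - 1))) ++
            [t[min j (t.length - 1)]!, t[t.length - 1]!]
      | none => [t[t.length - 1]!]
termination_by t.length
decreasing_by all_goals (simp [List.length_take]; omega)

/-- The O-view `⌊t⌋`. -/
def oview (t : GTrace) : GTrace :=
  if h : t.length ≤ 1 then t
  else
    if (t[t.length - 1]!).isO then oview (t.take (t.length - 1)) ++ [t[t.length - 1]!]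
    else
      match justifier t (t.length - 1) with
      | some j =>
          oview (t.take (min j (t.length - 1))) ++
            [t[min j (t.length - 1)]!, t[t.length - 1]!]
      | none => [t[t.length - 1]!]
termination_by t.length
decreasing_by all_goals (simp [List.length_take]; omega)

/-! ### Name permutations -/

/-- Finite-support name permutations respecting O/P-ownership of names. -/
structure NPerm : Type where
  pO : Equiv.Perm ℕ
  pP : Equiv.Perm ℕ
  finO : Set.Finite {a | pO a ≠ a}
  finP : Set.Finite {b | pP b ≠ b}

def NPerm.actM (π : NPerm) : GMove → GMove
  | .pcall a D bs => .pcall (π.pO a) D (bs.map π.pP)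
  | .pret D bs => .pret D (bs.map π.pP)
  | .ocall b D as => .ocall (π.pP b) D (as.map π.pO)
  | .oret D as => .oret D (as.map π.pO)

def NPerm.actT (π : NPerm) (t : GTrace) : GTrace := t.map π.actM

/-- `t ∼ t'`: equality of traces up to name permutation. -/
def GEquiv (t t' : GTrace) : Prop := ∃ π : NPerm, t' = π.actT t

/-! ### Plays -/

/-- Visibility: the justifier of each move lies in the relevant view of the
preceding trace. -/
def Visibility (t : GTrace) : Prop :=
  ∀ k, k < t.length → ∀ j, justifier t k = some j →
    ((t[k]!).isP → t[j]! ∈ pview (t.take k)) ∧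
    ((t[k]!).isO → t[j]! ∈ oview (t.take k))

/-- Innocence: same-player moves following view-equivalent prefixes are
equivalent extensions. -/
def Innocence (t : GTrace) : Prop :=
  ∀ t₁ t₂ m₁ m₂, t₁ ++ [m₁] <+: t → t₂ ++ [m₂] <+: t →
    ((m₁.isP → m₂.isP → GEquiv (pview t₁) (pview t₂) →
        GEquiv (pview (t₁ ++ [m₁])) (pview (t₂ ++ [m₂]))) ∧
     (m₁.isO → m₂.isO → GEquiv (oview t₁) (oview t₂) →
        GEquiv (oview (t₁ ++ [m₁])) (oview (t₂ ++ [m₂]))))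

/-- Plays: legal traces satisfying visibility and innocence. -/
def Play (t : GTrace) : Prop := GLegal t ∧ Visibility t ∧ Innocence t

/-- `PVs(t)`: P-views of prefixes of `t`, up to permutation. -/
def PVs (t : GTrace) : Set GTrace :=
  {s | ∃ (t' : GTrace) (π : NPerm), t' <+: t ∧ s = π.actT (pview t')}

/-- `OVs(t)`: O-views of prefixes of `t`, up to permutation. -/
def OVs (t : GTrace) : Set GTrace :=
  {s | ∃ (t' : GTrace) (π : NPerm), t' <+: t ∧ s = π.actT (oview t')}

/-! ### Top-level moves and top-linearity -/

/-- The top-level moves (indices) of a P-starting play. -/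
inductive TopLevelIdx (t : GTrace) : Nat → Prop
  | init (h0 : 0 < t.length) (h : ∃ D bs, t[0]! = GMove.pret D bs) : TopLevelIdx t 0
  | ocall {k j : Nat} (hk : k < t.length) (h : ∃ b D as, t[k]! = GMove.ocall b D as)
      (hj : justifier t k = some j) (htl : TopLevelIdx t j) : TopLevelIdx t k
  | pret {k j : Nat} (hk : k < t.length) (h : ∃ D bs, t[k]! = GMove.pret D bs)
      (h0 : 0 < k) (hj : justifier t k = some j) (htl : TopLevelIdx t j) :
      TopLevelIdx t k

/-- Top-linearity: every top-level O-move is justified by the immediately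
preceding P-move. -/
def TopLinear (t : GTrace) : Prop :=
  ∀ k, k < t.length → TopLevelIdx t k → (∃ b D as, t[k]! = GMove.ocall b D as) →
    justifier t k = some (k - 1)

/-! ### Game configurations and transitions -/

/-- `A`: map from opponent names to the proponent names available at their
introduction. -/
abbrev OMap := Nat → Option (List Nat)

def OMap.empty : OMap := fun _ => none

def OMap.upd (A : OMap) (ns : List Nat) (k : List Nat) : OMap :=
  fun a => if a ∈ ns then some k else A a

/-- `κ`: concretion map from proponent names to values decorated with the
opponent names available to them. -/
abbrev PMap := Nat → Option (Expr × List Nat)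

def PMap.empty : PMap := fun _ => none

def PMap.upd (κ : PMap) (bs : List Nat) (vs : List Expr) (as : List Nat) : PMap :=
  fun b =>
    match (bs.zip vs).lookup b with
    | some v => some (v, as)
    | none => κ b

/-- Game configurations: proponent `⟨A; κ; K; t; e; V⟩[α̅]` and opponent
`⟨A; κ; K; t; V; β̅⟩`. -/
inductive GConf : Type
  | prop (A : OMap) (κ : PMap) (K : List (ECtx × List Nat)) (t : GTrace)
      (e : Expr) (V : List (List Nat)) (as : List Nat)
  | opp (A : OMap) (κ : PMap) (K : List (ECtx × List Nat)) (t : GTrace)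
      (V : List (List Nat)) (bs : List Nat)

def GConf.Amap : GConf → OMap
  | .prop A _ _ _ _ _ _ => A
  | .opp A _ _ _ _ _ => A

def GConf.kmap : GConf → PMap
  | .prop _ κ _ _ _ _ _ => κ
  | .opp _ κ _ _ _ _ => κ

def GConf.exprOf : GConf → Option Expr
  | .prop _ _ _ _ e _ _ => some e
  | .opp _ _ _ _ _ _ => none

/-- `(D, α̅) ∈ ulpatt(T)`: `D` is a function-free value context whose holes,
filled in order with the distinct names `α̅` at the holes' (function) types,
yield a value of type `T`. -/
def VCtx.holeTys : VCtx → List Ty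
  | .const _ => []
  | .hole _ T => [T]
  | .tuple Ds => flat (Ds.attach.map fun x => x.1.holeTys)
termination_by D => sizeOf D
decreasing_by all_goals (simp_wf <;> first
  | omega
  | (have := List.sizeOf_lt_of_mem x.2; omega))

inductive VCtxTy : VCtx → Ty → Prop
  | const (c : Const) : VCtxTy (.const c) c.ty
  | hole (i : Nat) {T1 T2 : Ty} : VCtxTy (.hole i (.arrow T1 T2)) (.arrow T1 T2)
  | tuple {Ds : List VCtx} {Ts : List Ty} (hlen : Ds.length = Ts.length)
      (h : ∀ (i : Nat) (D : VCtx) (T : Ty), Ds[i]? = some D → Ts[i]? = some T →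
        VCtxTy D T) : VCtxTy (.tuple Ds) (.prod Ts)

def UlpT (T : Ty) (D : VCtx) (ns : List Nat) : Prop :=
  VCtxTy D T ∧ ns.length = D.holeTys.length ∧ ns.Nodup

mutual
/-- Fill the holes of `D`, in order, with the names `ns` (at index `j`);
returns the expression together with the unused names. -/
def VCtx.fillAux (j : Nat) : VCtx → List Nat → Expr × List Nat
  | .const c, ns => (.const c, ns)
  | .hole _ T, [] => (.const .unit, [])
  | .hole _ T, n :: ns => (.aname n j T, ns)
  | .tuple Ds, ns =>
      match fillList j Ds ns with
      | (es, ns') => (.tuple es, ns')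

def fillList (j : Nat) : List VCtx → List Nat → List Expr × List Nat
  | [], ns => ([], ns)
  | D :: Ds, ns =>
      match VCtx.fillAux j D ns with
      | (e, ns') =>
          match fillList j Ds ns' with
          | (es, ns'') => (e :: es, ns'')
end

/-- `D[α̅]` as an expression (with name index `j`, by default `0`). -/
def VCtx.fill (D : VCtx) (ns : List Nat) (j : Nat := 0) : Expr :=
  (VCtx.fillAux j D ns).1

/-- The function `next_O(t)` imposing innocence on opponent moves. -/
def GNextO (t : GTrace) : Set GMove :=
  {m | ∃ (π : NPerm) (t' : GTrace) (o : GMove), t' ++ [o] <+: t ∧ o.isO = true ∧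
    oview t = NPerm.actT π (oview t') ∧ m = π.actM o ∧ Play (t ++ [m])}

/-- `next_O(t) ⊆⋆ [m]`. -/
def NextOStar (t : GTrace) (m : GMove) : Prop := m ∈ GNextO t ∨ GNextO t = ∅

inductive GLab : Type
  | tau
  | mv (m : GMove)

inductive GStep : GConf → GLab → GConf → Prop
  | propTau {A κ K t e e' V as} (h : Red e e') :
      GStep (.prop A κ K t e V as) .tau (.prop A κ K t e' V as)
  | propRet {A κ K t v V as bs' D vs bs}
      (hv : IsValue v) (hulp : ulp v = some (D, vs))
      (hlen : bs.length = vs.length) (hnodup : bs.Nodup)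
      (hfresh : ∀ b ∈ bs, κ b = none) :
      GStep (.prop A κ K t v (bs' :: V) as) (.mv (.pret D bs))
        (.opp A (κ.upd bs vs as) K (t ++ [GMove.pret D bs]) V (bs' ++ bs))
  | propApp {A κ K t E a T1 T2 v V as bs' D vs bs}
      (hv : IsValue v) (hulp : ulp v = some (D, vs))
      (hwf : ECtx.Wf E) (hT : E.holeTy = T2)
      (hA : A a = some bs')
      (hlen : bs.length = vs.length) (hnodup : bs.Nodup)
      (hfresh : ∀ b ∈ bs, κ b = none) :
      GStep (.prop A κ K t (E.plug (.app (.aname a 0 (.arrow T1 T2)) v)) V as)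
        (.mv (.pcall a D bs))
        (.opp A (κ.upd bs vs as) ((E, as) :: K) (t ++ [GMove.pcall a D bs]) V
          (bs' ++ bs))
  | opRet {A κ K E as' t V bs T' D as₂}
      (hnext : NextOStar t (.oret D as₂))
      (hU : UlpT T' D as₂) (hT : E.holeTy = T')
      (hfresh : ∀ a ∈ as₂, A a = none) :
      GStep (.opp A κ ((E, as') :: K) t V bs) (.mv (.oret D as₂))
        (.prop (A.upd as₂ bs) κ K (t ++ [GMove.oret D as₂])
          (E.plug (D.fill as₂)) V (as' ++ as₂))
  | opApp {A κ K t V bs b v as' T1 T2 D as₂}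
      (hnext : NextOStar t (.ocall b D as₂))
      (hmem : b ∈ bs) (hκ : κ b = some (v, as'))
      (hty : TypedN [] v (.arrow T1 T2))
      (hU : UlpT T1 D as₂)
      (hfresh : ∀ a ∈ as₂, A a = none) :
      GStep (.opp A κ K t V bs) (.mv (.ocall b D as₂))
        (.prop (A.upd as₂ bs) κ K (t ++ [GMove.ocall b D as₂])
          (.app v (D.fill as₂)) (bs :: V) (as' ++ as₂))

/-- The P-initial configuration `C_e`. -/
def GInitP (e : Expr) : GConf := .prop OMap.empty PMap.empty [] [] e [[]] []

/-- The O-initial configuration `C_E`. -/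
def GInitO (E : ECtx) : GConf := .opp OMap.empty PMap.empty [(E, [])] [] [] []

def GConf.IsInitial (C : GConf) : Prop := (∃ e, C = GInitP e) ∨ ∃ E, C = GInitO E

def GConf.PFinal (C : GConf) : Prop :=
  ∃ A κ t as, C = .prop A κ [] t (.const .unit) [] as

def GConf.OFinal (C : GConf) : Prop := ∃ A κ t bs, C = .opp A κ [] t [] bs

/-- `C ↠^t C'`: multi-step transition whose move labels concatenate to `t`. -/
inductive GMulti : GConf → GTrace → GConf → Prop
  | refl {C} : GMulti C [] C
  | tau {C C₁ t C'} (h : GStep C .tau C₁) (ht : GMulti C₁ t C') : GMulti C t C'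
  | mv {C C₁ m t C'} (h : GStep C (.mv m) C₁) (ht : GMulti C₁ t C') :
      GMulti C (m :: t) C'

/-- The traces produced by the game-LTS from `C`. -/
def GTr (C : GConf) : Set GTrace := {t | ∃ C', GMulti C t C'}

/-- `CP(C)`: the complete plays produced by the game-LTS from `C`. -/
def CP (C : GConf) : Set GTrace := {t | t ∈ GTr C ∧ CompleteCT t}

/-- `CP⁺(C)` for O-initial `C`. -/
def CPplus (C : GConf) : Set GTrace :=
  {s | ∃ t C', GMulti C t C' ∧ C'.PFinal ∧ s = t ++ [GMove.pret (.const .unit) []]}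

/-- `OVs(C)`. -/
def OVsC (C : GConf) : Set (Set GTrace) := {S | ∃ t ∈ CP C, S = OVs t}

/-- `OVTL(C)`. -/
def OVTL (C : GConf) : Set (Set GTrace) :=
  {S | ∃ t ∈ CP C, TopLinear t ∧ S = OVs t}

/-! ### Name permutation action on configurations -/

def NPerm.actE (π : NPerm) : Expr → Expr
  | .var n => .var n
  | .aname a j T => .aname (π.pO a) j T
  | .const c => .const c
  | .fixfun T1 T2 b => .fixfun T1 T2 (π.actE b)
  | .tuple es => .tuple (es.attach.map fun x => π.actE x.1)
  | .prim op es => .prim op (es.attach.map fun x => π.actE x.1)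
  | .app e1 e2 => .app (π.actE e1) (π.actE e2)
  | .ite b e1 e2 => .ite (π.actE b) (π.actE e1) (π.actE e2)
  | .letTup n e b => .letTup n (π.actE e) (π.actE b)
termination_by e => sizeOf e
decreasing_by all_goals (simp_wf <;> first
  | omega
  | (have := List.sizeOf_lt_of_mem x.2; omega))

def NPerm.actEC (π : NPerm) : ECtx → ECtx
  | .hole T => .hole T
  | .tupleC vs E es => .tupleC (vs.map π.actE) (π.actEC E) (es.map π.actE)
  | .primC op vs E es => .primC op (vs.map π.actE) (π.actEC E) (es.map π.actE)
  | .appL E e => .appL (π.actEC E) (π.actE e)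
  | .appR v E => .appR (π.actE v) (π.actEC E)
  | .iteC E e1 e2 => .iteC (π.actEC E) (π.actE e1) (π.actE e2)
  | .letC n E b => .letC n (π.actEC E) (π.actE b)

def NPerm.actOMap (π : NPerm) (A : OMap) : OMap :=
  fun a => (A (π.pO.symm a)).map fun bs => bs.map π.pP

def NPerm.actPMap (π : NPerm) (κ : PMap) : PMap :=
  fun b => (κ (π.pP.symm b)).map fun p => (π.actE p.1, p.2.map π.pO)

def NPerm.actK (π : NPerm) (K : List (ECtx × List Nat)) : List (ECtx × List Nat) :=
  K.map fun p => (π.actEC p.1, p.2.map π.pO)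

def NPerm.actConf (π : NPerm) : GConf → GConf
  | .prop A κ K t e V as =>
      .prop (π.actOMap A) (π.actPMap κ) (π.actK K) (π.actT t) (π.actE e)
        (V.map fun u => u.map π.pP) (as.map π.pO)
  | .opp A κ K t V bs =>
      .opp (π.actOMap A) (π.actPMap κ) (π.actK K) (π.actT t)
        (V.map fun u => u.map π.pP) (bs.map π.pP)

/-! ### Duality and composition -/

/-- Partial bijections between opponent and proponent names. -/
structure PBij : Type where
  f : Nat → Option Nat
  g : Nat → Option Nat
  fg : ∀ a b, f a = some b ↔ g b = some a

def PBij.apF (φ : PBij) (a : Nat) : Nat := (φ.f a).getD 0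
def PBij.apG (φ : PBij) (b : Nat) : Nat := (φ.g b).getD 0

/-- The dual of a move with respect to `φ`. -/
def PBij.dualM (φ : PBij) : GMove → GMove
  | .pcall a D bs => .ocall (φ.apF a) D (bs.map φ.apG)
  | .pret D bs => .oret D (bs.map φ.apG)
  | .ocall b D as => .pcall (φ.apG b) D (as.map φ.apF)
  | .oret D as => .pret D (as.map φ.apF)

/-- The dual trace `t̄^φ`. -/
def PBij.dualT (φ : PBij) (t : GTrace) : GTrace := t.map φ.dualM

/-- All names of `t` lie in `dom(φ) ∪ rng(φ)`. -/
def PBij.DefinedOn (φ : PBij) (t : GTrace) : Prop :=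
  (∀ a ∈ GTrace.ons t, (φ.f a).isSome) ∧ ∀ b ∈ GTrace.pns t, (φ.g b).isSome

/-! ## The extended game-LTS (initialisation moves) -/

/-- Extended moves: initialisation moves `?(D)[α̅]` together with game moves. -/
inductive EMove : Type
  | init (D : VCtx) (as : List Nat)
  | g (m : GMove)

instance : Inhabited EMove := ⟨.g default⟩

abbrev ETrace := List EMove

/-- Translation of extended moves to game moves (used to transport the
justification structure: the initialisation move introduces `α̅`). -/
def EMove.toG : EMove → GMove
  | .init D as => .oret D as
  | .g m => m

def ETrace.toG (t : ETrace) : GTrace := t.map EMove.toG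

def EMove.isP (m : EMove) : Bool := m.toG.isP
def EMove.isO (m : EMove) : Bool := !m.isP

/-- Extended complete traces `?(D)[α̅]·CT_P`. -/
def ECompleteT (t : ETrace) : Prop :=
  ∃ D as rest, t = EMove.init D as :: rest.map EMove.g ∧ CTP rest

/-- Justifiers in extended traces: the second move is justified by the
initialisation move. -/
def ejustifier (t : ETrace) (k : Nat) : Option Nat :=
  match k, t[1]? with
  | 1, some (EMove.g (GMove.pret _ _)) => some 0
  | k, _ => justifier (ETrace.toG t) k

/-- The P-view of an extended trace. -/
def epview (t : ETrace) : ETrace :=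
  if h : t.length ≤ 1 then t
  else
    if (t[t.length - 1]!).isP then epview (t.take (t.length - 1)) ++ [t[t.length - 1]!]
    else
      match ejustifier t (t.length - 1) with
      | some j =>
          epview (t.take (min j (t.length - 1))) ++
            [t[min j (t.length - 1)]!, t[t.length - 1]!]
      | none => [t[t.length - 1]!]
termination_by t.length
decreasing_by all_goals (simp [List.length_take]; omega)

/-- The O-view of an extended trace. -/
def eoview (t : ETrace) : ETrace :=
  if h : t.length ≤ 1 then t
  else
    if (t[t.length - 1]!).isO then eoview (t.take (t.length - 1)) ++ [t[t.length - 1]!]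
    else
      match ejustifier t (t.length - 1) with
      | some j =>
          eoview (t.take (min j (t.length - 1))) ++
            [t[min j (t.length - 1)]!, t[t.length - 1]!]
      | none => [t[t.length - 1]!]
termination_by t.length
decreasing_by all_goals (simp [List.length_take]; omega)

/-- Legality of extended traces. -/
def ELegal (t : ETrace) : Prop :=
  (∃ t', t <+: t' ∧ ECompleteT t') ∧ LegalConds (ETrace.toG t)

def EVisibility (t : ETrace) : Prop :=
  ∀ k, k < t.length → ∀ j, ejustifier t k = some j →
    ((t[k]!).isP → t[j]! ∈ epview (t.take k)) ∧
    ((t[k]!).isO → t[j]! ∈ eoview (t.take k))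

def NPerm.actEM (π : NPerm) : EMove → EMove
  | .init D as => .init D (as.map π.pO)
  | .g m => .g (π.actM m)

def NPerm.actET (π : NPerm) (t : ETrace) : ETrace := t.map π.actEM

/-- Equality of extended traces up to name permutation. -/
def EEquiv (t t' : ETrace) : Prop := ∃ π : NPerm, t' = π.actET t

def EInnocence (t : ETrace) : Prop :=
  ∀ t₁ t₂ m₁ m₂, t₁ ++ [m₁] <+: t → t₂ ++ [m₂] <+: t →
    ((m₁.isP → m₂.isP → EEquiv (epview t₁) (epview t₂) →
        EEquiv (epview (t₁ ++ [m₁])) (epview (t₂ ++ [m₂]))) ∧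
     (m₁.isO → m₂.isO → EEquiv (eoview t₁) (eoview t₂) →
        EEquiv (eoview (t₁ ++ [m₁])) (eoview (t₂ ++ [m₂]))))

/-- Extended plays. -/
def EPlay (t : ETrace) : Prop := ELegal t ∧ EVisibility t ∧ EInnocence t

/-- Extended configurations: `⟨Δ ⊢ e : T⟩` or a game configuration. -/
inductive EConf : Type
  | start (Γ : List Ty) (e : Expr) (T : Ty)
  | run (C : GConf)

/-- The extended transition relation (rule Init plus the game-LTS moves). -/
inductive EStep : EConf → EMove → EConf → Prop
  | init {Γ e T Ds as} (hU : UlpT (.prod Γ) (.tuple Ds) as) :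
      EStep (.start Γ e T) (.init (.tuple Ds) as)
        (.run (.prop (OMap.upd OMap.empty as []) PMap.empty [] []
          (Expr.inst (fillList 0 Ds as).1 0 e) [[]] as))
  | step {C m C'} (h : GStep C (.mv m) C') : EStep (.run C) (.g m) (.run C')

inductive EMulti : EConf → ETrace → EConf → Prop
  | refl {C} : EMulti C [] C
  | tau {C C₁ t C'} (h : GStep C .tau C₁) (ht : EMulti (.run C₁) t C') :
      EMulti (.run C) t C'
  | mv {C C₁ m t C'} (h : EStep C m C₁) (ht : EMulti C₁ t C') : EMulti C (m :: t) C'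

/-- `CEP(Δ ⊢ e : T)`: complete extended plays produced from `⟨Δ ⊢ e : T⟩`. -/
def CEP (Γ : List Ty) (e : Expr) (T : Ty) : Set ETrace :=
  {t | ECompleteT t ∧ ∃ C', EMulti (.start Γ e T) t C'}

/-- `EPVs(Δ ⊢ e : T)`: even-length P-views of prefixes of complete extended
plays of `e`. -/
def EPVs (Γ : List Ty) (e : Expr) (T : Ty) : Set ETrace :=
  {s | ∃ t ∈ CEP Γ e T, ∃ t', t' <+: t ∧ t'.length % 2 = 0 ∧ s = epview t'}

/-! ### Viewfunctions -/

/-- Viewfunctions: sets of extended plays that are P-views, even-prefix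
closed, closed under name permutations, and deterministic. -/
structure IsViewFn (F : Set ETrace) : Prop where
  plays : ∀ t ∈ F, EPlay t
  views : ∀ t ∈ F, epview t = t
  prefixClosed : ∀ t ∈ F, ∀ t', t' <+: t → t'.length % 2 = 0 → t' ∈ F
  permClosed : ∀ t ∈ F, ∀ π : NPerm, π.actET t ∈ F
  det : ∀ t m₁ m₂, t ++ [m₁] ∈ F → t ++ [m₂] ∈ F → EEquiv (t ++ [m₁]) (t ++ [m₂])
  initDet : ∀ m₁ t₁ m₂ t₂, (m₁ :: t₁) ∈ F → (m₂ :: t₂) ∈ F →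
    ∃ π : NPerm, m₂ = π.actEM m₁

/-- The typing `T̄ ⊢ F : T` of a viewfunction. -/
def VFTy (Ts : List Ty) (F : Set ETrace) (T : Ty) : Prop :=
  F = ∅ ∨ ∃ D0 as0 D1 bs1, [EMove.init D0 as0, EMove.g (.pret D1 bs1)] ∈ F ∧
    UlpT (.prod Ts) D0 as0 ∧ UlpT T D1 bs1

/-- The orbit `[t]` of an extended trace under name permutations. -/
def EOrbit (t : ETrace) : Set ETrace := {s | ∃ π : NPerm, s = π.actET t}

/-- Finite-orbit viewfunctions. -/
def FiniteOrbit (F : Set ETrace) : Prop :=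
  Set.Finite {S : Set ETrace | ∃ t ∈ F, S = EOrbit t}

/-- The order `Σ ≤ Σ'` on sets of sets of O-views. -/
def OVleq (S1 S2 : Set (Set GTrace)) : Prop := ∀ F ∈ S1, ∃ F' ∈ S2, F' ⊆ F

/-- `C` reaches `C'` with labels `t`, where `C'` is not immediately preceded
by a proponent configuration (the last step is an opponent move), or `C' = C`
with `t` empty. -/
def ReachOP (C : GConf) (t : GTrace) (C' : GConf) : Prop :=
  (t = [] ∧ C' = C) ∨
    ∃ C₁ t₀ m, GMulti C t₀ C₁ ∧ GStep C₁ (.mv m) C' ∧ m.isP = false ∧ t = t₀ ++ [m]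


/-! ### Auxiliary machinery for the proof of STATEMENT 2 -/

theorem measure_ind {α : Sort _} (f : α → Nat) {P : α → Prop}
    (h : ∀ x, (∀ y, f y < f x → P y) → P x) : ∀ x, P x := by
  intro x
  have key : ∀ n, ∀ x, f x < n → P x := by
    intro n
    induction n with
    | zero => intro x hx; omega
    | succ n ih => intro x _; exact h x (fun y hy => ih y (by omega))
  exact h x (fun y hy => key (f x) y hy)

theorem mem_flat {β : Type _} {x : β} : ∀ {ls : List (List β)}, x ∈ flat ls ↔ ∃ l ∈ ls, x ∈ l := by
  intro ls
  induction ls with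
  | nil => simp [flat]
  | cons l ls ih => simp [flat, List.mem_append, ih]

theorem attach_map' {α β : Type _} (l : List α) (f : α → β) :
    (l.attach.map fun x => f x.1) = l.map f := by
  conv_rhs => rw [← List.attach_map_subtype_val l]
  rw [List.map_map]; rfl


/-- Renaming of the indices of abstract names. -/
def eren (σ : Nat → Nat → Nat) : Expr → Expr
  | .var n => .var n
  | .aname a j T => .aname a (σ a j) T
  | .const c => .const c
  | .fixfun T1 T2 b => .fixfun T1 T2 (eren σ b)
  | .tuple es => .tuple (es.attach.map fun x => eren σ x.1)
  | .prim op es => .prim op (es.attach.map fun x => eren σ x.1)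
  | .app e1 e2 => .app (eren σ e1) (eren σ e2)
  | .ite b e1 e2 => .ite (eren σ b) (eren σ e1) (eren σ e2)
  | .letTup n e b => .letTup n (eren σ e) (eren σ b)
termination_by e => sizeOf e
decreasing_by all_goals (simp_wf <;> first
  | omega
  | (have := List.sizeOf_lt_of_mem x.2; omega))

@[simp] theorem eren_var (σ) (n) : eren σ (.var n) = .var n := by simp [eren]
@[simp] theorem eren_aname (σ) (a j T) : eren σ (.aname a j T) = .aname a (σ a j) T := by
  simp [eren]
@[simp] theorem eren_const (σ) (c) : eren σ (.const c) = .const c := by simp [eren]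
@[simp] theorem eren_fixfun (σ) (T1 T2 b) :
    eren σ (.fixfun T1 T2 b) = .fixfun T1 T2 (eren σ b) := by simp [eren]
@[simp] theorem eren_tuple (σ) (es : List Expr) :
    eren σ (.tuple es) = .tuple (es.map (eren σ)) := by
  rw [eren, attach_map']
@[simp] theorem eren_prim (σ) (op) (es : List Expr) :
    eren σ (.prim op es) = .prim op (es.map (eren σ)) := by
  rw [eren, attach_map']
@[simp] theorem eren_app (σ) (e1 e2) : eren σ (.app e1 e2) = .app (eren σ e1) (eren σ e2) := by
  simp [eren]
@[simp] theorem eren_ite (σ) (b e1 e2) :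
    eren σ (.ite b e1 e2) = .ite (eren σ b) (eren σ e1) (eren σ e2) := by simp [eren]
@[simp] theorem eren_letTup (σ) (n e b) :
    eren σ (.letTup n e b) = .letTup n (eren σ e) (eren σ b) := by simp [eren]

/-- The (name, index)-pairs of the abstract names occurring in an expression. -/
def ajs : Expr → List (Nat × Nat)
  | .var _ => []
  | .aname a j _ => [(a, j)]
  | .const _ => []
  | .fixfun _ _ b => ajs b
  | .tuple es => flat (es.attach.map fun x => ajs x.1)
  | .prim _ es => flat (es.attach.map fun x => ajs x.1)
  | .app e1 e2 => ajs e1 ++ ajs e2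
  | .ite b e1 e2 => ajs b ++ ajs e1 ++ ajs e2
  | .letTup _ e b => ajs e ++ ajs b
termination_by e => sizeOf e
decreasing_by all_goals (simp_wf <;> first
  | omega
  | (have := List.sizeOf_lt_of_mem x.2; omega))

@[simp] theorem ajs_var (n) : ajs (.var n) = [] := by simp [ajs]
@[simp] theorem ajs_aname (a j T) : ajs (.aname a j T) = [(a, j)] := by simp [ajs]
@[simp] theorem ajs_const (c) : ajs (.const c) = [] := by simp [ajs]
@[simp] theorem ajs_fixfun (T1 T2 b) : ajs (.fixfun T1 T2 b) = ajs b := by simp [ajs]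
@[simp] theorem ajs_tuple (es : List Expr) : ajs (.tuple es) = flat (es.map ajs) := by
  rw [ajs, attach_map']
@[simp] theorem ajs_prim (op) (es : List Expr) : ajs (.prim op es) = flat (es.map ajs) := by
  rw [ajs, attach_map']
@[simp] theorem ajs_app (e1 e2) : ajs (.app e1 e2) = ajs e1 ++ ajs e2 := by simp [ajs]
@[simp] theorem ajs_ite (b e1 e2) : ajs (.ite b e1 e2) = ajs b ++ ajs e1 ++ ajs e2 := by
  simp [ajs]
@[simp] theorem ajs_letTup (n e b) : ajs (.letTup n e b) = ajs e ++ ajs b := by simp [ajs]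


theorem mem_of_getElem? {α : Type _} {l : List α} {i : Nat} {a : α} (h : l[i]? = some a) :
    a ∈ l := by
  rcases List.getElem?_eq_some_iff.mp h with ⟨hlt, rfl⟩
  exact List.getElem_mem _

theorem eren_congr {σ σ' : Nat → Nat → Nat} :
    ∀ e : Expr, (∀ p ∈ ajs e, σ p.1 p.2 = σ' p.1 p.2) → eren σ e = eren σ' e := by
  refine measure_ind sizeOf fun e ih => ?_
  cases e with
  | var n => intro _; simp
  | aname a j T => intro h; simpa using h (a, j) (by simp)
  | const c => intro _; simp
  | fixfun T1 T2 b =>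
      intro h
      simp only [eren_fixfun]
      rw [ih b (by simp; try omega) (by simpa using h)]
  | tuple es =>
      intro h
      simp only [eren_tuple]
      congr 1
      refine List.map_congr_left fun e' he' => ?_
      refine ih e' (by have := List.sizeOf_lt_of_mem he'; simp; try omega) fun p hp => ?_
      exact h p (by simp only [ajs_tuple]; exact mem_flat.mpr ⟨ajs e', List.mem_map_of_mem he', hp⟩)
  | prim op es =>
      intro h
      simp only [eren_prim]
      congr 1
      refine List.map_congr_left fun e' he' => ?_
      refine ih e' (by have := List.sizeOf_lt_of_mem he'; simp; try omega) fun p hp => ?_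
      exact h p (by simp only [ajs_prim]; exact mem_flat.mpr ⟨ajs e', List.mem_map_of_mem he', hp⟩)
  | app e1 e2 =>
      intro h
      simp only [eren_app]
      rw [ih e1 (by simp; try omega) (fun p hp => h p (by simp [hp])),
        ih e2 (by simp; try omega) (fun p hp => h p (by simp [hp]))]
  | ite b e1 e2 =>
      intro h
      simp only [eren_ite]
      rw [ih b (by simp; try omega) (fun p hp => h p (by simp [hp])),
        ih e1 (by simp; try omega) (fun p hp => h p (by simp [hp])),
        ih e2 (by simp; try omega) (fun p hp => h p (by simp [hp]))]
  | letTup n e b =>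
      intro h
      simp only [eren_letTup]
      rw [ih e (by simp; try omega) (fun p hp => h p (by simp [hp])),
        ih b (by simp; try omega) (fun p hp => h p (by simp [hp]))]

theorem eren_id : ∀ e : Expr, eren (fun _ j => j) e = e := by
  refine measure_ind sizeOf fun e ih => ?_
  cases e with
  | var n => simp
  | aname a j T => simp
  | const c => simp
  | fixfun T1 T2 b => simp only [eren_fixfun]; rw [ih b (by simp; try omega)]
  | tuple es =>
      simp only [eren_tuple]
      congr 1
      have : es.map (eren fun _ j => j) = es.map id :=
        List.map_congr_left fun e' he' =>
          ih e' (by have := List.sizeOf_lt_of_mem he'; simp; try omega)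
      simpa using this
  | prim op es =>
      simp only [eren_prim]
      congr 1
      have : es.map (eren fun _ j => j) = es.map id :=
        List.map_congr_left fun e' he' =>
          ih e' (by have := List.sizeOf_lt_of_mem he'; simp; try omega)
      simpa using this
  | app e1 e2 => simp only [eren_app]; rw [ih e1 (by simp; try omega), ih e2 (by simp; try omega)]
  | ite b e1 e2 =>
      simp only [eren_ite]
      rw [ih b (by simp; try omega), ih e1 (by simp; try omega), ih e2 (by simp; try omega)]
  | letTup n e b => simp only [eren_letTup]; rw [ih e (by simp; try omega), ih b (by simp; try omega)]

theorem isValue_eren {σ : Nat → Nat → Nat} : ∀ e : Expr, IsValue (eren σ e) ↔ IsValue e := by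
  refine measure_ind sizeOf fun e ih => ?_
  cases e with
  | var n => simp only [eren_var]
  | aname a j T =>
      simp only [eren_aname]
      exact iff_of_true (.aname _ _ _) (.aname _ _ _)
  | const c => simp only [eren_const]
  | fixfun T1 T2 b =>
      simp only [eren_fixfun]
      exact iff_of_true (.fixfun _ _ _) (.fixfun _ _ _)
  | tuple es =>
      simp only [eren_tuple]
      constructor
      · intro h
        cases h with
        | tuple hv =>
          refine .tuple fun e' he' => ?_
          have hlt : sizeOf e' < sizeOf (Expr.tuple es) := by
            have := List.sizeOf_lt_of_mem he'; simp; omega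
          exact (ih e' hlt).mp (hv _ (List.mem_map_of_mem he'))
      · intro h
        cases h with
        | tuple hv =>
          refine .tuple fun e' he' => ?_
          rcases List.mem_map.mp he' with ⟨e0, he0, rfl⟩
          have hlt : sizeOf e0 < sizeOf (Expr.tuple es) := by
            have := List.sizeOf_lt_of_mem he0; simp; omega
          exact (ih e0 hlt).mpr (hv _ he0)
  | prim op es =>
      simp only [eren_prim]
      exact iff_of_false (fun h => nomatch h) (fun h => nomatch h)
  | app e1 e2 =>
      simp only [eren_app]
      exact iff_of_false (fun h => nomatch h) (fun h => nomatch h)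
  | ite b e1 e2 =>
      simp only [eren_ite]
      exact iff_of_false (fun h => nomatch h) (fun h => nomatch h)
  | letTup n e b =>
      simp only [eren_letTup]
      exact iff_of_false (fun h => nomatch h) (fun h => nomatch h)

theorem inst_var (vs : List Expr) (d n : Nat) :
    Expr.inst vs d (.var n) =
      if n < d then .var n else (vs[n - d]?).getD (.var (n - vs.length)) := by
  rw [Expr.inst]
  by_cases h : n < d
  · simp [h]
  · simp only [h, if_false]
    cases hv : vs[n - d]? <;> simp [hv]

@[simp] theorem inst_aname (vs d a j T) :
    Expr.inst vs d (.aname a j T) = .aname a j T := by rw [Expr.inst]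
@[simp] theorem inst_const (vs d c) : Expr.inst vs d (.const c) = .const c := by rw [Expr.inst]
@[simp] theorem inst_fixfun (vs d T1 T2 b) :
    Expr.inst vs d (.fixfun T1 T2 b) = .fixfun T1 T2 (Expr.inst vs (d + 2) b) := by
  rw [Expr.inst]
@[simp] theorem inst_tuple (vs d) (es : List Expr) :
    Expr.inst vs d (.tuple es) = .tuple (es.map (Expr.inst vs d)) := by
  rw [Expr.inst, attach_map']
@[simp] theorem inst_prim (vs d op) (es : List Expr) :
    Expr.inst vs d (.prim op es) = .prim op (es.map (Expr.inst vs d)) := by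
  rw [Expr.inst, attach_map']
@[simp] theorem inst_app (vs d e1 e2) :
    Expr.inst vs d (.app e1 e2) = .app (Expr.inst vs d e1) (Expr.inst vs d e2) := by
  rw [Expr.inst]
@[simp] theorem inst_ite (vs d b e1 e2) :
    Expr.inst vs d (.ite b e1 e2) =
      .ite (Expr.inst vs d b) (Expr.inst vs d e1) (Expr.inst vs d e2) := by rw [Expr.inst]
@[simp] theorem inst_letTup (vs d n e b) :
    Expr.inst vs d (.letTup n e b) = .letTup n (Expr.inst vs d e) (Expr.inst vs (d + n) b) := by
  rw [Expr.inst]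

theorem eren_inst (σ : Nat → Nat → Nat) (vs : List Expr) :
    ∀ e : Expr, ∀ d, eren σ (Expr.inst vs d e) = Expr.inst (vs.map (eren σ)) d (eren σ e) := by
  refine measure_ind sizeOf fun e ih => ?_
  cases e with
  | var n =>
      intro d
      simp only [inst_var, eren_var]
      by_cases h : n < d
      · simp [h]
      · simp only [h, if_false, List.getElem?_map]
        cases hv : vs[n - d]? <;> simp [hv]
  | aname a j T => intro d; simp
  | const c => intro d; simp
  | fixfun T1 T2 b => intro d; simp only [inst_fixfun, eren_fixfun]; rw [ih b (by simp; try omega)]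
  | tuple es =>
      intro d
      simp only [inst_tuple, eren_tuple, List.map_map]
      congr 1
      refine List.map_congr_left fun e' he' => ?_
      exact ih e' (by have := List.sizeOf_lt_of_mem he'; simp; try omega) d
  | prim op es =>
      intro d
      simp only [inst_prim, eren_prim, List.map_map]
      congr 1
      refine List.map_congr_left fun e' he' => ?_
      exact ih e' (by have := List.sizeOf_lt_of_mem he'; simp; try omega) d
  | app e1 e2 =>
      intro d
      simp only [inst_app, eren_app]
      rw [ih e1 (by simp; try omega), ih e2 (by simp; try omega)]
  | ite b e1 e2 =>
      intro d
      simp only [inst_ite, eren_ite]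
      rw [ih b (by simp; try omega), ih e1 (by simp; try omega), ih e2 (by simp; try omega)]
  | letTup n e b =>
      intro d
      simp only [inst_letTup, eren_letTup]
      rw [ih e (by simp; try omega), ih b (by simp; try omega)]

theorem ajs_inst (vs : List Expr) :
    ∀ e : Expr, ∀ d, ∀ p ∈ ajs (Expr.inst vs d e), p ∈ ajs e ∨ ∃ v ∈ vs, p ∈ ajs v := by
  refine measure_ind sizeOf fun e ih => ?_
  cases e with
  | var n =>
      intro d p hp
      rw [inst_var] at hp
      by_cases h : n < d
      · simp [h] at hp
      · simp only [h, if_false] at hp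
        cases hv : vs[n - d]? with
        | none => rw [hv] at hp; simp at hp
        | some v =>
            rw [hv] at hp
            exact .inr ⟨v, mem_of_getElem? hv, hp⟩
  | aname a j T => intro d p hp; simp at hp; simp [hp]
  | const c => intro d p hp; simp at hp
  | fixfun T1 T2 b =>
      intro d p hp
      simp only [inst_fixfun, ajs_fixfun] at hp ⊢
      exact ih b (by simp; try omega) _ p hp
  | tuple es =>
      intro d p hp
      simp only [inst_tuple, ajs_tuple, List.map_map] at hp
      rcases mem_flat.mp hp with ⟨l, hl, hpl⟩
      rcases List.mem_map.mp hl with ⟨e', he', rfl⟩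
      rcases ih e' (by have := List.sizeOf_lt_of_mem he'; simp; try omega) d p hpl with h | h
      · exact .inl (by
          simp only [ajs_tuple]
          exact mem_flat.mpr ⟨ajs e', List.mem_map_of_mem he', h⟩)
      · exact .inr h
  | prim op es =>
      intro d p hp
      simp only [inst_prim, ajs_prim, List.map_map] at hp
      rcases mem_flat.mp hp with ⟨l, hl, hpl⟩
      rcases List.mem_map.mp hl with ⟨e', he', rfl⟩
      rcases ih e' (by have := List.sizeOf_lt_of_mem he'; simp; try omega) d p hpl with h | h
      · exact .inl (by
          simp only [ajs_prim]
          exact mem_flat.mpr ⟨ajs e', List.mem_map_of_mem he', h⟩)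
      · exact .inr h
  | app e1 e2 =>
      intro d p hp
      simp only [inst_app, ajs_app, List.mem_append] at hp ⊢
      rcases hp with hp | hp
      · rcases ih e1 (by simp; try omega) d p hp with h | h
        · exact .inl (.inl h)
        · exact .inr h
      · rcases ih e2 (by simp; try omega) d p hp with h | h
        · exact .inl (.inr h)
        · exact .inr h
  | ite b e1 e2 =>
      intro d p hp
      simp only [inst_ite, ajs_ite, List.mem_append] at hp ⊢
      rcases hp with (hp | hp) | hp
      · rcases ih b (by simp; try omega) d p hp with h | h
        · exact .inl (.inl (.inl h))
        · exact .inr h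
      · rcases ih e1 (by simp; try omega) d p hp with h | h
        · exact .inl (.inl (.inr h))
        · exact .inr h
      · rcases ih e2 (by simp; try omega) d p hp with h | h
        · exact .inl (.inr h)
        · exact .inr h
  | letTup n e b =>
      intro d p hp
      simp only [inst_letTup, ajs_letTup, List.mem_append] at hp ⊢
      rcases hp with hp | hp
      · rcases ih e (by simp; try omega) d p hp with h | h
        · exact .inl (.inl h)
        · exact .inr h
      · rcases ih b (by simp; try omega) (d + n) p hp with h | h
        · exact .inl (.inr h)
        · exact .inr h


/-! ### flat lemmas -/

@[simp] theorem flat_nil {β : Type _} : flat ([] : List (List β)) = [] := rfl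
@[simp] theorem flat_cons {β : Type _} (l : List β) (ls : List (List β)) :
    flat (l :: ls) = l ++ flat ls := rfl
@[simp] theorem flat_append {β : Type _} (l1 l2 : List (List β)) :
    flat (l1 ++ l2) = flat l1 ++ flat l2 := by
  induction l1 with
  | nil => simp
  | cons x xs ih => simp [ih]

/-! ### Evaluation contexts under renaming -/

def renC (σ : Nat → Nat → Nat) : ECtx → ECtx
  | .hole T => .hole T
  | .tupleC vs E es => .tupleC (vs.map (eren σ)) (renC σ E) (es.map (eren σ))
  | .primC op vs E es => .primC op (vs.map (eren σ)) (renC σ E) (es.map (eren σ))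
  | .appL E e => .appL (renC σ E) (eren σ e)
  | .appR v E => .appR (eren σ v) (renC σ E)
  | .iteC E e1 e2 => .iteC (renC σ E) (eren σ e1) (eren σ e2)
  | .letC n E b => .letC n (renC σ E) (eren σ b)

def ajsC : ECtx → List (Nat × Nat)
  | .hole _ => []
  | .tupleC vs E es => flat (vs.map ajs) ++ ajsC E ++ flat (es.map ajs)
  | .primC _ vs E es => flat (vs.map ajs) ++ ajsC E ++ flat (es.map ajs)
  | .appL E e => ajsC E ++ ajs e
  | .appR v E => ajs v ++ ajsC E
  | .iteC E e1 e2 => ajsC E ++ ajs e1 ++ ajs e2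
  | .letC _ E b => ajsC E ++ ajs b

theorem plug_ren (σ : Nat → Nat → Nat) (E : ECtx) (x : Expr) :
    eren σ (E.plug x) = (renC σ E).plug (eren σ x) := by
  induction E with
  | hole T => rfl
  | tupleC vs E es ih => simp [ECtx.plug, renC, ih]
  | primC op vs E es ih => simp [ECtx.plug, renC, ih]
  | appL E e ih => simp [ECtx.plug, renC, ih]
  | appR v E ih => simp [ECtx.plug, renC, ih]
  | iteC E e1 e2 ih => simp [ECtx.plug, renC, ih]
  | letC n E b ih => simp [ECtx.plug, renC, ih]

theorem holeTy_renC (σ : Nat → Nat → Nat) (E : ECtx) : (renC σ E).holeTy = E.holeTy := by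
  induction E <;> simp [renC, ECtx.holeTy, *]

theorem Wf_renC {σ : Nat → Nat → Nat} {E : ECtx} (h : E.Wf) : (renC σ E).Wf := by
  induction h with
  | hole T => exact .hole T
  | tupleC hv _ ih =>
      refine .tupleC (fun v hvmem => ?_) ih
      rcases List.mem_map.mp hvmem with ⟨v0, hv0, rfl⟩
      exact (isValue_eren v0).mpr (hv v0 hv0)
  | primC hv _ ih =>
      refine .primC (fun v hvmem => ?_) ih
      rcases List.mem_map.mp hvmem with ⟨v0, hv0, rfl⟩
      exact (isValue_eren v0).mpr (hv v0 hv0)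
  | appL _ ih => exact .appL ih
  | appR hv _ ih => exact .appR ((isValue_eren _).mpr hv) ih
  | iteC _ ih => exact .iteC ih
  | letC _ ih => exact .letC ih

theorem mem_ajs_plug {p : Nat × Nat} {E : ECtx} {x : Expr} :
    p ∈ ajs (E.plug x) ↔ p ∈ ajsC E ∨ p ∈ ajs x := by
  induction E with
  | hole T => simp [ECtx.plug, ajsC]
  | tupleC vs E es ih =>
      simp only [ECtx.plug, ajs_tuple, ajsC, List.map_append, List.map_cons, flat_append,
        flat_cons, List.mem_append, ih]
      tauto
  | primC op vs E es ih =>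
      simp only [ECtx.plug, ajs_prim, ajsC, List.map_append, List.map_cons, flat_append,
        flat_cons, List.mem_append, ih]
      tauto
  | appL E e ih =>
      simp only [ECtx.plug, ajs_app, ajsC, List.mem_append, ih]
      tauto
  | appR v E ih =>
      simp only [ECtx.plug, ajs_app, ajsC, List.mem_append, ih]
      tauto
  | iteC E e1 e2 ih =>
      simp only [ECtx.plug, ajs_ite, ajsC, List.mem_append, ih]
      tauto
  | letC n E b ih =>
      simp only [ECtx.plug, ajs_letTup, ajsC, List.mem_append, ih]
      tauto

theorem renC_congr {σ σ' : Nat → Nat → Nat} {E : ECtx}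
    (h : ∀ p ∈ ajsC E, σ p.1 p.2 = σ' p.1 p.2) : renC σ E = renC σ' E := by
  induction E with
  | hole T => rfl
  | tupleC vs E es ih =>
      have h1 : vs.map (eren σ) = vs.map (eren σ') :=
        List.map_congr_left fun v hv => eren_congr v fun p hp => h p (by
          simp only [ajsC, List.mem_append]
          exact .inl (.inl (mem_flat.mpr ⟨ajs v, List.mem_map_of_mem hv, hp⟩)))
      have h2 := ih fun p hp => h p (by simp [ajsC, hp])
      have h3 : es.map (eren σ) = es.map (eren σ') :=
        List.map_congr_left fun v hv => eren_congr v fun p hp => h p (by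
          simp only [ajsC, List.mem_append]
          exact .inr (mem_flat.mpr ⟨ajs v, List.mem_map_of_mem hv, hp⟩))
      simp only [renC, h1, h2, h3]
  | primC op vs E es ih =>
      have h1 : vs.map (eren σ) = vs.map (eren σ') :=
        List.map_congr_left fun v hv => eren_congr v fun p hp => h p (by
          simp only [ajsC, List.mem_append]
          exact .inl (.inl (mem_flat.mpr ⟨ajs v, List.mem_map_of_mem hv, hp⟩)))
      have h2 := ih fun p hp => h p (by simp [ajsC, hp])
      have h3 : es.map (eren σ) = es.map (eren σ') :=
        List.map_congr_left fun v hv => eren_congr v fun p hp => h p (by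
          simp only [ajsC, List.mem_append]
          exact .inr (mem_flat.mpr ⟨ajs v, List.mem_map_of_mem hv, hp⟩))
      simp only [renC, h1, h2, h3]
  | appL E e ih =>
      simp only [renC]
      rw [ih fun p hp => h p (by simp [ajsC, hp]),
        eren_congr e fun p hp => h p (by simp [ajsC, hp])]
  | appR v E ih =>
      simp only [renC]
      rw [ih fun p hp => h p (by simp [ajsC, hp]),
        eren_congr v fun p hp => h p (by simp [ajsC, hp])]
  | iteC E e1 e2 ih =>
      simp only [renC]
      rw [ih fun p hp => h p (by simp [ajsC, hp]),
        eren_congr e1 fun p hp => h p (by simp [ajsC, hp]),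
        eren_congr e2 fun p hp => h p (by simp [ajsC, hp])]
  | letC n E b ih =>
      simp only [renC]
      rw [ih fun p hp => h p (by simp [ajsC, hp]),
        eren_congr b fun p hp => h p (by simp [ajsC, hp])]

/-! ### Equivariance of reduction -/

theorem bstep_eren {σ : Nat → Nat → Nat} {a b : Expr} (h : BStep a b) :
    BStep (eren σ a) (eren σ b) := by
  cases h with
  | beta hv =>
      rename_i T1 T2 bo v
      have key := BStep.beta (T1 := T1) (T2 := T2) (b := eren σ bo) (v := eren σ v)
        ((isValue_eren (σ := σ) v).mpr hv)
      rw [eren_inst]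
      simpa using key
  | prim hev =>
      rename_i op cs c
      have heq : (cs.map Expr.const).map (eren σ) = cs.map Expr.const := by
        rw [List.map_map]
        exact List.map_congr_left fun c' _ => by simp [Function.comp]
      simp only [eren_prim, eren_const, heq]
      exact BStep.prim hev
  | letTup hv hlen =>
      rename_i n vs bo
      rw [eren_inst]
      simp only [eren_letTup, eren_tuple]
      refine BStep.letTup (fun v hvmem => ?_) (by simpa using hlen)
      rcases List.mem_map.mp hvmem with ⟨v0, hv0, rfl⟩
      exact (isValue_eren v0).mpr (hv v0 hv0)
  | iteT => simpa using BStep.iteT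
  | iteF => simpa using BStep.iteF

theorem red_eren {σ : Nat → Nat → Nat} {e e' : Expr} (h : Red e e') :
    Red (eren σ e) (eren σ e') := by
  cases h with
  | mk hwf hb =>
      rw [plug_ren, plug_ren]
      exact Red.mk (Wf_renC hwf) (bstep_eren hb)

/-! ### `ulp` under renaming -/

theorem ulp_ren_main (σ : Nat → Nat → Nat) :
    ∀ k : Nat,
      (∀ (e : Expr) (n : Nat), sizeOf e ≤ k →
        ulpAux (eren σ e) n =
          (ulpAux e n).map fun r => (r.1, r.2.1.map (eren σ), r.2.2)) ∧
      (∀ (es : List Expr) (n : Nat), sizeOf es ≤ k →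
        ulpList (es.map (eren σ)) n =
          (ulpList es n).map fun r => (r.1, r.2.1.map (eren σ), r.2.2)) := by
  refine measure_ind (fun k => k) fun k ih => ⟨fun e n hk => ?_, fun es n hk => ?_⟩
  · cases e with
    | var m => simp [ulpAux]
    | aname a j T => simp [ulpAux]
    | const c => simp [ulpAux]
    | fixfun T1 T2 b => simp [ulpAux]
    | tuple es =>
        have hsz : sizeOf es < k := by
          have : sizeOf es < sizeOf (Expr.tuple es) := by simp; try omega
          omega
        have hlist := (ih (sizeOf es) hsz).2 es n le_rfl
        cases hu : ulpList es n with
        | none => simp [ulpAux, hlist, hu]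
        | some r => obtain ⟨Ds, fs, n'⟩ := r; simp [ulpAux, hlist, hu]
    | prim op es => simp [ulpAux]
    | app e1 e2 => simp [ulpAux]
    | ite b e1 e2 => simp [ulpAux]
    | letTup m e b => simp [ulpAux]
  · cases es with
    | nil => simp [ulpList]
    | cons e es =>
        have hsze : sizeOf e < k := by
          have : sizeOf e < sizeOf (e :: es) := by simp; try omega
          omega
        have hszes : sizeOf es < k := by
          have : sizeOf es < sizeOf (e :: es) := by simp; try omega
          omega
        have he := (ih (sizeOf e) hsze).1 e n le_rfl
        cases hu1 : ulpAux e n with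
        | none => simp [ulpList, he, hu1]
        | some r =>
            obtain ⟨D, fs1, n1⟩ := r
            have hes := (ih (sizeOf es) hszes).2 es n1 le_rfl
            cases hu2 : ulpList es n1 with
            | none => simp [ulpList, he, hu1, hes, hu2]
            | some r2 => obtain ⟨Ds, fs2, n2⟩ := r2; simp [ulpList, he, hu1, hes, hu2]

theorem ulp_eren (σ : Nat → Nat → Nat) (v : Expr) :
    ulp (eren σ v) = (ulp v).map fun r => (r.1, r.2.map (eren σ)) := by
  have key := (ulp_ren_main σ (sizeOf v)).1 v 0 le_rfl
  cases hu : ulpAux v 0 with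
  | none => simp [ulp, key, hu]
  | some r => obtain ⟨D, fs, n'⟩ := r; simp [ulp, key, hu]

theorem ulp_ajs_main :
    ∀ k : Nat,
      (∀ (e : Expr) (n : Nat), sizeOf e ≤ k → ∀ D fs n', ulpAux e n = some (D, fs, n') →
        ∀ f ∈ fs, ∀ p ∈ ajs f, p ∈ ajs e) ∧
      (∀ (es : List Expr) (n : Nat), sizeOf es ≤ k →
        ∀ Ds fs n', ulpList es n = some (Ds, fs, n') →
        ∀ f ∈ fs, ∀ p ∈ ajs f, p ∈ flat (es.map ajs)) := by
  refine measure_ind (fun k => k) fun k ih =>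
    ⟨fun e n hk D fs n' hu => ?_, fun es n hk Ds fs n' hu => ?_⟩
  · cases e with
    | var m => simp [ulpAux] at hu
    | aname a j T =>
        simp only [ulpAux, Option.some.injEq, Prod.mk.injEq] at hu
        obtain ⟨-, rfl, -⟩ := hu
        intro f hf p hp
        simp only [List.mem_singleton] at hf
        subst hf
        simpa using hp
    | const c =>
        simp only [ulpAux, Option.some.injEq, Prod.mk.injEq] at hu
        obtain ⟨-, rfl, -⟩ := hu
        intro f hf
        simp at hf
    | fixfun T1 T2 b =>
        simp only [ulpAux, Option.some.injEq, Prod.mk.injEq] at hu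
        obtain ⟨-, rfl, -⟩ := hu
        intro f hf p hp
        simp only [List.mem_singleton] at hf
        subst hf
        simpa using hp
    | tuple es =>
        have hsz : sizeOf es < k := by
          have : sizeOf es < sizeOf (Expr.tuple es) := by simp; try omega
          omega
        cases hu2 : ulpList es n with
        | none => simp [ulpAux, hu2] at hu
        | some r =>
            obtain ⟨Ds2, fs2, n2⟩ := r
            simp only [ulpAux, hu2, Option.some.injEq, Prod.mk.injEq] at hu
            obtain ⟨-, rfl, -⟩ := hu
            intro f hf p hp
            simp only [ajs_tuple]
            exact (ih (sizeOf es) hsz).2 es n le_rfl _ _ _ hu2 f hf p hp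
    | prim op es => simp [ulpAux] at hu
    | app e1 e2 => simp [ulpAux] at hu
    | ite b e1 e2 => simp [ulpAux] at hu
    | letTup m e b => simp [ulpAux] at hu
  · cases es with
    | nil =>
        simp only [ulpList, Option.some.injEq, Prod.mk.injEq] at hu
        obtain ⟨-, rfl, -⟩ := hu
        intro f hf
        simp at hf
    | cons e es =>
        have hsze : sizeOf e < k := by
          have : sizeOf e < sizeOf (e :: es) := by simp; try omega
          omega
        have hszes : sizeOf es < k := by
          have : sizeOf es < sizeOf (e :: es) := by simp; try omega
          omega
        cases hu1 : ulpAux e n with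
        | none => simp [ulpList, hu1] at hu
        | some r =>
            obtain ⟨D, fs1, n1⟩ := r
            cases hu2 : ulpList es n1 with
            | none => simp [ulpList, hu1, hu2] at hu
            | some r2 =>
                obtain ⟨Ds2, fs2, n2⟩ := r2
                simp only [ulpList, hu1, hu2, Option.some.injEq, Prod.mk.injEq] at hu
                obtain ⟨-, rfl, -⟩ := hu
                intro f hf p hp
                simp only [List.map_cons, flat_cons, List.mem_append]
                rcases List.mem_append.mp hf with hf | hf
                · exact .inl ((ih (sizeOf e) hsze).1 e n le_rfl _ _ _ hu1 f hf p hp)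
                · exact .inr ((ih (sizeOf es) hszes).2 es n1 le_rfl _ _ _ hu2 f hf p hp)

theorem ulp_ajs {v : Expr} {D : VCtx} {fs : List Expr} (hu : ulp v = some (D, fs)) :
    ∀ f ∈ fs, ∀ p ∈ ajs f, p ∈ ajs v := by
  rw [ulp] at hu
  cases hu0 : ulpAux v 0 with
  | none => rw [hu0] at hu; simp at hu
  | some r =>
      obtain ⟨D0, fs0, n0⟩ := r
      rw [hu0] at hu
      simp only [Option.some.injEq, Prod.mk.injEq] at hu
      obtain ⟨rfl, rfl⟩ := hu
      exact (ulp_ajs_main (sizeOf v)).1 v 0 le_rfl _ _ _ hu0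

/-! ### Typing under renaming -/

theorem typedN_eren {σ : Nat → Nat → Nat} {Γ : List Ty} {e : Expr} {T : Ty}
    (h : TypedA true Γ e T) : TypedA true Γ (eren σ e) T := by
  induction h with
  | var h => simpa using TypedA.var h
  | aname h => simpa using TypedA.aname h
  | const => simpa using TypedA.const
  | fixfun h ih => simpa using TypedA.fixfun ih
  | tuple hlen h ih =>
      rename_i Γ0 es Ts
      simp only [eren_tuple]
      refine TypedA.tuple (by simpa using hlen) fun i e T hi hT => ?_
      rw [List.getElem?_map] at hi
      cases he : es[i]? with
      | none => rw [he] at hi; simp at hi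
      | some e0 =>
          rw [he] at hi
          simp only [Option.map_some, Option.some.injEq] at hi
          subst hi
          exact ih i e0 T he hT
  | prim hty hlen h ih =>
      rename_i Γ0 op T0 es Ts
      simp only [eren_prim]
      refine TypedA.prim hty (by simpa using hlen) fun i e T hi hT => ?_
      rw [List.getElem?_map] at hi
      cases he : es[i]? with
      | none => rw [he] at hi; simp at hi
      | some e0 =>
          rw [he] at hi
          simp only [Option.map_some, Option.some.injEq] at hi
          subst hi
          exact ih i e0 T he hT
  | app h1 h2 ih1 ih2 => simpa using TypedA.app ih1 ih2
  | ite hb h1 h2 ihb ih1 ih2 => simpa using TypedA.ite ihb ih1 ih2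
  | letTup he hb ihe ihb => simpa using TypedA.letTup ihe ihb


/-! ### Abstract values -/

@[simp] theorem names_const (c : Const) : (AVal.const c).names = [] := by simp [AVal.names]
@[simp] theorem names_name (a : Nat) (T : Ty) : (AVal.name a T).names = [a] := by
  simp [AVal.names]
@[simp] theorem names_tuple (vs : List AVal) :
    (AVal.tuple vs).names = flat (vs.map AVal.names) := by
  rw [AVal.names, attach_map']

@[simp] theorem toExpr_const (j : Nat) (c : Const) : (AVal.const c).toExpr j = .const c := by
  simp [AVal.toExpr]
@[simp] theorem toExpr_name (j : Nat) (a : Nat) (T : Ty) :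
    (AVal.name a T).toExpr j = .aname a j T := by simp [AVal.toExpr]
@[simp] theorem toExpr_tuple (j : Nat) (vs : List AVal) :
    (AVal.tuple vs).toExpr j = .tuple (vs.map (AVal.toExpr j)) := by
  rw [AVal.toExpr, attach_map']

theorem toExpr_eren {σ : Nat → Nat → Nat} {j j' : Nat} :
    ∀ w : AVal, (∀ a ∈ w.names, σ a j = j') → eren σ (w.toExpr j) = w.toExpr j' := by
  refine measure_ind sizeOf fun w ih => ?_
  cases w with
  | const c => intro _; simp
  | name a T => intro h; simp [h a (by simp)]
  | tuple vs =>
      intro h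
      simp only [toExpr_tuple, eren_tuple, List.map_map]
      congr 1
      refine List.map_congr_left fun w' hw' => ?_
      refine ih w' (by have := List.sizeOf_lt_of_mem hw'; simp; try omega) fun a ha => h a ?_
      simp only [names_tuple]
      exact mem_flat.mpr ⟨w'.names, List.mem_map_of_mem hw', ha⟩

theorem ajs_toExpr {j : Nat} :
    ∀ w : AVal, ∀ p ∈ ajs (w.toExpr j), p.1 ∈ w.names ∧ p.2 = j := by
  refine measure_ind sizeOf fun w ih => ?_
  cases w with
  | const c => intro p hp; simp at hp
  | name a T => intro p hp; simp at hp; simp [hp]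
  | tuple vs =>
      intro p hp
      simp only [toExpr_tuple, ajs_tuple, List.map_map] at hp
      rcases mem_flat.mp hp with ⟨l, hl, hpl⟩
      rcases List.mem_map.mp hl with ⟨w', hw', rfl⟩
      have := ih w' (by have := List.sizeOf_lt_of_mem hw'; simp; try omega) p hpl
      refine ⟨?_, this.2⟩
      simp only [names_tuple]
      exact mem_flat.mpr ⟨w'.names, List.mem_map_of_mem hw', this.1⟩

/-! ### Unique decomposition -/

def AHead (h : Expr) : Prop :=
  ∃ a j T1 T2 v, h = .app (.aname a j (.arrow T1 T2)) v ∧ IsValue v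

def HeadP (h : Expr) : Prop := (∃ h', BStep h h') ∨ AHead h

theorem head_not_value {h : Expr} (hh : HeadP h) : ¬ IsValue h := by
  rcases hh with ⟨h', hb⟩ | ⟨a, j, T1, T2, v, rfl, hv⟩
  · cases hb <;> exact fun hv => nomatch hv
  · exact fun hv => nomatch hv

theorem plug_not_value {h : Expr} (hh : HeadP h) : ∀ E : ECtx, ¬ IsValue (E.plug h) := by
  intro E
  induction E with
  | hole T => exact head_not_value hh
  | tupleC vs E es ih =>
      intro hv
      cases hv with
      | tuple hv => exact ih (hv _ (by simp))
  | primC op vs E es ih => exact fun hv => nomatch hv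
  | appL E e ih => exact fun hv => nomatch hv
  | appR v E ih => exact fun hv => nomatch hv
  | iteC E e1 e2 ih => exact fun hv => nomatch hv
  | letC n E b ih => exact fun hv => nomatch hv

theorem bstep_app_inv {f v b : Expr} (h : BStep (.app f v) b) :
    ∃ T1 T2 bo, f = .fixfun T1 T2 bo ∧ IsValue v ∧ b = Expr.inst [v, f] 0 bo := by
  cases h with
  | beta hv => exact ⟨_, _, _, rfl, hv, rfl⟩

theorem bstep_prim_inv {op : PrimOp} {es : List Expr} {b : Expr} (h : BStep (.prim op es) b) :
    ∃ cs c, es = cs.map Expr.const ∧ op.eval cs = some c ∧ b = .const c := by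
  cases h with
  | prim hev => exact ⟨_, _, rfl, hev, rfl⟩

theorem bstep_letTup_inv {n : Nat} {e bo b : Expr} (h : BStep (.letTup n e bo) b) :
    ∃ vs, e = .tuple vs ∧ (∀ v ∈ vs, IsValue v) ∧ vs.length = n ∧ b = Expr.inst vs 0 bo := by
  cases h with
  | letTup hv hlen => exact ⟨_, rfl, hv, hlen, rfl⟩

theorem bstep_ite_inv {c e1 e2 b : Expr} (h : BStep (.ite c e1 e2) b) :
    (c = .const (.bool true) ∧ b = e1) ∨ (c = .const (.bool false) ∧ b = e2) := by
  cases h with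
  | iteT => exact .inl ⟨rfl, rfl⟩
  | iteF => exact .inr ⟨rfl, rfl⟩

theorem map_const_inj : ∀ {cs cs' : List Const}, cs.map Expr.const = cs'.map Expr.const →
    cs = cs' := by
  intro cs
  induction cs with
  | nil => intro cs' h; cases cs' <;> simp_all
  | cons c cs ih =>
      intro cs' h
      cases cs' with
      | nil => simp at h
      | cons c' cs' =>
          simp only [List.map_cons, List.cons.injEq] at h
          obtain ⟨h1, h2⟩ := h
          injection h1 with h1
          rw [h1, ih h2]

theorem bstep_det {a b₁ b₂ : Expr} (h1 : BStep a b₁) (h2 : BStep a b₂) : b₁ = b₂ := by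
  cases h1 with
  | beta hv =>
      rcases bstep_app_inv h2 with ⟨T1, T2, bo, heq, hv', rfl⟩
      injection heq with e1 e2 e3
      subst e1; subst e2; subst e3; rfl
  | prim hev =>
      rcases bstep_prim_inv h2 with ⟨cs', c', heq, hev', rfl⟩
      have := map_const_inj heq
      subst this
      rw [hev] at hev'
      injection hev' with h
      rw [h]
  | letTup hv hlen =>
      rcases bstep_letTup_inv h2 with ⟨vs', heq, hv', hlen', rfl⟩
      injection heq with h
      subst h; rfl
  | iteT =>
      rcases bstep_ite_inv h2 with ⟨-, rfl⟩ | ⟨habs, -⟩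
      · rfl
      · exact absurd habs (by simp)
  | iteF =>
      rcases bstep_ite_inv h2 with ⟨habs, -⟩ | ⟨-, rfl⟩
      · exact absurd habs (by simp)
      · rfl

theorem val_no_bstep {a b : Expr} (hv : IsValue a) (h : BStep a b) : False := by
  cases h <;> exact nomatch hv

theorem mid_unique : ∀ {vs₁ : List Expr} {es₁ vs₂ es₂ : List Expr} {p₁ p₂ : Expr},
    (∀ v ∈ vs₁, IsValue v) → (∀ v ∈ vs₂, IsValue v) → ¬ IsValue p₁ → ¬ IsValue p₂ →
    vs₁ ++ p₁ :: es₁ = vs₂ ++ p₂ :: es₂ → vs₁ = vs₂ ∧ p₁ = p₂ ∧ es₁ = es₂ := by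
  intro vs₁
  induction vs₁ with
  | nil =>
      intro es₁ vs₂ es₂ p₁ p₂ hv₁ hv₂ hp₁ hp₂ heq
      cases vs₂ with
      | nil => simpa using heq
      | cons w vs₂ =>
          simp only [List.nil_append, List.cons_append, List.cons.injEq] at heq
          exact absurd (heq.1 ▸ hv₂ w (by simp)) hp₁
  | cons w vs₁ ih =>
      intro es₁ vs₂ es₂ p₁ p₂ hv₁ hv₂ hp₁ hp₂ heq
      cases vs₂ with
      | nil =>
          simp only [List.nil_append, List.cons_append, List.cons.injEq] at heq
          exact absurd (heq.1 ▸ hv₁ w (by simp)) hp₂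
      | cons w' vs₂ =>
          simp only [List.cons_append, List.cons.injEq] at heq
          obtain ⟨rfl, heq⟩ := heq
          obtain ⟨h1, h2, h3⟩ := ih (fun v hv => hv₁ v (by simp [hv]))
            (fun v hv => hv₂ v (by simp [hv])) hp₁ hp₂ heq
          exact ⟨by rw [h1], h2, h3⟩

theorem head_plug {g : Expr} (hg : HeadP g) :
    ∀ {E : ECtx} {h : Expr}, ECtx.Wf E → HeadP h → g = E.plug h → ∃ T, E = .hole T ∧ h = g := by
  intro E h hwf hh heq
  cases E with
  | hole T => exact ⟨T, rfl, heq.symm⟩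
  | tupleC vs E es =>
      exfalso
      rcases hg with ⟨g', hb⟩ | ⟨a, j, T1, T2, v, hgeq, hv⟩
      · rw [heq] at hb; simp only [ECtx.plug] at hb; cases hb
      · rw [heq] at hgeq; simp [ECtx.plug] at hgeq
  | primC op vs E es =>
      exfalso
      rcases hg with ⟨g', hb⟩ | ⟨a, j, T1, T2, v, hgeq, hv⟩
      · rw [heq] at hb
        simp only [ECtx.plug] at hb
        rcases bstep_prim_inv hb with ⟨cs, c, hcs, -, -⟩
        have hmem : E.plug h ∈ cs.map Expr.const := by
          rw [← hcs]; simp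
        rcases List.mem_map.mp hmem with ⟨c0, -, hc0⟩
        exact plug_not_value hh E (hc0 ▸ IsValue.const c0)
      · rw [heq] at hgeq; simp [ECtx.plug] at hgeq
  | appL E e =>
      exfalso
      rcases hg with ⟨g', hb⟩ | ⟨a, j, T1, T2, v, hgeq, hv⟩
      · rw [heq] at hb
        simp only [ECtx.plug] at hb
        rcases bstep_app_inv hb with ⟨T1, T2, bo, hfix, -, -⟩
        exact plug_not_value hh E (hfix ▸ IsValue.fixfun T1 T2 bo)
      · rw [heq] at hgeq
        simp only [ECtx.plug, Expr.app.injEq] at hgeq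
        exact plug_not_value hh E (hgeq.1 ▸ IsValue.aname a j (.arrow T1 T2))
  | appR v E =>
      exfalso
      cases hwf with
      | appR hval hwfE => ?_
      rcases hg with ⟨g', hb⟩ | ⟨a, j, T1, T2, v', hgeq, hv⟩
      · rw [heq] at hb
        simp only [ECtx.plug] at hb
        rcases bstep_app_inv hb with ⟨T1, T2, bo, -, harg, -⟩
        exact plug_not_value hh E harg
      · rw [heq] at hgeq
        simp only [ECtx.plug, Expr.app.injEq] at hgeq
        exact plug_not_value hh E (hgeq.2 ▸ hv)
  | iteC E e1 e2 =>
      exfalso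
      rcases hg with ⟨g', hb⟩ | ⟨a, j, T1, T2, v, hgeq, hv⟩
      · rw [heq] at hb
        simp only [ECtx.plug] at hb
        rcases bstep_ite_inv hb with ⟨hc, -⟩ | ⟨hc, -⟩ <;>
          exact plug_not_value hh E (hc ▸ IsValue.const _)
      · rw [heq] at hgeq; simp [ECtx.plug] at hgeq
  | letC n E b =>
      exfalso
      rcases hg with ⟨g', hb⟩ | ⟨a, j, T1, T2, v, hgeq, hv⟩
      · rw [heq] at hb
        simp only [ECtx.plug] at hb
        rcases bstep_letTup_inv hb with ⟨vs, hc, hvs, -, -⟩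
        exact plug_not_value hh E (hc ▸ IsValue.tuple hvs)
      · rw [heq] at hgeq; simp [ECtx.plug] at hgeq

theorem dec_unique : ∀ (E₁ : ECtx) {h₁ : Expr} {E₂ : ECtx} {h₂ : Expr},
    ECtx.Wf E₁ → HeadP h₁ → ECtx.Wf E₂ → HeadP h₂ → E₁.plug h₁ = E₂.plug h₂ →
    h₁ = h₂ ∧ (∀ x : Expr, E₁.plug x = E₂.plug x) ∧
      (E₁.holeTy = E₂.holeTy → E₁ = E₂) := by
  intro E₁
  induction E₁ with
  | hole T =>
      intro h₁ E₂ h₂ hwf₁ hh₁ hwf₂ hh₂ heq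
      rcases head_plug hh₁ hwf₂ hh₂ heq with ⟨T', rfl, rfl⟩
      exact ⟨heq, fun x => rfl, fun hT => by simp only [ECtx.holeTy] at hT; rw [hT]⟩
  | tupleC vs E es ih =>
      intro h₁ E₂ h₂ hwf₁ hh₁ hwf₂ hh₂ heq
      cases hwf₁ with | tupleC hv₁ hwfE₁ => ?_
      cases E₂ with
      | hole T' =>
          rcases head_plug hh₂ (ECtx.Wf.tupleC hv₁ hwfE₁) hh₁ heq.symm with ⟨T'', hE, -⟩
          exact nomatch hE
      | tupleC vs₂ E₂ es₂ =>
          cases hwf₂ with | tupleC hv₂ hwfE₂ => ?_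
          simp only [ECtx.plug, Expr.tuple.injEq] at heq
          obtain ⟨rfl, hpe, rfl⟩ := mid_unique hv₁ hv₂ (plug_not_value hh₁ E)
            (plug_not_value hh₂ E₂) heq
          obtain ⟨rfl, hplug, hcond⟩ := ih hwfE₁ hh₁ hwfE₂ hh₂ hpe
          refine ⟨rfl, fun x => by simp [ECtx.plug, hplug x], fun hT => ?_⟩
          simp only [ECtx.holeTy] at hT
          rw [hcond hT]
      | primC op vs₂ E₂ es₂ => simp [ECtx.plug] at heq
      | appL E₂ e₂ => simp [ECtx.plug] at heq
      | appR v₂ E₂ => simp [ECtx.plug] at heq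
      | iteC E₂ a b => simp [ECtx.plug] at heq
      | letC n E₂ b => simp [ECtx.plug] at heq
  | primC op vs E es ih =>
      intro h₁ E₂ h₂ hwf₁ hh₁ hwf₂ hh₂ heq
      cases hwf₁ with | primC hv₁ hwfE₁ => ?_
      cases E₂ with
      | hole T' =>
          rcases head_plug hh₂ (ECtx.Wf.primC hv₁ hwfE₁) hh₁ heq.symm with ⟨T'', hE, -⟩
          exact nomatch hE
      | primC op₂ vs₂ E₂ es₂ =>
          cases hwf₂ with | primC hv₂ hwfE₂ => ?_
          simp only [ECtx.plug, Expr.prim.injEq] at heq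
          obtain ⟨rfl, heq⟩ := heq
          obtain ⟨rfl, hpe, rfl⟩ := mid_unique hv₁ hv₂ (plug_not_value hh₁ E)
            (plug_not_value hh₂ E₂) heq
          obtain ⟨rfl, hplug, hcond⟩ := ih hwfE₁ hh₁ hwfE₂ hh₂ hpe
          refine ⟨rfl, fun x => by simp [ECtx.plug, hplug x], fun hT => ?_⟩
          simp only [ECtx.holeTy] at hT
          rw [hcond hT]
      | tupleC vs₂ E₂ es₂ => simp [ECtx.plug] at heq
      | appL E₂ e₂ => simp [ECtx.plug] at heq
      | appR v₂ E₂ => simp [ECtx.plug] at heq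
      | iteC E₂ a b => simp [ECtx.plug] at heq
      | letC n E₂ b => simp [ECtx.plug] at heq
  | appL E e ih =>
      intro h₁ E₂ h₂ hwf₁ hh₁ hwf₂ hh₂ heq
      cases hwf₁ with | appL hwfE₁ => ?_
      cases E₂ with
      | hole T' =>
          rcases head_plug hh₂ (ECtx.Wf.appL hwfE₁) hh₁ heq.symm with ⟨T'', hE, -⟩
          exact nomatch hE
      | appL E₂ e₂ =>
          cases hwf₂ with | appL hwfE₂ => ?_
          simp only [ECtx.plug, Expr.app.injEq] at heq
          obtain ⟨hpe, rfl⟩ := heq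
          obtain ⟨rfl, hplug, hcond⟩ := ih hwfE₁ hh₁ hwfE₂ hh₂ hpe
          refine ⟨rfl, fun x => by simp [ECtx.plug, hplug x], fun hT => ?_⟩
          simp only [ECtx.holeTy] at hT
          rw [hcond hT]
      | appR v₂ E₂ =>
          cases hwf₂ with | appR hval₂ hwfE₂ => ?_
          simp only [ECtx.plug, Expr.app.injEq] at heq
          exact absurd (heq.1 ▸ hval₂) (plug_not_value hh₁ E)
      | tupleC vs₂ E₂ es₂ => simp [ECtx.plug] at heq
      | primC op₂ vs₂ E₂ es₂ => simp [ECtx.plug] at heq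
      | iteC E₂ a b => simp [ECtx.plug] at heq
      | letC n E₂ b => simp [ECtx.plug] at heq
  | appR v E ih =>
      intro h₁ E₂ h₂ hwf₁ hh₁ hwf₂ hh₂ heq
      cases hwf₁ with | appR hval₁ hwfE₁ => ?_
      cases E₂ with
      | hole T' =>
          rcases head_plug hh₂ (ECtx.Wf.appR hval₁ hwfE₁) hh₁ heq.symm with ⟨T'', hE, -⟩
          exact nomatch hE
      | appL E₂ e₂ =>
          simp only [ECtx.plug, Expr.app.injEq] at heq
          exact absurd (heq.1.symm ▸ hval₁) (plug_not_value hh₂ E₂)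
      | appR v₂ E₂ =>
          cases hwf₂ with | appR hval₂ hwfE₂ => ?_
          simp only [ECtx.plug, Expr.app.injEq] at heq
          obtain ⟨rfl, hpe⟩ := heq
          obtain ⟨rfl, hplug, hcond⟩ := ih hwfE₁ hh₁ hwfE₂ hh₂ hpe
          refine ⟨rfl, fun x => by simp [ECtx.plug, hplug x], fun hT => ?_⟩
          simp only [ECtx.holeTy] at hT
          rw [hcond hT]
      | tupleC vs₂ E₂ es₂ => simp [ECtx.plug] at heq
      | primC op₂ vs₂ E₂ es₂ => simp [ECtx.plug] at heq
      | iteC E₂ a b => simp [ECtx.plug] at heq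
      | letC n E₂ b => simp [ECtx.plug] at heq
  | iteC E e1 e2 ih =>
      intro h₁ E₂ h₂ hwf₁ hh₁ hwf₂ hh₂ heq
      cases hwf₁ with | iteC hwfE₁ => ?_
      cases E₂ with
      | hole T' =>
          rcases head_plug hh₂ (ECtx.Wf.iteC hwfE₁) hh₁ heq.symm with ⟨T'', hE, -⟩
          exact nomatch hE
      | iteC E₂ a b =>
          cases hwf₂ with | iteC hwfE₂ => ?_
          simp only [ECtx.plug, Expr.ite.injEq] at heq
          obtain ⟨hpe, rfl, rfl⟩ := heq
          obtain ⟨rfl, hplug, hcond⟩ := ih hwfE₁ hh₁ hwfE₂ hh₂ hpe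
          refine ⟨rfl, fun x => by simp [ECtx.plug, hplug x], fun hT => ?_⟩
          simp only [ECtx.holeTy] at hT
          rw [hcond hT]
      | tupleC vs₂ E₂ es₂ => simp [ECtx.plug] at heq
      | primC op₂ vs₂ E₂ es₂ => simp [ECtx.plug] at heq
      | appL E₂ e₂ => simp [ECtx.plug] at heq
      | appR v₂ E₂ => simp [ECtx.plug] at heq
      | letC n E₂ b => simp [ECtx.plug] at heq
  | letC n E b ih =>
      intro h₁ E₂ h₂ hwf₁ hh₁ hwf₂ hh₂ heq
      cases hwf₁ with | letC hwfE₁ => ?_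
      cases E₂ with
      | hole T' =>
          rcases head_plug hh₂ (ECtx.Wf.letC hwfE₁) hh₁ heq.symm with ⟨T'', hE, -⟩
          exact nomatch hE
      | letC n₂ E₂ b₂ =>
          cases hwf₂ with | letC hwfE₂ => ?_
          simp only [ECtx.plug, Expr.letTup.injEq] at heq
          obtain ⟨rfl, hpe, rfl⟩ := heq
          obtain ⟨rfl, hplug, hcond⟩ := ih hwfE₁ hh₁ hwfE₂ hh₂ hpe
          refine ⟨rfl, fun x => by simp [ECtx.plug, hplug x], fun hT => ?_⟩
          simp only [ECtx.holeTy] at hT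
          rw [hcond hT]
      | tupleC vs₂ E₂ es₂ => simp [ECtx.plug] at heq
      | primC op₂ vs₂ E₂ es₂ => simp [ECtx.plug] at heq
      | appL E₂ e₂ => simp [ECtx.plug] at heq
      | appR v₂ E₂ => simp [ECtx.plug] at heq
      | iteC E₂ a bb => simp [ECtx.plug] at heq

theorem red_dec {e e' : Expr} (h : Red e e') :
    ∃ E a b, ECtx.Wf E ∧ BStep a b ∧ e = E.plug a ∧ e' = E.plug b := by
  cases h with
  | mk hwf hb => exact ⟨_, _, _, hwf, hb, rfl, rfl⟩

theorem red_det {e e₁ e₂ : Expr} (h1 : Red e e₁) (h2 : Red e e₂) : e₁ = e₂ := by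
  rcases red_dec h1 with ⟨E, a, b, hwf₁, hb₁, rfl, rfl⟩
  rcases red_dec h2 with ⟨E', a', b', hwf₂, hb₂, heq, rfl⟩
  obtain ⟨rfl, hplug, -⟩ :=
    dec_unique E hwf₁ (.inl ⟨_, hb₁⟩) hwf₂ (.inl ⟨_, hb₂⟩) heq
  rw [bstep_det hb₁ hb₂]
  exact hplug b'

theorem val_no_red {e e' : Expr} (hv : IsValue e) (h : Red e e') : False := by
  cases h with
  | mk hwf hb => exact plug_not_value (.inl ⟨_, hb⟩) _ hv


/-! ### Step determinism for proponent configurations -/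

theorem head_call (a j : Nat) (T1 T2 : Ty) (v : Expr) (hv : IsValue v) :
    HeadP (.app (.aname a j (.arrow T1 T2)) v) := .inr ⟨a, j, T1, T2, v, rfl, hv⟩

theorem no_call_red {E : ECtx} {a j : Nat} {T1 T2 : Ty} {v e' : Expr}
    (hwf : ECtx.Wf E) (hv : IsValue v)
    (h : Red (E.plug (.app (.aname a j (.arrow T1 T2)) v)) e') : False := by
  rcases red_dec h with ⟨E', a', b', hwf', hb', heq, -⟩
  obtain ⟨heq2, -, -⟩ :=
    dec_unique E' hwf' (.inl ⟨_, hb'⟩) hwf (head_call a j T1 T2 v hv) heq.symm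
  rcases bstep_app_inv (heq2 ▸ hb') with ⟨T1', T2', bo, hfix, -, -⟩
  exact nomatch hfix

theorem call_call_det {E₁ E₂ : ECtx} {a₁ a₂ j₁ j₂ : Nat} {T11 T12 T21 T22 : Ty}
    {v₁ v₂ : Expr} (hwf₁ : ECtx.Wf E₁) (hwf₂ : ECtx.Wf E₂) (hv₁ : IsValue v₁)
    (hv₂ : IsValue v₂)
    (heq : E₁.plug (.app (.aname a₁ j₁ (.arrow T11 T12)) v₁) =
      E₂.plug (.app (.aname a₂ j₂ (.arrow T21 T22)) v₂)) :
    a₁ = a₂ ∧ j₁ = j₂ ∧ T11 = T21 ∧ T12 = T22 ∧ v₁ = v₂ ∧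
      (∀ x, E₁.plug x = E₂.plug x) ∧ (E₁.holeTy = E₂.holeTy → E₁ = E₂) := by
  obtain ⟨hh, hplug, hcond⟩ :=
    dec_unique E₁ hwf₁ (head_call a₁ j₁ T11 T12 v₁ hv₁) hwf₂
      (head_call a₂ j₂ T21 T22 v₂ hv₂) heq
  injection hh with h1 h2
  injection h1 with g1 g2 g3
  injection g3 with g4 g5
  exact ⟨g1, g2, g4, g5, h2, hplug, hcond⟩

theorem prop_step_inv {A M K t e V l C} (h : Step (.prop A M K t e V) l C) :
    (l = .tau ∧ ∃ e', Red e e' ∧ C = .prop A M K t e' V) ∨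
    (l = .tau ∧ IsValue e ∧ ∃ D vs u V', ulp e = some (D, vs) ∧ K ≠ [] ∧ V = u :: V' ∧
      C = .opp A (insert (t ++ [.pret D]) M) K (t ++ [.pret D]) V' (u ++ vs)) ∨
    (l = .tau ∧ ∃ E a j T1 T2 v D vs u,
      e = E.plug (.app (.aname a j (.arrow T1 T2)) v) ∧ IsValue v ∧
      ulp v = some (D, vs) ∧ ECtx.Wf E ∧ E.holeTy = T2 ∧ A a j = some u ∧
      C = .opp A (insert [Move.pcall a (.arrow T1 T2) D] M)
        ((t, E) :: K) [Move.pcall a (.arrow T1 T2) D] V (u ++ vs)) ∨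
    (∃ D vs, l = .mv (.pret D) ∧ K = [] ∧ IsValue e ∧ ulp e = some (D, vs) ∧
      C = .opp A M [] [] [] vs) := by
  cases h with
  | propTau hr => exact .inl ⟨rfl, _, hr, rfl⟩
  | propRet hv hulp hK => exact .inr (.inl ⟨rfl, hv, _, _, _, _, hulp, hK, rfl, rfl⟩)
  | propCall hv hulp hwf hT hA =>
      exact .inr (.inr (.inl ⟨rfl, _, _, _, _, _, _, _, _, _, rfl, hv, hulp, hwf, hT, hA, rfl⟩))
  | propRetBarb hv hulp => exact .inr (.inr (.inr ⟨_, _, rfl, rfl, hv, hulp, rfl⟩))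

theorem prop_step_det {A M K t e V l₁ l₂ C₁ C₂}
    (h1 : Step (.prop A M K t e V) l₁ C₁) (h2 : Step (.prop A M K t e V) l₂ C₂) :
    l₁ = l₂ ∧ C₁ = C₂ := by
  rcases prop_step_inv h1 with ⟨rfl, e₁', hr₁, rfl⟩ |
    ⟨rfl, hv₁, D₁, vs₁, u₁, V₁', hulp₁, hK₁, hV₁, rfl⟩ |
    ⟨rfl, E₁, a₁, j₁, T11, T12, v₁, D₁, vs₁, u₁, he₁, hv₁, hulp₁, hwf₁, hT₁, hA₁, rfl⟩ |
    ⟨D₁, vs₁, rfl, rfl, hv₁, hulp₁, rfl⟩ <;>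
  rcases prop_step_inv h2 with ⟨hl₂, e₂', hr₂, rfl⟩ |
    ⟨hl₂, hv₂, D₂, vs₂, u₂, V₂', hulp₂, hK₂, hV₂, rfl⟩ |
    ⟨hl₂, E₂, a₂, j₂, T21, T22, v₂, D₂, vs₂, u₂, he₂, hv₂, hulp₂, hwf₂, hT₂, hA₂, rfl⟩ |
    ⟨D₂, vs₂, hl₂, hK₂', hv₂, hulp₂, rfl⟩
  · subst hl₂; rw [red_det hr₁ hr₂]; exact ⟨rfl, rfl⟩
  · exact absurd hr₁ fun h => val_no_red hv₂ h
  · subst he₂; exact absurd hr₁ fun h => no_call_red hwf₂ hv₂ h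
  · exact absurd hr₁ fun h => val_no_red hv₂ h
  · exact absurd hr₂ fun h => val_no_red hv₁ h
  · rw [hulp₁] at hulp₂
    injection hulp₂ with h
    injection h with hD hvs
    rw [hV₁] at hV₂
    injection hV₂ with hu hV
    subst hD; subst hvs; subst hu; subst hV; subst hl₂
    exact ⟨rfl, rfl⟩
  · subst he₂; exact absurd hv₁ (plug_not_value (head_call _ _ _ _ _ hv₂) _)
  · exact absurd hK₂' hK₁
  · subst he₁; exact absurd hr₂ fun h => no_call_red hwf₁ hv₁ h
  · subst he₁; exact absurd hv₂ (plug_not_value (head_call _ _ _ _ _ hv₁) _)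
  · subst he₁
    obtain ⟨rfl, rfl, rfl, rfl, rfl, hplug, hcond⟩ :=
      call_call_det hwf₁ hwf₂ hv₁ hv₂ he₂
    have hE : E₁ = E₂ := hcond (by rw [hT₁, hT₂])
    subst hE
    rw [hulp₁] at hulp₂
    injection hulp₂ with h
    injection h with hD hvs
    subst hD; subst hvs
    rw [hA₁] at hA₂
    injection hA₂ with hu
    subst hu; subst hl₂
    exact ⟨rfl, rfl⟩
  · subst he₁; exact absurd hv₂ (plug_not_value (head_call _ _ _ _ _ hv₁) _)
  · exact absurd hr₂ fun h => val_no_red hv₁ h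
  · exact absurd rfl hK₂
  · subst he₂; exact absurd hv₁ (plug_not_value (head_call _ _ _ _ _ hv₂) _)
  · rw [hulp₁] at hulp₂
    injection hulp₂ with h
    injection h with hD hvs
    subst hD; subst hvs; subst hl₂
    exact ⟨rfl, rfl⟩

theorem no_tau_opp_nil {A M t V u C} (h : Step (.opp A M [] t V u) .tau C) : False := by
  cases h <;> simp_all

theorem no_tau_val_nilK {A M t v V C} (hv : IsValue v)
    (h : Step (.prop A M [] t v V) .tau C) : False := by
  cases h with
  | propTau hr => exact val_no_red hv hr
  | propRet _ _ hK => exact hK rfl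
  | propCall hv' hulp hwf hT hA =>
      exact plug_not_value (head_call _ _ _ _ _ hv') _ hv

theorem vis_from_prop {A M K t e V η C'} (h : Step (.prop A M K t e V) (.mv η) C') :
    ∃ D vs, K = [] ∧ IsValue e ∧ ulp e = some (D, vs) ∧ η = .pret D ∧
      C' = .opp A M [] [] [] vs := by
  cases h with
  | propRetBarb hv hulp => exact ⟨_, _, rfl, hv, hulp, rfl, rfl⟩

theorem vis_from_opp {A M K t V u η C'} (h : Step (.opp A M K t V u) (.mv η) C') :
    ∃ i vi w T1 T2, K = [] ∧ t = [] ∧ V = [] ∧ u[i]? = some vi ∧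
      TypedN [] vi (.arrow T1 T2) ∧ AValTy w T1 ∧ w.names.Nodup ∧
      (∀ a ∈ w.names, (∀ j, A a j = none) ∧ a ∉ MNames M) ∧ η = .ocall i w ∧
      C' = .prop (A.upd w.names 0 []) M [] [] (.app vi (w.toExpr 0)) [] := by
  cases h with
  | opCallBarb hi hty hw hnodup hfresh =>
      exact ⟨_, _, _, _, _, rfl, rfl, rfl, hi, hty, hw, hnodup, hfresh, rfl, rfl⟩


/-! ### Trace-shape helpers -/

def EndsO (t : Trace) : Prop := t = [] ∨ ∃ t' m, t = t' ++ [m] ∧ m.isP = false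

theorem not_endsP_nil : ¬ EndsP [] := by
  rintro ⟨t', m, heq, -⟩
  simpa using congrArg List.length heq

theorem endsP_snoc {t : Trace} {m : Move} : EndsP (t ++ [m]) ↔ m.isP = true := by
  constructor
  · rintro ⟨t', m', heq, hP⟩
    obtain ⟨-, h2⟩ := List.append_inj' heq (by simp)
    injection h2 with h2
    rw [h2]; exact hP
  · intro h; exact ⟨t, m, rfl, h⟩

theorem endsO_snoc {t : Trace} {m : Move} : EndsO (t ++ [m]) ↔ m.isP = false := by
  constructor
  · rintro (h | ⟨t', m', heq, hP⟩)
    · simpa using congrArg List.length h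
    · obtain ⟨-, h2⟩ := List.append_inj' heq (by simp)
      injection h2 with h2
      rw [h2]; exact hP
  · intro h; exact .inr ⟨t, m, rfl, h⟩

theorem endsP_endsO_false {t : Trace} (h1 : EndsP t) (h2 : EndsO t) : False := by
  rcases h2 with rfl | ⟨t', m, rfl, hO⟩
  · exact not_endsP_nil h1
  · rw [endsP_snoc] at h1
    rw [h1] at hO
    exact absurd hO (by simp)

theorem traceIntros_append (t1 t2 : Trace) :
    traceIntros (t1 ++ t2) = traceIntros t1 ++ traceIntros t2 := by
  simp [traceIntros, flat_append]

/-! ### The invariants of reachable configurations -/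

def UniqueExt (M : Set Trace) : Prop :=
  ∀ t, EndsP t → ∀ η₁ η₂, η₁ ∈ nextMoves M t → η₂ ∈ nextMoves M t → η₁ = η₂

theorem uniqueExt_insert_p {M : Set Trace} {t : Trace} {m : Move}
    (hM : UniqueExt M) (ht : EndsO t) : UniqueExt (insert (t ++ [m]) M) := by
  intro s hs η₁ η₂ h1 h2
  simp only [nextMoves, Set.mem_setOf_eq, Set.mem_insert_iff] at h1 h2
  rcases h1 with h1 | h1
  · obtain ⟨rfl, hm⟩ := List.append_inj' h1 (by simp)
    exact absurd ht (fun h => endsP_endsO_false hs h)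
  · rcases h2 with h2 | h2
    · obtain ⟨rfl, hm⟩ := List.append_inj' h2 (by simp)
      exact absurd ht (fun h => endsP_endsO_false hs h)
    · exact hM s hs η₁ η₂ h1 h2

def OccL (A : AMap) (es : List Expr) : Prop := ∀ e ∈ es, ∀ p ∈ ajs e, (A p.1 p.2).isSome
def OccK (A : AMap) (K : List (Trace × ECtx)) : Prop :=
  ∀ q ∈ K, ∀ p ∈ ajsC q.2, (A p.1 p.2).isSome
def OccA (A : AMap) : Prop := ∀ a j u, A a j = some u → OccL A u
def ABound (A : AMap) : Prop := ∃ J, ∀ a j, J ≤ j → A a j = none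
def KOk (K : List (Trace × ECtx)) : Prop := ∀ q ∈ K, EndsO q.1

def Inv : Conf → Prop
  | .prop A M K t e V =>
      UniqueExt M ∧ EndsO t ∧ KOk K ∧ ABound A ∧ OccA A ∧ OccL A [e] ∧ OccK A K ∧
        ∀ u ∈ V, OccL A u
  | .opp A M K t V u =>
      UniqueExt M ∧ ((K = [] ∧ t = [] ∧ V = []) ∨ EndsP t) ∧ KOk K ∧ ABound A ∧ OccA A ∧
        OccK A K ∧ (∀ u' ∈ V, OccL A u') ∧ OccL A u

theorem upd_isSome_mono {A : AMap} {ns j k} :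
    ∀ a j', (A a j').isSome → ((A.upd ns j k) a j').isSome := by
  intro a j' h
  simp only [AMap.upd]
  split <;> simp [h]

theorem occL_mono {A A' : AMap} (hmono : ∀ a j, (A a j).isSome → (A' a j).isSome)
    {es : List Expr} (h : OccL A es) : OccL A' es :=
  fun e he p hp => hmono p.1 p.2 (h e he p hp)

theorem occK_mono {A A' : AMap} (hmono : ∀ a j, (A a j).isSome → (A' a j).isSome)
    {K} (h : OccK A K) : OccK A' K :=
  fun q hq p hp => hmono p.1 p.2 (h q hq p hp)

theorem bstep_ajs {a b : Expr} (h : BStep a b) : ∀ p ∈ ajs b, p ∈ ajs a := by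
  cases h with
  | beta hv =>
      intro p hp
      rcases ajs_inst _ _ _ p hp with h | ⟨v', hv', hpv⟩
      · simp only [ajs_app, ajs_fixfun, List.mem_append]; exact .inl h
      · simp only [List.mem_cons, List.mem_singleton] at hv'
        rcases hv' with rfl | rfl | h'
        · simp only [ajs_app, ajs_fixfun, List.mem_append]; exact .inr hpv
        · simp only [ajs_app, ajs_fixfun, List.mem_append]
          exact .inl (by simpa using hpv)
        · simp at h'
  | prim hev => intro p hp; simp at hp
  | letTup hv hlen =>
      intro p hp
      rcases ajs_inst _ _ _ p hp with h | ⟨v', hv', hpv⟩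
      · simp only [ajs_letTup, List.mem_append]; exact .inr h
      · simp only [ajs_letTup, ajs_tuple, List.mem_append]
        exact .inl (mem_flat.mpr ⟨ajs v', List.mem_map_of_mem hv', hpv⟩)
  | iteT => intro p hp; simp [hp]
  | iteF => intro p hp; simp [hp]

theorem red_ajs {e e' : Expr} (h : Red e e') : ∀ p ∈ ajs e', p ∈ ajs e := by
  rcases red_dec h with ⟨E, a, b, hwf, hb, rfl, rfl⟩
  intro p hp
  rcases mem_ajs_plug.mp hp with h | h
  · exact mem_ajs_plug.mpr (.inl h)
  · exact mem_ajs_plug.mpr (.inr (bstep_ajs hb p h))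

theorem abound_upd {A : AMap} {ns j k} (h : ABound A) : ABound (A.upd ns j k) := by
  rcases h with ⟨J, hJ⟩
  refine ⟨max J (j + 1), fun a j' hj' => ?_⟩
  simp only [AMap.upd]
  have h1 : j' ≠ j := by omega
  have h2 : A a j' = none := hJ a j' (by omega)
  simp [h1, h2]

theorem mem_mnames_insert {M : Set Trace} {t : Trace} {m : Move} {a : Nat}
    (h : a ∈ m.intros) : a ∈ MNames (insert (t ++ [m]) M) := by
  refine ⟨t ++ [m], Set.mem_insert _ _, ?_⟩
  rw [traceIntros_append]
  simp [traceIntros, h]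

theorem step_inv {C l C'} (h : Step C l C') (hI : Inv C) : Inv C' := by
  cases h with
  | propTau hr =>
      obtain ⟨h1, h2, h3, h4, h5, h6, h7, h8⟩ := hI
      exact ⟨h1, h2, h3, h4, h5,
        fun e he p hp => by
          simp only [List.mem_singleton] at he
          subst he
          exact h6 _ (by simp) p (red_ajs hr p hp), h7, h8⟩
  | propRetBarb hv hulp =>
      obtain ⟨h1, h2, h3, h4, h5, h6, h7, h8⟩ := hI
      refine ⟨h1, .inl ⟨rfl, rfl, rfl⟩, by intro q hq; simp at hq, h4, h5,
        by intro q hq; simp at hq, by intro u' hu'; simp at hu', ?_⟩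
      intro f hf p hp
      exact h6 _ (by simp) p (ulp_ajs hulp f hf p hp)
  | propRet hv hulp hK =>
      obtain ⟨h1, h2, h3, h4, h5, h6, h7, h8⟩ := hI
      refine ⟨uniqueExt_insert_p h1 h2, .inr (endsP_snoc.mpr rfl), h3, h4, h5, h7,
        fun u' hu' => h8 u' (by simp [hu']), ?_⟩
      intro f hf p hp
      rcases List.mem_append.mp hf with hf | hf
      · exact h8 _ (by simp) f hf p hp
      · exact h6 _ (by simp) p (ulp_ajs hulp f hf p hp)
  | propCall hv hulp hwf hT hA =>
      rename_i A M K t E a j T1 T2 v V D vs u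
      obtain ⟨h1, h2, h3, h4, h5, h6, h7, h8⟩ := hI
      have h6' : ∀ p ∈ ajs (E.plug (.app (.aname a j (.arrow T1 T2)) v)),
          (A p.1 p.2).isSome :=
        h6 _ (List.mem_singleton.mpr rfl)
      have hins : UniqueExt (insert (([] : Trace) ++ [Move.pcall a (.arrow T1 T2) D]) M) :=
        uniqueExt_insert_p h1 (.inl rfl)
      have hP : EndsP (([] : Trace) ++ [Move.pcall a (.arrow T1 T2) D]) := endsP_snoc.mpr rfl
      refine ⟨by simpa using hins, .inr (by simpa using hP), ?_, h4, h5, ?_, h8, ?_⟩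
      · intro q hq
        rcases List.mem_cons.mp hq with rfl | hq
        · exact h2
        · exact h3 q hq
      · intro q hq
        rcases List.mem_cons.mp hq with rfl | hq
        · intro p hp
          exact h6' p (mem_ajs_plug.mpr (.inl hp))
        · exact h7 q hq
      · intro f hf p hp
        rcases List.mem_append.mp hf with hf | hf
        · exact h5 _ _ _ hA f hf p hp
        · refine h6' p ?_
          exact mem_ajs_plug.mpr (.inr (by
            simp only [ajs_app, List.mem_append]
            exact .inr (ulp_ajs hulp f hf p hp)))
  | opRet hnext hty hT hnodup hj hleg =>
      obtain ⟨h1, h2, h3, h4, h5, h6, h7, h8⟩ := hI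
      rename_i A M K t₀ E t V u w T' j
      have hmono : ∀ a j', (A a j').isSome → ((A.upd w.names j u) a j').isSome :=
        upd_isSome_mono
      refine ⟨hleg.1, h3 (t₀, E) (by simp), fun q hq => h3 q (by simp [hq]), abound_upd h4,
        ?_, ?_, occK_mono hmono (fun q' hq' => h6 q' (by simp [hq'])),
        fun u' hu' => occL_mono hmono (h7 u' hu')⟩
      · intro a j' u' hu'
        simp only [AMap.upd] at hu'
        split at hu'
        · injection hu' with hu'
          subst hu'
          exact occL_mono hmono h8
        · exact occL_mono hmono (h5 a j' u' hu')
      · intro e he p hp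
        simp only [List.mem_singleton] at he
        subst he
        rcases mem_ajs_plug.mp hp with hp | hp
        · exact hmono p.1 p.2 (h6 (t₀, E) (by simp) p hp)
        · obtain ⟨hpa, hpj⟩ := ajs_toExpr w p hp
          simp only [AMap.upd]
          rw [hpj]
          simp [hpa]
  | opCallBarb hi hty hw hnodup hfresh =>
      obtain ⟨h1, h2, h3, h4, h5, h6, h7, h8⟩ := hI
      rename_i A M u i vi w T1 T2
      have hmono : ∀ a j', (A a j').isSome → ((A.upd w.names 0 []) a j').isSome :=
        upd_isSome_mono
      refine ⟨h1, .inl rfl, h3, abound_upd h4, ?_, ?_, occK_mono hmono h6,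
        by intro u' hu'; simp at hu'⟩
      · intro a j' u' hu'
        simp only [AMap.upd] at hu'
        split at hu'
        · injection hu' with hu'
          subst hu'
          intro e he
          simp at he
        · exact occL_mono hmono (h5 a j' u' hu')
      · intro e he p hp
        simp only [List.mem_singleton] at he
        subst he
        simp only [ajs_app, List.mem_append] at hp
        rcases hp with hp | hp
        · exact hmono p.1 p.2 (h8 vi (mem_of_getElem? hi) p hp)
        · obtain ⟨hpa, hpj⟩ := ajs_toExpr w p hp
          simp only [AMap.upd]
          rw [hpj]
          simp [hpa]
  | opCall hK hnext hi hty hw hnodup hj hleg =>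
      obtain ⟨h1, h2, h3, h4, h5, h6, h7, h8⟩ := hI
      rename_i A M K t V u i vi w T1 T2 j
      have hmono : ∀ a j', (A a j').isSome → ((A.upd w.names j u) a j').isSome :=
        upd_isSome_mono
      refine ⟨hleg.1, endsO_snoc.mpr rfl, h3, abound_upd h4, ?_, ?_,
        occK_mono hmono h6, ?_⟩
      · intro a j' u' hu'
        simp only [AMap.upd] at hu'
        split at hu'
        · injection hu' with hu'
          subst hu'
          exact occL_mono hmono h8
        · exact occL_mono hmono (h5 a j' u' hu')
      · intro e he p hp
        simp only [List.mem_singleton] at he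
        subst he
        simp only [ajs_app, List.mem_append] at hp
        rcases hp with hp | hp
        · exact hmono p.1 p.2 (h8 vi (mem_of_getElem? hi) p hp)
        · obtain ⟨hpa, hpj⟩ := ajs_toExpr w p hp
          simp only [AMap.upd]
          rw [hpj]
          simp [hpa]
      · intro u' hu'
        rcases List.mem_cons.mp hu' with rfl | hu'
        · exact occL_mono hmono h8
        · exact occL_mono hmono (h7 u' hu')

theorem typed_no_ajs {Γ : List Ty} {e : Expr} {T : Ty} (h : TypedA false Γ e T) :
    ∀ p ∈ ajs e, False := by
  induction h with
  | var h => intro p hp; simp at hp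
  | aname hallow => exact absurd hallow (by simp)
  | const => intro p hp; simp at hp
  | fixfun h ih => intro p hp; exact ih p (by simpa using hp)
  | tuple hlen h ih =>
      rename_i Γ0 es Ts
      intro p hp
      simp only [ajs_tuple] at hp
      rcases mem_flat.mp hp with ⟨l, hl, hpl⟩
      rcases List.mem_map.mp hl with ⟨e', he', rfl⟩
      rcases List.mem_iff_getElem?.mp he' with ⟨i, hi⟩
      have hiT : i < Ts.length := by
        rw [← hlen]
        exact (List.getElem?_eq_some_iff.mp hi).1
      exact ih i e' (Ts[i]) hi (List.getElem?_eq_getElem hiT) p hpl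
  | prim hty hlen h ih =>
      rename_i Γ0 op T0 es Ts
      intro p hp
      simp only [ajs_prim] at hp
      rcases mem_flat.mp hp with ⟨l, hl, hpl⟩
      rcases List.mem_map.mp hl with ⟨e', he', rfl⟩
      rcases List.mem_iff_getElem?.mp he' with ⟨i, hi⟩
      have hiT : i < Ts.length := by
        rw [← hlen]
        exact (List.getElem?_eq_some_iff.mp hi).1
      exact ih i e' (Ts[i]) hi (List.getElem?_eq_getElem hiT) p hpl
  | app h1 h2 ih1 ih2 =>
      intro p hp
      simp only [ajs_app, List.mem_append] at hp
      rcases hp with hp | hp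
      · exact ih1 p hp
      · exact ih2 p hp
  | ite hb h1 h2 ihb ih1 ih2 =>
      intro p hp
      simp only [ajs_ite, List.mem_append] at hp
      rcases hp with (hp | hp) | hp
      · exact ihb p hp
      · exact ih1 p hp
      · exact ih2 p hp
  | letTup he hb ihe ihb =>
      intro p hp
      simp only [ajs_letTup, List.mem_append] at hp
      rcases hp with hp | hp
      · exact ihe p hp
      · exact ihb p hp

theorem inv_initConf {e : Expr} {T : Ty} (h : Typed [] e T) : Inv (initConf e) := by
  refine ⟨?_, .inl rfl, by intro q hq; simp at hq, ⟨0, fun a j _ => rfl⟩, ?_, ?_,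
    by intro q hq; simp at hq, by intro u hu; simp at hu⟩
  · intro t ht η₁ η₂ h1 h2
    simp [nextMoves, Set.mem_setOf_eq] at h1
  · intro a j u hu
    exact absurd hu (by simp [AMap.empty])
  · intro e' he' p hp
    simp only [List.mem_singleton] at he'
    subst he'
    exact absurd hp (typed_no_ajs h p)


/-! ### The index-renaming relation between configurations -/

def renL (σ : Nat → Nat → Nat) (es : List Expr) : List Expr := es.map (eren σ)

def renK (σ : Nat → Nat → Nat) (K : List (Trace × ECtx)) : List (Trace × ECtx) :=
  K.map fun q => (q.1, renC σ q.2)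

def ARel (σ : Nat → Nat → Nat) (A A' : AMap) : Prop :=
  ∀ a j u, A a j = some u → A' a (σ a j) = some (renL σ u)

def RC (σ : Nat → Nat → Nat) : Conf → Conf → Prop
  | .prop A M K t e V, .prop A' M' K' t' e' V' =>
      ARel σ A A' ∧ M' = M ∧ K' = renK σ K ∧ t' = t ∧ e' = eren σ e ∧
        V' = V.map (renL σ)
  | .opp A M K t V u, .opp A' M' K' t' V' u' =>
      ARel σ A A' ∧ M' = M ∧ K' = renK σ K ∧ t' = t ∧ V' = V.map (renL σ) ∧
        u' = renL σ u
  | _, _ => False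

theorem renL_agree {σ σ' : Nat → Nat → Nat} {A : AMap} {u : List Expr}
    (hOcc : OccL A u) (hagree : ∀ a j, (A a j).isSome → σ' a j = σ a j) :
    renL σ' u = renL σ u :=
  List.map_congr_left fun e he =>
    eren_congr e fun p hp => hagree p.1 p.2 (hOcc e he p hp)

theorem renK_agree {σ σ' : Nat → Nat → Nat} {A : AMap} {K : List (Trace × ECtx)}
    (hOcc : OccK A K) (hagree : ∀ a j, (A a j).isSome → σ' a j = σ a j) :
    renK σ' K = renK σ K :=
  List.map_congr_left fun q hq => by
    rw [renC_congr fun p hp => hagree p.1 p.2 (hOcc q hq p hp)]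

theorem renV_agree {σ σ' : Nat → Nat → Nat} {A : AMap} {V : List (List Expr)}
    (hOcc : ∀ u ∈ V, OccL A u) (hagree : ∀ a j, (A a j).isSome → σ' a j = σ a j) :
    V.map (renL σ') = V.map (renL σ) :=
  List.map_congr_left fun u hu => renL_agree (hOcc u hu) hagree

theorem eren_agree {σ σ' : Nat → Nat → Nat} {A : AMap} {e : Expr}
    (hOcc : ∀ p ∈ ajs e, (A p.1 p.2).isSome)
    (hagree : ∀ a j, (A a j).isSome → σ' a j = σ a j) :
    eren σ' e = eren σ e :=
  eren_congr e fun p hp => hagree p.1 p.2 (hOcc p hp)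

/-- The updated renaming used when opponent introduces `ws` at indices `j₁`/`j₂`. -/
def updσ (σ : Nat → Nat → Nat) (ws : List Nat) (j₁ j₂ : Nat) : Nat → Nat → Nat :=
  fun a j => if a ∈ ws ∧ j = j₁ then j₂ else σ a j

theorem updσ_hit {σ ws j₁ j₂} : ∀ a ∈ ws, updσ σ ws j₁ j₂ a j₁ = j₂ := by
  intro a ha
  simp [updσ, ha]

theorem updσ_agree {σ : Nat → Nat → Nat} {A₁ : AMap} {ws j₁ j₂}
    (hj₁ : ∀ a ∈ ws, A₁ a j₁ = none) :
    ∀ a j, (A₁ a j).isSome → updσ σ ws j₁ j₂ a j = σ a j := by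
  intro a j h
  simp only [updσ]
  split
  · rename_i hcond
    rw [hcond.2, hj₁ a hcond.1] at h
    simp at h
  · rfl

theorem arel_upd {σ : Nat → Nat → Nat} {A₁ A₂ : AMap} {ws : List Nat} {j₁ j₂ : Nat}
    {u₁ : List Expr} (hA : ARel σ A₁ A₂) (hOccA : OccA A₁) (hOccu : OccL A₁ u₁)
    (hj₁ : ∀ a ∈ ws, A₁ a j₁ = none) (hj₂ : ∀ a ∈ ws, A₂ a j₂ = none) :
    ARel (updσ σ ws j₁ j₂) (A₁.upd ws j₁ u₁) (A₂.upd ws j₂ (renL σ u₁)) := by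
  have hagree := updσ_agree (σ := σ) (j₂ := j₂) hj₁
  intro a j u hu
  simp only [AMap.upd] at hu
  split at hu
  · rename_i hcond
    injection hu with hu
    subst hu
    rw [hcond.2, updσ_hit a hcond.1]
    simp [AMap.upd, hcond.1, renL_agree hOccu hagree]
  · rename_i hcond
    have hσ : updσ σ ws j₁ j₂ a j = σ a j := hagree a j (by simp [hu])
    rw [hσ]
    have hA2 := hA a j u hu
    have hne : ¬ (a ∈ ws ∧ σ a j = j₂) := by
      rintro ⟨hmem, hj⟩
      rw [hj] at hA2
      rw [hj₂ a hmem] at hA2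
      exact nomatch hA2
    simp only [AMap.upd, if_neg hne]
    rw [hA2, renL_agree (hOccA a j u hu) hagree]

theorem renK_ne_nil {σ K} (h : K ≠ []) : renK σ K ≠ [] := by
  cases K with
  | nil => exact absurd rfl h
  | cons q K => simp [renK]


def freshσ (σ : Nat → Nat → Nat) (ws : List Nat) : Nat → Nat → Nat :=
  fun a j => if a ∈ ws then j else σ a j

theorem freshσ_agree {σ : Nat → Nat → Nat} {A₁ : AMap} {ws : List Nat}
    (hf₁ : ∀ a ∈ ws, ∀ j, A₁ a j = none) :
    ∀ a j, (A₁ a j).isSome → freshσ σ ws a j = σ a j := by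
  intro a j h
  simp only [freshσ]
  split
  · rename_i hmem
    rw [hf₁ a hmem j] at h
    simp at h
  · rfl

theorem arel_upd_fresh {σ : Nat → Nat → Nat} {A₁ A₂ : AMap} {ws : List Nat}
    (hA : ARel σ A₁ A₂) (hOccA : OccA A₁)
    (hf₁ : ∀ a ∈ ws, ∀ j, A₁ a j = none) :
    ARel (freshσ σ ws) (A₁.upd ws 0 []) (A₂.upd ws 0 []) := by
  have hagree := freshσ_agree (σ := σ) hf₁
  intro a j u hu
  simp only [AMap.upd] at hu
  split at hu
  · rename_i hcond
    injection hu with hu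
    subst hu
    have hσ : freshσ σ ws a j = j := by simp [freshσ, hcond.1]
    rw [hσ, hcond.2]
    simp [AMap.upd, hcond.1, renL]
  · rename_i hcond
    by_cases hmem : a ∈ ws
    · rw [hf₁ a hmem j] at hu; exact nomatch hu
    · have hσ : freshσ σ ws a j = σ a j := by simp [freshσ, hmem]
      rw [hσ]
      have hne : ¬ (a ∈ ws ∧ σ a j = 0) := fun hc => hmem hc.1
      simp only [AMap.upd, if_neg hne]
      rw [hA a j u hu, renL_agree (hOccA a j u hu) hagree]

theorem replay {σ : Nat → Nat → Nat} {C₁ C₂ : Conf} {l : Lab} {C₁' : Conf}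
    (hR : RC σ C₁ C₂) (hI₁ : Inv C₁) (hI₂ : Inv C₂) (h : Step C₁ l C₁')
    (hfr : ∀ i w, l = .mv (.ocall i w) → ∀ a ∈ w.names, ∀ j, C₂.Amap a j = none) :
    ∃ σ' C₂', Step C₂ l C₂' ∧ RC σ' C₁' C₂' := by
  cases h with
  | propTau hr =>
      cases C₂ with
      | opp _ _ _ _ _ _ => exact hR.elim
      | prop A₂ M₂ K₂ t₂ e₂ V₂ =>
          obtain ⟨hA, rfl, rfl, rfl, rfl, rfl⟩ := hR
          exact ⟨σ, _, .propTau (red_eren hr), hA, rfl, rfl, rfl, rfl, rfl⟩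
  | propRetBarb hv hulp =>
      rename_i A M t v V D vs
      cases C₂ with
      | opp _ _ _ _ _ _ => exact hR.elim
      | prop A₂ M₂ K₂ t₂ e₂ V₂ =>
          obtain ⟨hA, rfl, rfl, rfl, rfl, rfl⟩ := hR
          have hulp₂ : ulp (eren σ v) = some (D, renL σ vs) := by
            rw [ulp_eren, hulp]; rfl
          exact ⟨σ, _, .propRetBarb ((isValue_eren v).mpr hv) hulp₂,
            hA, rfl, rfl, rfl, rfl, rfl⟩
  | propRet hv hulp hK =>
      rename_i A M K t v u V D vs
      cases C₂ with
      | opp _ _ _ _ _ _ => exact hR.elim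
      | prop A₂ M₂ K₂ t₂ e₂ V₂ =>
          obtain ⟨hA, rfl, rfl, rfl, rfl, rfl⟩ := hR
          have hulp₂ : ulp (eren σ v) = some (D, renL σ vs) := by
            rw [ulp_eren, hulp]; rfl
          refine ⟨σ, _, .propRet ((isValue_eren v).mpr hv) hulp₂ (renK_ne_nil hK),
            hA, rfl, rfl, rfl, rfl, ?_⟩
          simp [renL]
  | propCall hv hulp hwf hT hA0 =>
      rename_i A M K t E a j T1 T2 v V D vs u
      cases C₂ with
      | opp _ _ _ _ _ _ => exact hR.elim
      | prop A₂ M₂ K₂ t₂ e₂ V₂ =>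
          obtain ⟨hA, rfl, rfl, rfl, rfl, rfl⟩ := hR
          have he₂ : eren σ (E.plug (.app (.aname a j (.arrow T1 T2)) v)) =
              (renC σ E).plug (.app (.aname a (σ a j) (.arrow T1 T2)) (eren σ v)) := by
            rw [plug_ren]; simp
          have hulp₂ : ulp (eren σ v) = some (D, renL σ vs) := by
            rw [ulp_eren, hulp]; rfl
          refine ⟨σ, .opp A₂ (insert [Move.pcall a (.arrow T1 T2) D] M₂)
            ((t₂, renC σ E) :: renK σ K) [Move.pcall a (.arrow T1 T2) D]
            (V.map (renL σ)) (renL σ u ++ renL σ vs), ?_, ?_⟩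
          · rw [he₂]
            exact Step.propCall ((isValue_eren v).mpr hv) hulp₂ (Wf_renC hwf)
              (by rw [holeTy_renC]; exact hT) (hA a j u hA0)
          · exact ⟨hA, rfl, by simp [renK], rfl, rfl, by simp [renL]⟩
  | opRet hnext hty hT hnodup hj hleg =>
      rename_i A M K t₀ E t V u w T' j
      cases C₂ with
      | prop _ _ _ _ _ _ => exact hR.elim
      | opp A₂ M₂ K₂ t₂ V₂ u₂ =>
          obtain ⟨hA, rfl, rfl, rfl, rfl, rfl⟩ := hR
          obtain ⟨i1, i2, i3, i4, i5, i6, i7, i8⟩ := hI₁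
          obtain ⟨-, -, -, ⟨J₂, hJ₂⟩, -, -, -, -⟩ := hI₂
          have hj₂ : ∀ a ∈ w.names, A₂ a J₂ = none := fun a _ => hJ₂ a J₂ le_rfl
          have hagree := updσ_agree (σ := σ) (j₂ := J₂) hj
          have hOccE : ∀ p ∈ ajsC E, (A p.1 p.2).isSome := i6 (t₀, E) (by simp)
          have he : eren (updσ σ w.names j J₂) (E.plug (w.toExpr j)) =
              (renC σ E).plug (w.toExpr J₂) := by
            rw [plug_ren, toExpr_eren (j' := J₂) w updσ_hit]
            congr 1
            exact renC_congr fun p hp => hagree p.1 p.2 (hOccE p hp)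
          refine ⟨updσ σ w.names j J₂, _,
            Step.opRet hnext hty (by rw [holeTy_renC]; exact hT) hnodup hj₂ hleg, ?_⟩
          refine ⟨arel_upd hA i5 i8 hj hj₂, rfl, ?_, rfl, ?_, ?_⟩
          · exact (renK_agree (fun q hq => i6 q (by simp [hq])) hagree).symm
          · exact he.symm
          · exact (renV_agree i7 hagree).symm
  | opCallBarb hi hty hw hnodup hfresh =>
      rename_i A M u i vi w T1 T2
      cases C₂ with
      | prop _ _ _ _ _ _ => exact hR.elim
      | opp A₂ M₂ K₂ t₂ V₂ u₂ =>
          obtain ⟨hA, rfl, rfl, rfl, rfl, rfl⟩ := hR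
          obtain ⟨i1, i2, i3, i4, i5, i6, i7, i8⟩ := hI₁
          have hf₁ : ∀ a ∈ w.names, ∀ j, A a j = none := fun a ha => (hfresh a ha).1
          have hagree := freshσ_agree (σ := σ) hf₁
          have hfr₂ : ∀ a ∈ w.names, ∀ j, A₂ a j = none := fun a ha j => hfr i w rfl a ha j
          have hi₂ : (renL σ u)[i]? = some (eren σ vi) := by
            simp [renL, List.getElem?_map, hi]
          have hOccvi : ∀ p ∈ ajs vi, (A p.1 p.2).isSome := i8 vi (mem_of_getElem? hi)
          have he : eren (freshσ σ w.names) (.app vi (w.toExpr 0)) =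
              .app (eren σ vi) (w.toExpr 0) := by
            simp only [eren_app]
            rw [toExpr_eren (j' := 0) w (fun a ha => by simp [freshσ, ha]),
              eren_agree hOccvi hagree]
          refine ⟨freshσ σ w.names, _,
            Step.opCallBarb hi₂ (typedN_eren hty) hw hnodup
              (fun a ha => ⟨hfr₂ a ha, (hfresh a ha).2⟩), ?_⟩
          exact ⟨arel_upd_fresh hA i5 hf₁, rfl, rfl, rfl, he.symm, rfl⟩
  | opCall hK hnext hi hty hw hnodup hj hleg =>
      rename_i A M K t V u i vi w T1 T2 j
      cases C₂ with
      | prop _ _ _ _ _ _ => exact hR.elim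
      | opp A₂ M₂ K₂ t₂ V₂ u₂ =>
          obtain ⟨hA, rfl, rfl, rfl, rfl, rfl⟩ := hR
          obtain ⟨i1, i2, i3, i4, i5, i6, i7, i8⟩ := hI₁
          obtain ⟨-, -, -, ⟨J₂, hJ₂⟩, -, -, -, -⟩ := hI₂
          have hj₂ : ∀ a ∈ w.names, A₂ a J₂ = none := fun a _ => hJ₂ a J₂ le_rfl
          have hagree := updσ_agree (σ := σ) (j₂ := J₂) hj
          have hi₂ : (renL σ u)[i]? = some (eren σ vi) := by
            simp [renL, List.getElem?_map, hi]
          have hOccvi : ∀ p ∈ ajs vi, (A p.1 p.2).isSome := i8 vi (mem_of_getElem? hi)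
          have he : eren (updσ σ w.names j J₂) (.app vi (w.toExpr j)) =
              .app (eren σ vi) (w.toExpr J₂) := by
            simp only [eren_app]
            rw [toExpr_eren (j' := J₂) w updσ_hit, eren_agree hOccvi hagree]
          refine ⟨updσ σ w.names j J₂, _,
            Step.opCall (renK_ne_nil hK) hnext hi₂ (typedN_eren hty) hw hnodup
              hj₂ hleg, ?_⟩
          refine ⟨arel_upd hA i5 i8 hj hj₂, rfl, ?_, rfl, he.symm, ?_⟩
          · exact (renK_agree i6 hagree).symm
          · simp only [List.map_cons]
            rw [renL_agree i8 hagree, renV_agree i7 hagree]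


/-! ### Pairing of steps (determinism relative to a memory bound) -/

theorem step_mset_mono {C l C'} (h : Step C l C') : C.Mset ⊆ C'.Mset := by
  cases h with
  | propTau hr => exact subset_rfl
  | propRetBarb hv hulp => exact subset_rfl
  | propRet hv hulp hK => exact Set.subset_insert _ _
  | propCall hv hulp hwf hT hA => exact Set.subset_insert _ _
  | opRet hnext hty hT hnodup hj hleg => exact Set.subset_insert _ _
  | opCallBarb hi hty hw hnodup hfresh => exact subset_rfl
  | opCall hK hnext hi hty hw hnodup hj hleg => exact Set.subset_insert _ _

theorem taus_mset_mono {C D} (h : Taus C D) : C.Mset ⊆ D.Mset := by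
  induction h with
  | refl => exact subset_rfl
  | tail hab hbc ih => exact ih.trans (step_mset_mono hbc)

def Stop : Conf → Prop := fun C =>
  (∃ A M t v V, C = .prop A M [] t v V ∧ IsValue v) ∨ (∃ A M t V u, C = .opp A M [] t V u)

theorem stop_no_tau {C D} (hS : Stop C) (h : Step C .tau D) : False := by
  rcases hS with ⟨A, M, t, v, V, rfl, hv⟩ | ⟨A, M, t, V, u, rfl⟩
  · exact no_tau_val_nilK hv h
  · exact no_tau_opp_nil h

theorem renK_eq_nil {σ K} (h : renK σ K = []) : K = [] := by
  cases K with
  | nil => rfl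
  | cons q K => simp [renK] at h

theorem stop_rc_forward {σ C₁ C₂} (hR : RC σ C₁ C₂) (h : Stop C₁) : Stop C₂ := by
  rcases h with ⟨A, M, t, v, V, rfl, hv⟩ | ⟨A, M, t, V, u, rfl⟩
  · cases C₂ with
    | opp _ _ _ _ _ _ => exact hR.elim
    | prop A₂ M₂ K₂ t₂ e₂ V₂ =>
        obtain ⟨hA, rfl, rfl, rfl, rfl, rfl⟩ := hR
        exact .inl ⟨A₂, _, _, _, _, rfl, (isValue_eren v).mpr hv⟩
  · cases C₂ with
    | prop _ _ _ _ _ _ => exact hR.elim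
    | opp A₂ M₂ K₂ t₂ V₂ u₂ =>
        obtain ⟨hA, rfl, rfl, rfl, rfl, rfl⟩ := hR
        exact .inr ⟨A₂, _, _, _, _, rfl⟩

theorem stop_rc_back {σ C₁ C₂} (hR : RC σ C₁ C₂) (h : Stop C₂) : Stop C₁ := by
  cases C₁ with
  | prop A M K t e V =>
      cases C₂ with
      | opp _ _ _ _ _ _ => exact hR.elim
      | prop A₂ M₂ K₂ t₂ e₂ V₂ =>
          obtain ⟨hA, rfl, rfl, rfl, rfl, rfl⟩ := hR
          rcases h with ⟨A', M', t', v', V', heq, hv⟩ | ⟨A', M', t', V', u', heq⟩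
          · injection heq with h1 h2 h3 h4 h5 h6
            have hK : K = [] := renK_eq_nil h3
            subst hK
            exact .inl ⟨A, _, _, _, _, rfl, (isValue_eren e).mp (h5 ▸ hv)⟩
          · exact nomatch heq
  | opp A M K t V u =>
      cases C₂ with
      | prop _ _ _ _ _ _ => exact hR.elim
      | opp A₂ M₂ K₂ t₂ V₂ u₂ =>
          obtain ⟨hA, rfl, rfl, rfl, rfl, rfl⟩ := hR
          rcases h with ⟨A', M', t', v', V', heq, hv⟩ | ⟨A', M', t', V', u', heq⟩
          · exact nomatch heq
          · injection heq with h1 h2 h3 h4 h5 h6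
            have hK : K = [] := renK_eq_nil h3
            subst hK
            exact .inr ⟨A, _, _, _, _, rfl⟩

theorem opp_tau_inv {A M K t V u C} (h : Step (.opp A M K t V u) .tau C) :
    (∃ t₀ E K' w T' j, K = (t₀, E) :: K' ∧ nextMoves M t ⊆ {Move.oret w} ∧ AValTy w T' ∧
      E.holeTy = T' ∧ w.names.Nodup ∧ (∀ a ∈ w.names, A a j = none) ∧
      LegalM (insert (t ++ [Move.oret w]) M) ∧
      C = .prop (A.upd w.names j u) (insert (t ++ [Move.oret w]) M) K' t₀
        (E.plug (w.toExpr j)) V) ∨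
    (∃ i vi w T1 T2 j, K ≠ [] ∧ nextMoves M t ⊆ {Move.ocall i w} ∧ u[i]? = some vi ∧
      TypedN [] vi (.arrow T1 T2) ∧ AValTy w T1 ∧ w.names.Nodup ∧
      (∀ a ∈ w.names, A a j = none) ∧ LegalM (insert (t ++ [Move.ocall i w]) M) ∧
      C = .prop (A.upd w.names j u) (insert (t ++ [Move.ocall i w]) M) K
        (t ++ [Move.ocall i w]) (.app vi (w.toExpr j)) (u :: V)) := by
  cases h with
  | opRet hnext hty hT hnodup hj hleg =>
      exact .inl ⟨_, _, _, _, _, _, rfl, hnext, hty, hT, hnodup, hj, hleg, rfl⟩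
  | opCall hK hnext hi hty hw hnodup hj hleg =>
      exact .inr ⟨_, _, _, _, _, _, hK, hnext, hi, hty, hw, hnodup, hj, hleg, rfl⟩

theorem tau_pair_step {σ : Nat → Nat → Nat} {C₁ C₂ D₁ D₂ : Conf} {N : Set Trace}
    (hR : RC σ C₁ C₂) (hI₁ : Inv C₁) (hI₂ : Inv C₂)
    (h1 : Step C₁ .tau D₁) (h2 : Step C₂ .tau D₂)
    (hN₁ : D₁.Mset ⊆ N) (hN₂ : D₂.Mset ⊆ N) (hU : UniqueExt N) :
    ∃ σ', RC σ' D₁ D₂ := by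
  cases C₁ with
  | prop A M K t e V =>
      obtain ⟨σ', D₂', hstep₂, hR'⟩ := replay hR hI₁ hI₂ h1 (by intro i w h; exact nomatch h)
      cases C₂ with
      | opp _ _ _ _ _ _ => exact hR.elim
      | prop A₂ M₂ K₂ t₂ e₂ V₂ =>
          obtain ⟨-, hD⟩ := prop_step_det h2 hstep₂
          exact ⟨σ', hD ▸ hR'⟩
  | opp A M K t V u =>
      cases C₂ with
      | prop _ _ _ _ _ _ => exact hR.elim
      | opp A₂ M₂ K₂ t₂ V₂ u₂ =>
          obtain ⟨hA, rfl, rfl, rfl, rfl, rfl⟩ := hR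
          obtain ⟨i1, i2, i3, i4, i5, i6, i7, i8⟩ := hI₁
          rcases opp_tau_inv h1 with
            ⟨t₀, E, K', w₁, T₁', j₁, hKc, hnext₁, hty₁, hT₁, hnodup₁, hj₁, hleg₁, rfl⟩ |
            ⟨i₀, vi₁, w₁, T1₁, T2₁, j₁, hKn, hnext₁, hi₁, hty₁, hw₁, hnodup₁, hj₁, hleg₁, rfl⟩ <;>
          rcases opp_tau_inv h2 with
            ⟨t₀₂, E₂, K₂', w₂, T₂', j₂, hKc₂, hnext₂, hty₂, hT₂, hnodup₂, hj₂, hleg₂, rfl⟩ |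
            ⟨i₀₂, vi₂, w₂, T1₂, T2₂, j₂, hKn₂, hnext₂, hi₂, hty₂, hw₂, hnodup₂, hj₂, hleg₂, rfl⟩
          · -- ret / ret
            have hP : EndsP t₂ := by
              rcases i2 with ⟨hnil, -, -⟩ | hP
              · rw [hKc] at hnil; exact absurd hnil (by simp)
              · exact hP
            have hm : Move.oret w₁ = Move.oret w₂ :=
              hU t₂ hP _ _ (hN₁ (Set.mem_insert _ _)) (hN₂ (Set.mem_insert _ _))
            injection hm with hw
            subst hw
            subst hKc
            simp only [renK, List.map_cons, List.cons.injEq, Prod.mk.injEq] at hKc₂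
            obtain ⟨⟨ht₀, hE₂⟩, hK'⟩ := hKc₂
            subst ht₀; subst hE₂; subst hK'
            have hagree := updσ_agree (σ := σ) (j₂ := j₂) hj₁
            have hOccE : ∀ p ∈ ajsC E, (A p.1 p.2).isSome := i6 (t₀, E) (by simp)
            have he : eren (updσ σ w₁.names j₁ j₂) (E.plug (w₁.toExpr j₁)) =
                (renC σ E).plug (w₁.toExpr j₂) := by
              rw [plug_ren, toExpr_eren (j' := j₂) w₁ updσ_hit]
              congr 1
              exact renC_congr fun p hp => hagree p.1 p.2 (hOccE p hp)
            refine ⟨updσ σ w₁.names j₁ j₂, arel_upd hA i5 i8 hj₁ hj₂, rfl, ?_, rfl,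
              he.symm, ?_⟩
            · exact (renK_agree (fun q hq => i6 q (by simp [hq])) hagree).symm
            · exact (renV_agree i7 hagree).symm
          · -- ret / call : impossible
            have hP : EndsP t₂ := by
              rcases i2 with ⟨hnil, -, -⟩ | hP
              · rw [hKc] at hnil; exact absurd hnil (by simp)
              · exact hP
            have hm : Move.oret w₁ = Move.ocall i₀₂ w₂ :=
              hU t₂ hP _ _ (hN₁ (Set.mem_insert _ _)) (hN₂ (Set.mem_insert _ _))
            exact nomatch hm
          · -- call / ret : impossible
            have hP : EndsP t₂ := by
              rcases i2 with ⟨hnil, -, -⟩ | hP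
              · exact absurd hnil hKn
              · exact hP
            have hm : Move.ocall i₀ w₁ = Move.oret w₂ :=
              hU t₂ hP _ _ (hN₁ (Set.mem_insert _ _)) (hN₂ (Set.mem_insert _ _))
            exact nomatch hm
          · -- call / call
            have hP : EndsP t₂ := by
              rcases i2 with ⟨hnil, -, -⟩ | hP
              · exact absurd hnil hKn
              · exact hP
            have hm : Move.ocall i₀ w₁ = Move.ocall i₀₂ w₂ :=
              hU t₂ hP _ _ (hN₁ (Set.mem_insert _ _)) (hN₂ (Set.mem_insert _ _))
            injection hm with hi0 hw0
            subst hi0; subst hw0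
            have hvi : vi₂ = eren σ vi₁ := by
              simp only [renL, List.getElem?_map, hi₁, Option.map_some,
                Option.some.injEq] at hi₂
              exact hi₂.symm
            subst hvi
            have hagree := updσ_agree (σ := σ) (j₂ := j₂) hj₁
            have hOccvi : ∀ p ∈ ajs vi₁, (A p.1 p.2).isSome :=
              i8 vi₁ (mem_of_getElem? hi₁)
            have he : eren (updσ σ w₁.names j₁ j₂) (.app vi₁ (w₁.toExpr j₁)) =
                .app (eren σ vi₁) (w₁.toExpr j₂) := by
              simp only [eren_app]
              rw [toExpr_eren (j' := j₂) w₁ updσ_hit, eren_agree hOccvi hagree]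
            refine ⟨updσ σ w₁.names j₁ j₂, arel_upd hA i5 i8 hj₁ hj₂, rfl, ?_, rfl,
              he.symm, ?_⟩
            · exact (renK_agree i6 hagree).symm
            · simp only [List.map_cons]
              rw [renL_agree i8 hagree, renV_agree i7 hagree]

theorem vis_pair {σ : Nat → Nat → Nat} {C₁ C₂ D₁ D₂ : Conf} {η : Move}
    (hR : RC σ C₁ C₂) (hI₁ : Inv C₁) (hI₂ : Inv C₂)
    (h1 : Step C₁ (.mv η) D₁) (h2 : Step C₂ (.mv η) D₂) : ∃ σ', RC σ' D₁ D₂ := by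
  cases C₁ with
  | prop A M K t e V =>
      cases C₂ with
      | opp _ _ _ _ _ _ => exact hR.elim
      | prop A₂ M₂ K₂ t₂ e₂ V₂ =>
          obtain ⟨hA, rfl, rfl, rfl, rfl, rfl⟩ := hR
          obtain ⟨D₀, vs₁, hKn, hv₁, hulp₁, rfl, rfl⟩ := vis_from_prop h1
          obtain ⟨D₀', vs₂, -, hv₂, hulp₂, hη₂, rfl⟩ := vis_from_prop h2
          rw [ulp_eren, hulp₁] at hulp₂
          simp only [Option.map_some, Option.some.injEq, Prod.mk.injEq] at hulp₂
          obtain ⟨hD0, hvs⟩ := hulp₂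
          subst hvs
          exact ⟨σ, hA, rfl, rfl, rfl, rfl, rfl⟩
  | opp A M K t V u =>
      cases C₂ with
      | prop _ _ _ _ _ _ => exact hR.elim
      | opp A₂ M₂ K₂ t₂ V₂ u₂ =>
          obtain ⟨hA, rfl, rfl, rfl, rfl, rfl⟩ := hR
          obtain ⟨i1, i2, i3, i4, i5, i6, i7, i8⟩ := hI₁
          obtain ⟨i₁, vi₁, w₁, T1₁, T2₁, hKn, htn, hVn, hi₁, hty₁, hw₁, hnodup₁,
            hfresh₁, hη₁, rfl⟩ := vis_from_opp h1
          obtain ⟨i₂, vi₂, w₂, T1₂, T2₂, -, -, -, hi₂, hty₂, hw₂, hnodup₂,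
            hfresh₂, hη₂, rfl⟩ := vis_from_opp h2
          rw [hη₁] at hη₂
          injection hη₂ with hi0 hw0
          subst hi0; subst hw0
          have hf₁ : ∀ a ∈ w₁.names, ∀ j, A a j = none := fun a ha => (hfresh₁ a ha).1
          have hagree := freshσ_agree (σ := σ) hf₁
          have hvi : vi₂ = eren σ vi₁ := by
            simp only [renL, List.getElem?_map, hi₁, Option.map_some,
              Option.some.injEq] at hi₂
            exact hi₂.symm
          subst hvi
          have hOccvi : ∀ p ∈ ajs vi₁, (A p.1 p.2).isSome := i8 vi₁ (mem_of_getElem? hi₁)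
          have he : eren (freshσ σ w₁.names) (.app vi₁ (w₁.toExpr 0)) =
              .app (eren σ vi₁) (w₁.toExpr 0) := by
            simp only [eren_app]
            rw [toExpr_eren (j' := 0) w₁ (fun a ha => by simp [freshσ, ha]),
              eren_agree hOccvi hagree]
          exact ⟨freshσ σ w₁.names, arel_upd_fresh hA i5 hf₁, rfl, rfl, rfl, he.symm, rfl⟩

theorem taus_pair {N : Set Trace} (hU : UniqueExt N) :
    ∀ {C₁ D₁ : Conf}, Taus C₁ D₁ → ∀ {σ : Nat → Nat → Nat} {C₂ D₂ : Conf},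
      RC σ C₁ C₂ → Inv C₁ → Inv C₂ → Taus C₂ D₂ → Stop D₁ → Stop D₂ →
      D₁.Mset ⊆ N → D₂.Mset ⊆ N → ∃ σ', RC σ' D₁ D₂ ∧ Inv D₁ ∧ Inv D₂ := by
  intro C₁ D₁ h1
  induction h1 using Relation.ReflTransGen.head_induction_on with
  | refl =>
      intro σ C₂ D₂ hR hI₁ hI₂ h2 hS₁ hS₂ hN₁ hN₂
      rcases Relation.ReflTransGen.cases_head h2 with rfl | ⟨C₂', hstep₂, -⟩
      · exact ⟨σ, hR, hI₁, hI₂⟩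
      · exact absurd hstep₂ fun hs => stop_no_tau (stop_rc_forward hR hS₁) hs
  | head hstep₁ hrest ih =>
      intro σ C₂ D₂ hR hI₁ hI₂ h2 hS₁ hS₂ hN₁ hN₂
      rcases Relation.ReflTransGen.cases_head h2 with rfl | ⟨C₂', hstep₂, hrest₂⟩
      · exact absurd hstep₁ fun hs => stop_no_tau (stop_rc_back hR hS₂) hs
      · obtain ⟨σ', hR'⟩ := tau_pair_step hR hI₁ hI₂ hstep₁ hstep₂
          ((taus_mset_mono hrest).trans hN₁) ((taus_mset_mono hrest₂).trans hN₂) hU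
        exact ih hR' (step_inv hstep₁ hI₁) (step_inv hstep₂ hI₂) hrest₂ hS₁ hS₂ hN₁ hN₂


/-! ### Shape of runs -/

def Good : Conf → Prop := fun C =>
  (∃ A M K t e V, C = .prop A M K t e V) ∨ (∃ A M K t V u, C = .opp A M K t V u ∧ K ≠ [])

def BarbO : Conf → Prop := fun C => ∃ A M u, C = .opp A M [] [] [] u

def OppNil : Conf → Prop := fun C => ∃ A M t V u, C = .opp A M [] t V u

theorem tau_good {C C'} (h : Step C .tau C') : Good C' := by
  cases h with
  | propTau hr => exact .inl ⟨_, _, _, _, _, _, rfl⟩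
  | propRet hv hulp hK => exact .inr ⟨_, _, _, _, _, _, rfl, hK⟩
  | propCall hv hulp hwf hT hA => exact .inr ⟨_, _, _, _, _, _, rfl, by simp⟩
  | opRet hnext hty hT hnodup hj hleg => exact .inl ⟨_, _, _, _, _, _, rfl⟩
  | opCall hK hnext hi hty hw hnodup hj hleg => exact .inl ⟨_, _, _, _, _, _, rfl⟩

theorem taus_good {C D} (h : Taus C D) (hG : Good C) : Good D := by
  induction h with
  | refl => exact hG
  | tail hab hbc ih => exact tau_good hbc

theorem good_vis {C C' η} (h : Step C (.mv η) C') (hG : Good C) :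
    (∃ D, η = .pret D) ∧ BarbO C' := by
  cases C with
  | prop A M K t e V =>
      obtain ⟨D, vs, rfl, hv, hulp, rfl, rfl⟩ := vis_from_prop h
      exact ⟨⟨D, rfl⟩, ⟨_, _, _, rfl⟩⟩
  | opp A M K t V u =>
      rcases hG with ⟨_, _, _, _, _, _, heq⟩ | ⟨_, _, _, _, _, _, heq, hK⟩
      · exact nomatch heq
      · injection heq with h1 h2 h3 h4 h5 h6
        obtain ⟨i, vi, w, T1, T2, hKn, -, -, -, -, -, -, -, -, -⟩ := vis_from_opp h
        rw [← h3] at hK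
        exact absurd hKn hK

theorem barbO_taus_eq {C D} (h : Taus C D) (hB : BarbO C) : D = C := by
  induction h using Relation.ReflTransGen.head_induction_on with
  | refl => rfl
  | head hstep hrest ih =>
      obtain ⟨A, M, u, rfl⟩ := hB
      exact absurd hstep fun hs => no_tau_opp_nil hs

theorem good_not_oppnil {C} (hG : Good C) (hO : OppNil C) : False := by
  obtain ⟨A, M, t, V, u, rfl⟩ := hO
  rcases hG with ⟨_, _, _, _, _, _, heq⟩ | ⟨_, _, _, _, _, _, heq, hK⟩
  · exact nomatch heq
  · injection heq with h1 h2 h3 h4 h5 h6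
    exact hK h3.symm

/-! ### Chunked runs -/

inductive ORun : Conf → Trace → Conf → Prop
  | nil {C} : ORun C [] C
  | cons {C C₁ C₂ C₃ F i w D s} (h1 : Step C (.mv (.ocall i w)) C₁) (h2 : Taus C₁ C₂)
      (h3 : Step C₂ (.mv (.pret D)) C₃) (ht : ORun C₃ s F) :
      ORun C (Move.ocall i w :: Move.pret D :: s) F

theorem orun_mset_mono {C s F} (h : ORun C s F) : C.Mset ⊆ F.Mset := by
  induction h with
  | nil => exact subset_rfl
  | cons h1 h2 h3 ht ih =>
      exact (step_mset_mono h1).trans ((taus_mset_mono h2).trans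
        ((step_mset_mono h3).trans ih))

theorem taus_inv {C D} (h : Taus C D) (hI : Inv C) : Inv D := by
  induction h with
  | refl => exact hI
  | tail hab hbc ih => exact step_inv hbc ih

theorem orun_inv {C s F} (h : ORun C s F) (hI : Inv C) : Inv F := by
  induction h with
  | nil => exact hI
  | cons h1 h2 h3 ht ih =>
      exact ih (step_inv h3 (taus_inv h2 (step_inv h1 hI)))

theorem decomp_main :
    ∀ n : Nat,
      (∀ (s : Trace) (C F : Conf), s.length ≤ n → WTrace C s F → BarbO C → OppNil F →
        ORun C s F ∧ BarbO F) ∧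
      (∀ (s : Trace) (C F : Conf), s.length ≤ n → WTrace C s F → Good C → OppNil F →
        ∃ D s' Ca Cb, s = Move.pret D :: s' ∧ Taus C Ca ∧ Step Ca (.mv (.pret D)) Cb ∧
          BarbO Cb ∧ ORun Cb s' F ∧ BarbO F) := by
  refine measure_ind (fun n => n) fun n ih => ⟨?_, ?_⟩
  · intro s C F hlen hw hB hF
    cases hw with
    | nil h =>
        rw [barbO_taus_eq h hB]
        exact ⟨.nil, hB⟩
    | cons hstep ht =>
        rename_i C₁ η s'
        obtain ⟨Ca, Cb, hta, hstepv, htb⟩ := hstep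
        rw [barbO_taus_eq hta hB] at hstepv
        obtain ⟨A, M, u, rfl⟩ := hB
        obtain ⟨i, vi, w, T1, T2, -, -, -, hi, hty, hw', hnodup, hfresh, rfl, rfl⟩ :=
          vis_from_opp hstepv
        have hGb : Good (Conf.prop (AMap.upd A w.names 0 []) M [] []
            (.app vi (w.toExpr 0)) []) := .inl ⟨_, _, _, _, _, _, rfl⟩
        have hG₁ : Good C₁ := taus_good htb hGb
        have hlen' : s'.length ≤ n - 1 := by simp at hlen; omega
        have hn : n - 1 < n := by
          rcases Nat.eq_zero_or_pos n with rfl | h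
          · simp at hlen
          · omega
        obtain ⟨D, s'', Ca', Cb', rfl, hta', hstepv', hBb', ho, hBF⟩ :=
          (ih (n - 1) hn).2 s' C₁ F hlen' ht hG₁ hF
        refine ⟨?_, hBF⟩
        exact ORun.cons hstepv (htb.trans hta') hstepv' ho
  · intro s C F hlen hw hG hF
    cases hw with
    | nil h => exact absurd hF fun hO => good_not_oppnil (taus_good h hG) hO
    | cons hstep ht =>
        rename_i C₁ η s'
        obtain ⟨Ca, Cb, hta, hstepv, htb⟩ := hstep
        have hGa : Good Ca := taus_good hta hG
        obtain ⟨⟨D, rfl⟩, hBb⟩ := good_vis hstepv hGa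
        have hC₁ : C₁ = Cb := barbO_taus_eq htb hBb
        subst hC₁
        have hlen' : s'.length ≤ n - 1 := by simp at hlen; omega
        have hn : n - 1 < n := by
          rcases Nat.eq_zero_or_pos n with rfl | h
          · simp at hlen
          · omega
        obtain ⟨ho, hBF⟩ := (ih (n - 1) hn).1 s' C₁ F hlen' ht hBb hF
        exact ⟨D, s', Ca, C₁, rfl, hta, hstepv, hBb, ho, hBF⟩

/-- Decomposition of a complete run from an initial configuration. -/
theorem wtrace_decomp {e : Expr} {s : Trace} {F : Conf}
    (hw : WTrace (initConf e) s F) (hF : OppNil F) :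
    ∃ D s' Ca Cb, s = Move.pret D :: s' ∧ Taus (initConf e) Ca ∧
      Step Ca (.mv (.pret D)) Cb ∧ BarbO Cb ∧ ORun Cb s' F ∧ BarbO F :=
  (decomp_main s.length).2 s _ F le_rfl hw (.inl ⟨_, _, _, _, _, _, rfl⟩) hF


/-! ### Reflexivity of the renaming relation -/

theorem map_eren_id (l : List Expr) : l.map (eren fun _ j => j) = l := by
  have h := List.map_congr_left (l := l) (f := eren fun _ j => j) (g := fun e => e)
    (fun e _ => eren_id e)
  simpa using h

theorem renC_id (E : ECtx) : renC (fun _ j => j) E = E := by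
  induction E with
  | hole T => rfl
  | tupleC vs E es ih => simp [renC, ih, map_eren_id]
  | primC op vs E es ih => simp [renC, ih, map_eren_id]
  | appL E e ih => simp [renC, ih, eren_id]
  | appR v E ih => simp [renC, ih, eren_id]
  | iteC E e1 e2 ih => simp [renC, ih, eren_id]
  | letC n E b ih => simp [renC, ih, eren_id]

theorem renL_id (u : List Expr) : renL (fun _ j => j) u = u := map_eren_id u

theorem renK_id (K : List (Trace × ECtx)) : renK (fun _ j => j) K = K := by
  have h := List.map_congr_left (l := K) (f := fun q : Trace × ECtx => (q.1, renC (fun _ j => j) q.2))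
    (g := fun q => q) (fun q _ => by simp [renC_id])
  simpa [renK] using h

theorem rc_refl (C : Conf) : RC (fun _ j => j) C C := by
  cases C with
  | prop A M K t e V =>
      refine ⟨?_, rfl, (renK_id K).symm, rfl, (eren_id e).symm, ?_⟩
      · intro a j u hu; rw [hu, renL_id]
      · conv_lhs => rw [← List.map_id V]
        exact List.map_congr_left fun u _ => (renL_id u).symm
  | opp A M K t V u =>
      refine ⟨?_, rfl, (renK_id K).symm, rfl, ?_, (renL_id u).symm⟩
      · intro a j u hu; rw [hu, renL_id]
      · conv_lhs => rw [← List.map_id V]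
        exact List.map_congr_left fun u _ => (renL_id u).symm

/-! ### WTrace glue -/

theorem wtrace_append {C D F : Conf} {s s' : Trace}
    (h1 : WTrace C s D) (h2 : WTrace D s' F) : WTrace C (s ++ s') F := by
  induction h1 with
  | nil h =>
      cases h2 with
      | nil h' => exact .nil (h.trans h')
      | cons hw ht =>
          rename_i C₁ η s₀
          obtain ⟨Ca, Cb, hta, hst, htb⟩ := hw
          exact .cons ⟨Ca, Cb, h.trans hta, hst, htb⟩ ht
  | cons hw ht ih => exact .cons hw (ih h2)

theorem wtrace_chunk2 {C Cb Cc C' : Conf} {η₁ η₂ : Move}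
    (h1 : Step C (.mv η₁) Cb) (h2 : Taus Cb Cc) (h3 : Step Cc (.mv η₂) C') :
    WTrace C [η₁, η₂] C' :=
  .cons ⟨C, Cb, .refl, h1, h2⟩ (.cons ⟨Cc, C', .refl, h3, .refl⟩ (.nil .refl))

theorem pret_target_barbO {C C' : Conf} {D : VCtx} (h : Step C (.mv (.pret D)) C') :
    BarbO C' := by
  cases C with
  | prop A M K t e V =>
      obtain ⟨D', vs, -, -, -, -, rfl⟩ := vis_from_prop h
      exact ⟨_, _, _, rfl⟩
  | opp A M K t V u =>
      obtain ⟨i, vi, w, T1, T2, -, -, -, -, -, -, -, -, hη, -⟩ := vis_from_opp h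
      exact nomatch hη

theorem ocall_src_barb {C C' : Conf} {i : Nat} {w : AVal}
    (h : Step C (.mv (.ocall i w)) C') :
    ∃ A M u, C = .opp A M [] [] [] u ∧
      (∀ a ∈ w.names, (∀ j, A a j = none) ∧ a ∉ MNames M) := by
  cases C with
  | prop A M K t e V =>
      obtain ⟨D', vs, -, -, -, hη, -⟩ := vis_from_prop h
      exact nomatch hη
  | opp A M K t V u =>
      obtain ⟨i', vi, w', T1, T2, rfl, rfl, rfl, -, -, -, -, hfresh, hη, -⟩ :=
        vis_from_opp h
      injection hη with h1 h2
      subst h1; subst h2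
      exact ⟨A, M, u, rfl, hfresh⟩

theorem wstep_pret_parts {C C' : Conf} {D : VCtx} (h : WStep C (.pret D) C') :
    ∃ Ca, Taus C Ca ∧ Step Ca (.mv (.pret D)) C' ∧ BarbO C' := by
  obtain ⟨Ca, Cb, hta, hst, htb⟩ := h
  have hB := pret_target_barbO hst
  rw [barbO_taus_eq htb hB]
  exact ⟨Ca, hta, hst, hB⟩

theorem wstep2_parts {C C' : Conf} {i : Nat} {w : AVal} {D : VCtx}
    (hB : BarbO C) (h : WStep2 C (.ocall i w) (.pret D) C') :
    ∃ Cb Cc, Step C (.mv (.ocall i w)) Cb ∧ Taus Cb Cc ∧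
      Step Cc (.mv (.pret D)) C' ∧ BarbO C' := by
  obtain ⟨Cm, ⟨Ca, Cb, hta, hst1, htb⟩, hw2⟩ := h
  obtain ⟨Cc, htc, hst2, hB'⟩ := wstep_pret_parts hw2
  rw [barbO_taus_eq hta hB] at hst1
  exact ⟨Cb, Cc, hst1, htb.trans htc, hst2, hB'⟩

theorem wtrace_inv {C s F} (h : WTrace C s F) (hI : Inv C) : Inv F := by
  induction h with
  | nil h => exact taus_inv h hI
  | cons hw ht ih =>
      obtain ⟨Ca, Cb, hta, hst, htb⟩ := hw
      exact ih (taus_inv htb (step_inv hst (taus_inv hta hI)))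

/-! ### A-map and M-names monotonicity -/

theorem step_amap_mono {C l C'} (h : Step C l C') :
    ∀ a j, ((C.Amap) a j).isSome → ((C'.Amap) a j).isSome := by
  cases h with
  | propTau hr => exact fun a j h => h
  | propRetBarb hv hulp => exact fun a j h => h
  | propRet hv hulp hK => exact fun a j h => h
  | propCall hv hulp hwf hT hA => exact fun a j h => h
  | opRet hnext hty hT hnodup hj hleg => exact upd_isSome_mono
  | opCallBarb hi hty hw hnodup hfresh => exact upd_isSome_mono
  | opCall hK hnext hi hty hw hnodup hj hleg => exact upd_isSome_mono

theorem taus_amap_mono {C D} (h : Taus C D) :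
    ∀ a j, ((C.Amap) a j).isSome → ((D.Amap) a j).isSome := by
  induction h with
  | refl => exact fun a j h => h
  | tail hab hbc ih => exact fun a j h => step_amap_mono hbc a j (ih a j h)

theorem mnames_mono {M M' : Set Trace} (h : M ⊆ M') : MNames M ⊆ MNames M' := by
  rintro a ⟨t, ht, hta⟩
  exact ⟨t, h ht, hta⟩

theorem step_anew {C l C'} (h : Step C l C') :
    ∀ a, (∃ j, ((C'.Amap) a j).isSome) →
      (∃ j, ((C.Amap) a j).isSome) ∨ a ∈ MNames C'.Mset ∨
        ∃ i w, l = .mv (.ocall i w) ∧ a ∈ w.names := by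
  have upd_case : ∀ (A : AMap) (ws : List Nat) (j₀ : Nat) (k : List Expr) (a : Nat),
      (∃ j, ((A.upd ws j₀ k) a j).isSome) → (∃ j, (A a j).isSome) ∨ a ∈ ws := by
    intro A ws j₀ k a ⟨j, hj⟩
    simp only [AMap.upd] at hj
    split at hj
    · rename_i hc; exact .inr hc.1
    · exact .inl ⟨j, hj⟩
  cases h with
  | propTau hr => exact fun a h => .inl h
  | propRetBarb hv hulp => exact fun a h => .inl h
  | propRet hv hulp hK => exact fun a h => .inl h
  | propCall hv hulp hwf hT hA => exact fun a h => .inl h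
  | opRet hnext hty hT hnodup hj hleg =>
      intro a h
      rcases upd_case _ _ _ _ a h with h | h
      · exact .inl h
      · exact .inr (.inl (mem_mnames_insert (by simpa [Move.intros] using h)))
  | opCallBarb hi hty hw hnodup hfresh =>
      intro a h
      rcases upd_case _ _ _ _ a h with h | h
      · exact .inl h
      · exact .inr (.inr ⟨_, _, rfl, h⟩)
  | opCall hK hnext hi hty hw hnodup hj hleg =>
      intro a h
      rcases upd_case _ _ _ _ a h with h | h
      · exact .inl h
      · exact .inr (.inl (mem_mnames_insert (by simpa [Move.intros] using h)))

theorem taus_anew {C D} (h : Taus C D) :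
    ∀ a, (∃ j, ((D.Amap) a j).isSome) →
      (∃ j, ((C.Amap) a j).isSome) ∨ a ∈ MNames D.Mset := by
  induction h with
  | refl => exact fun a h => .inl h
  | tail hab hbc ih =>
      intro a h
      rcases step_anew hbc a h with h | h | ⟨i, w, habs, -⟩
      · rcases ih a h with h | h
        · exact .inl h
        · exact .inr (mnames_mono (step_mset_mono hbc) h)
      · exact .inr h
      · exact nomatch habs

theorem chunk2_anew {C Cb Cc C' : Conf} {i : Nat} {w : AVal} {D : VCtx}
    (h1 : Step C (.mv (.ocall i w)) Cb) (h2 : Taus Cb Cc)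
    (h3 : Step Cc (.mv (.pret D)) C') :
    ∀ a, (∃ j, ((C'.Amap) a j).isSome) →
      (∃ j, ((C.Amap) a j).isSome) ∨ a ∈ MNames C'.Mset ∨ a ∈ w.names := by
  intro a h
  rcases step_anew h3 a h with h | h | ⟨i', w', habs, -⟩
  · rcases taus_anew h2 a h with h | h
    · rcases step_anew h1 a h with h | h | ⟨i', w', heq, hmem⟩
      · exact .inl h
      · exact .inr (.inl (mnames_mono ((taus_mset_mono h2).trans (step_mset_mono h3)) h))
      · injection heq with heq'
        injection heq' with g1 g2
        subst g2
        exact .inr (.inr hmem)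
    · exact .inr (.inl (mnames_mono (step_mset_mono h3) h))
  · exact .inr (.inl h)
  · exact nomatch habs

theorem chunk2_amono {C Cb Cc C' : Conf} {l₁ l₂ : Lab}
    (h1 : Step C l₁ Cb) (h2 : Taus Cb Cc) (h3 : Step Cc l₂ C') :
    ∀ a j, ((C.Amap) a j).isSome → ((C'.Amap) a j).isSome := fun a j h =>
  step_amap_mono h3 a j (taus_amap_mono h2 a j (step_amap_mono h1 a j h))

/-! ### Lockstep along ORuns, splitting and replay -/

theorem stop_of_pret_src {C C' : Conf} {D : VCtx} (h : Step C (.mv (.pret D)) C') :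
    Stop C := by
  cases C with
  | prop A M K t e V =>
      obtain ⟨D', vs, rfl, hv, -, -, -⟩ := vis_from_prop h
      exact .inl ⟨_, _, _, _, _, rfl, hv⟩
  | opp A M K t V u =>
      obtain ⟨i, vi, w, T1, T2, -, -, -, -, -, -, -, -, hη, -⟩ := vis_from_opp h
      exact nomatch hη

theorem orun_pair {N : Set Trace} (hU : UniqueExt N) :
    ∀ {s : Trace} {C₁ F₁ : Conf}, ORun C₁ s F₁ → ∀ {σ : Nat → Nat → Nat} {C₂ F₂ : Conf},
      RC σ C₁ C₂ → Inv C₁ → Inv C₂ → ORun C₂ s F₂ → F₁.Mset ⊆ N → F₂.Mset ⊆ N →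
      ∃ σ', RC σ' F₁ F₂ := by
  intro s C₁ F₁ h1
  induction h1 with
  | nil =>
      intro σ C₂ F₂ hR hI₁ hI₂ h2 hN₁ hN₂
      cases h2
      exact ⟨σ, hR⟩
  | cons hst1 hta1 hst3 ht ih =>
      intro σ C₂ F₂ hR hI₁ hI₂ h2 hN₁ hN₂
      cases h2 with
      | cons hst1' hta1' hst3' ht' =>
          obtain ⟨σ₁, hR₁⟩ := vis_pair hR hI₁ hI₂ hst1 hst1'
          have hI₁' := step_inv hst1 hI₁
          have hI₂' := step_inv hst1' hI₂
          have hS₁ := stop_of_pret_src hst3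
          have hS₂ := stop_of_pret_src hst3'
          have hb₁ : _ ⊆ N := (step_mset_mono hst3).trans ((orun_mset_mono ht).trans hN₁)
          have hb₂ : _ ⊆ N := (step_mset_mono hst3').trans ((orun_mset_mono ht').trans hN₂)
          obtain ⟨σ₂, hR₂, hI₁'', hI₂''⟩ :=
            taus_pair hU hta1 hR₁ hI₁' hI₂' hta1' hS₁ hS₂ hb₁ hb₂
          obtain ⟨σ₃, hR₃⟩ := vis_pair hR₂ hI₁'' hI₂'' hst3 hst3'
          exact ih hR₃ (step_inv hst3 hI₁'') (step_inv hst3' hI₂'') ht' hN₁ hN₂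

theorem orun_split :
    ∀ {s₁ : Trace} {X Y : Conf}, ORun X s₁ Y → ∀ {C F : Conf} {s₂ : Trace},
      ORun C (s₁ ++ s₂) F → ∃ C', ORun C s₁ C' ∧ ORun C' s₂ F := by
  intro s₁ X Y h
  induction h with
  | nil => exact fun h2 => ⟨_, .nil, h2⟩
  | cons hst1 hta hst3 ht ih =>
      intro C F s₂ h2
      rw [List.cons_append, List.cons_append] at h2
      cases h2 with
      | cons hst1' hta' hst3' ht' =>
          obtain ⟨C', ho1, ho2⟩ := ih ht'
          exact ⟨C', .cons hst1' hta' hst3' ho1, ho2⟩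

theorem taus_replay {C D : Conf} (h : Taus C D) :
    ∀ {σ : Nat → Nat → Nat} {C₂ : Conf}, RC σ C C₂ → Inv C → Inv C₂ →
      ∃ σ' D₂, Taus C₂ D₂ ∧ RC σ' D D₂ ∧ Inv D ∧ Inv D₂ := by
  induction h using Relation.ReflTransGen.head_induction_on with
  | refl => exact fun hR hI₁ hI₂ => ⟨_, _, .refl, hR, hI₁, hI₂⟩
  | head hstep hrest ih =>
      intro σ C₂ hR hI₁ hI₂
      obtain ⟨σ₁, X₂, hstep₂, hR₁⟩ := replay hR hI₁ hI₂ hstep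
        (by intro i w h; exact nomatch h)
      obtain ⟨σ', D₂, hta, hR', hID, hID₂⟩ :=
        ih hR₁ (step_inv hstep hI₁) (step_inv hstep₂ hI₂)
      exact ⟨σ', D₂, .head hstep₂ hta, hR', hID, hID₂⟩

theorem barbO_rc {σ C D} (hR : RC σ C D) (h : BarbO C) : BarbO D := by
  obtain ⟨A, M, u, rfl⟩ := h
  cases D with
  | prop _ _ _ _ _ _ => exact hR.elim
  | opp A₂ M₂ K₂ t₂ V₂ u₂ =>
      obtain ⟨hA, rfl, rfl, rfl, rfl, rfl⟩ := hR
      exact ⟨A₂, _, _, rfl⟩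

theorem chunk_replay {σ : Nat → Nat → Nat} {B C₂ Cb Cc F : Conf} {i : Nat} {w : AVal}
    {D : VCtx} (hR : RC σ B C₂) (hIB : Inv B) (hI₂ : Inv C₂)
    (h1 : Step B (.mv (.ocall i w)) Cb) (h2 : Taus Cb Cc) (h3 : Step Cc (.mv (.pret D)) F)
    (hfr : ∀ a ∈ w.names, ∀ j, C₂.Amap a j = none) :
    ∃ σ' F₂, WStep2 C₂ (.ocall i w) (.pret D) F₂ ∧ RC σ' F F₂ := by
  obtain ⟨σ₁, Cb₂, hst1, hR₁⟩ := replay hR hIB hI₂ h1 (by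
    intro i' w' heq
    injection heq with heq'
    injection heq' with g1 g2
    subst g2
    exact hfr)
  obtain ⟨σ₂, Cc₂, hta₂, hR₂, hIc, hIc₂⟩ := taus_replay h2 hR₁ (step_inv h1 hIB)
    (step_inv hst1 hI₂)
  obtain ⟨σ₃, F₂, hst3, hR₃⟩ := replay hR₂ hIc hIc₂ h3 (by intro i' w' h; exact nomatch h)
  exact ⟨σ₃, F₂, ⟨Cb₂, ⟨C₂, Cb₂, .refl, hst1, .refl⟩, ⟨Cc₂, F₂, hta₂, hst3, .refl⟩⟩, hR₃⟩


/-! ### The candidate bisimulation for the backward direction -/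

def SimR (e1 e2 : Expr) : Conf → Conf → Prop := fun C1 C2 =>
  (C1 = initConf e1 ∧ C2 = initConf e2) ∨
    (∃ t, WTrace (initConf e1) t C1 ∧ WTrace (initConf e2) t C2 ∧ BarbO C1 ∧ BarbO C2 ∧
      C1.Mset = C2.Mset)

theorem mset_init (e : Expr) : (initConf e).Mset = (∅ : Set Trace) := rfl

theorem names_none_of_not_mem {C : Conf} {a : Nat} (h : a ∉ C.names) :
    (∀ j, C.Amap a j = none) ∧ a ∉ MNames C.Mset := by
  constructor
  · intro j
    by_contra hne
    exact h (.inl (.inl ⟨j, Option.isSome_iff_ne_none.mpr hne⟩))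
  · intro hmem
    exact h (.inl (.inr hmem))

theorem simR_isWeakSim {e1 e2 : Expr} {T : Ty} (ht1 : Typed [] e1 T) (ht2 : Typed [] e2 T)
    (hSem : Sem e1 = Sem e2) : IsWeakSim (SimR e1 e2) := by
  intro C1 C2 hR
  refine ⟨?_, ?_, ?_⟩
  · -- initial clause
    intro hInit D' C1' hW
    rcases hR with ⟨rfl, rfl⟩ | ⟨t, hr1, hr2, hB1, hB2, hMeq⟩
    · obtain ⟨Ca, hta, hst, hB'⟩ := wstep_pret_parts hW
      have hw1 : WTrace (initConf e1) [Move.pret D'] C1' :=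
        .cons ⟨_, _, hta, hst, .refl⟩ (.nil .refl)
      obtain ⟨A₁, M₁, u₁, hC1'⟩ := hB'
      have hmem : (([Move.pret D'], C1'.Mset) : Trace × Set Trace) ∈ Sem e1 := by
        subst hC1'
        exact ⟨A₁, [], [], u₁, hw1⟩
      rw [hSem] at hmem
      obtain ⟨A₂, t₂', V₂, v₂, hw2⟩ := hmem
      have hw2' : WTrace (initConf e2) [Move.pret D']
          (.opp A₂ C1'.Mset [] t₂' V₂ v₂) := hw2
      obtain ⟨D₀, s', Ca₂, Cb₂, heq, hta₂, hst₂, hBb₂, ho₂, hBF₂⟩ :=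
        wtrace_decomp hw2' ⟨_, _, _, _, _, rfl⟩
      injection heq with g1 g2
      injection g1 with g1'
      subst g1'
      subst g2
      cases ho₂
      exact ⟨_, ⟨Ca₂, _, hta₂, hst₂, .refl⟩,
        .inr ⟨[Move.pret D'], hw1, hw2', ⟨A₁, M₁, u₁, hC1'⟩, hBF₂, rfl⟩⟩
    · obtain ⟨e, rfl⟩ := hInit
      obtain ⟨A, M, u, heq⟩ := hB1
      exact nomatch heq
  · -- final clause
    intro hFin i w D' C1' hfr hW2
    rcases hR with ⟨rfl, rfl⟩ | ⟨t, hr1, hr2, hB1, hB2, hMeq⟩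
    · obtain ⟨A, M, t', V, u, heq⟩ := hFin
      exact nomatch heq
    · obtain ⟨Cb, Cc, hst1, htau, hst3, hB'⟩ := wstep2_parts hB1 hW2
      have hw1ext : WTrace (initConf e1) (t ++ [Move.ocall i w, Move.pret D']) C1' :=
        wtrace_append hr1 (wtrace_chunk2 hst1 htau hst3)
      obtain ⟨A₁', M₁', u₁', hC1'⟩ := hB'
      have hmem : ((t ++ [Move.ocall i w, Move.pret D'], C1'.Mset) :
          Trace × Set Trace) ∈ Sem e1 := by
        subst hC1'
        exact ⟨A₁', [], [], u₁', hw1ext⟩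
      rw [hSem] at hmem
      obtain ⟨A₂', t₂', V₂', v₂', hw2ext0⟩ := hmem
      have hw2ext : WTrace (initConf e2) (t ++ [Move.ocall i w, Move.pret D'])
          (.opp A₂' C1'.Mset [] t₂' V₂' v₂') := hw2ext0
      clear hw2ext0
      -- invariants and the memory bound
      have hIinit1 : Inv (initConf e1) := inv_initConf ht1
      have hIinit2 : Inv (initConf e2) := inv_initConf ht2
      have hI1' : Inv C1' :=
        step_inv hst3 (taus_inv htau (step_inv hst1 (wtrace_inv hr1 hIinit1)))
      have hU : UniqueExt C1'.Mset := by
        rw [hC1'] at hI1' ⊢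
        exact hI1'.1
      have hC1N : C1.Mset ⊆ C1'.Mset :=
        (step_mset_mono hst1).trans ((taus_mset_mono htau).trans (step_mset_mono hst3))
      -- decompose the stored run to C2
      obtain ⟨D₀, s', Ca₂, Cb₂, rfl, hta₂, hst₂, hBb₂, ho₂, -⟩ :=
        wtrace_decomp hr2 (by obtain ⟨A₀, M₀, u₀, rfl⟩ := hB2; exact ⟨_, _, _, _, _, rfl⟩)
      -- decompose the fresh run from Sem
      obtain ⟨D₀', s₀, CaB, CbB, heqB, htaB, hstB, hBbB, hoB, hBFB⟩ :=
        wtrace_decomp hw2ext ⟨_, _, _, _, _, rfl⟩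
      rw [List.cons_append] at heqB
      injection heqB with g1 g2
      injection g1 with g1'
      subst g1'
      subst g2
      -- split the fresh run at the boundary
      obtain ⟨Bmid, hoB1, hoB2⟩ := orun_split ho₂ hoB
      -- invariants
      have hICb₂ : Inv Cb₂ := step_inv hst₂ (taus_inv hta₂ hIinit2)
      have hICbB : Inv CbB := step_inv hstB (taus_inv htaB hIinit2)
      -- memory bounds
      have hNB : CbB.Mset ⊆ C1'.Mset := by
        intro x hx
        exact orun_mset_mono hoB2 (orun_mset_mono hoB1 hx)
      have hC2N : C2.Mset ⊆ C1'.Mset := by rw [← hMeq]; exact hC1N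
      have hN₂ : Cb₂.Mset ⊆ C1'.Mset := (orun_mset_mono ho₂).trans hC2N
      -- pair the initial segments
      obtain ⟨σa, hRa, hIa1, hIa2⟩ := taus_pair hU htaB (rc_refl (initConf e2))
        hIinit2 hIinit2 hta₂ (stop_of_pret_src hstB) (stop_of_pret_src hst₂)
        ((step_mset_mono hstB).trans hNB) ((step_mset_mono hst₂).trans hN₂)
      obtain ⟨σb, hRb⟩ := vis_pair hRa hIa1 hIa2 hstB hst₂
      -- lockstep along the shared suffix
      obtain ⟨σc, hRc⟩ := orun_pair hU hoB1 hRb hICbB hICb₂ ho₂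
        (fun x hx => orun_mset_mono hoB2 hx) hC2N
      -- invert the final chunk of the fresh run
      cases hoB2 with
      | cons hstc1 htac hstc3 htnil =>
          cases htnil
          -- replay the chunk from C2
          have hIBmid : Inv Bmid := orun_inv hoB1 hICbB
          have hIC2 : Inv C2 := orun_inv ho₂ hICb₂
          have hfr' : ∀ a ∈ w.names, ∀ j, C2.Amap a j = none := fun a ha =>
            (names_none_of_not_mem (hfr a ha)).1
          obtain ⟨σd, F₂, hW2', hRd⟩ :=
            chunk_replay hRc hIBmid hIC2 hstc1 htac hstc3 hfr'
          refine ⟨F₂, hW2', .inr ⟨(Move.pret D₀ :: s') ++ [Move.ocall i w, Move.pret D'],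
            hw1ext, ?_, ⟨A₁', M₁', u₁', hC1'⟩, barbO_rc hRd hBFB, ?_⟩⟩
          · refine wtrace_append hr2 ?_
            obtain ⟨Cb2, Cc2, hst1', hta', hst3', -⟩ := wstep2_parts hB2 hW2'
            exact wtrace_chunk2 hst1' hta' hst3'
          · -- Mset C1' = Mset F₂
            have hMF : F₂.Mset = C1'.Mset := by
              cases F₂ with
              | prop _ _ _ _ _ _ => exact hRd.elim
              | opp Af Mf Kf tf Vf uf =>
                  obtain ⟨-, hM, -, -, -, -⟩ := hRd
                  exact hM
            exact hMF.symm
  · -- memories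
    rcases hR with ⟨rfl, rfl⟩ | ⟨t, hr1, hr2, hB1, hB2, hMeq⟩
    · exact fun x hx => hx
    · rw [hMeq]


/-! ### Forward direction: bisimilarity implies trace equivalence -/

theorem bisim_sem_sub {e1 e2 : Expr} (R : Conf → Conf → Prop)
    (hs : IsWeakSim R) (hs' : IsWeakSim (fun a b => R b a))
    (hR0 : R (initConf e1) (initConf e2)) : Sem e1 ⊆ Sem e2 := by
  rintro ⟨s, M⟩ ⟨A₁, t₁', V₁, v₁, hw⟩
  have hw' : WTrace (initConf e1) s (.opp A₁ M [] t₁' V₁ v₁) := hw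
  obtain ⟨D₀, s', Ca, Cb, rfl, hta, hst, hBb, ho, hBF⟩ :=
    wtrace_decomp hw' ⟨_, _, _, _, _, rfl⟩
  obtain ⟨h1, -, -⟩ := hs _ _ hR0
  obtain ⟨C2b, hW2b, hRb⟩ := h1 ⟨e1, rfl⟩ D₀ Cb ⟨Ca, Cb, hta, hst, .refl⟩
  obtain ⟨Ca₂, hta₂, hst₂, hB2b⟩ := wstep_pret_parts hW2b
  have hAinv : ∀ a, (∃ j, ((C2b.Amap) a j).isSome) → a ∈ MNames C2b.Mset ∨
      ∃ j, ((Cb.Amap) a j).isSome := by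
    intro a h
    rcases step_anew hst₂ a h with h | h | ⟨i', w', habs, -⟩
    · rcases taus_anew hta₂ a h with h | h
      · obtain ⟨j, hj⟩ := h
        exact absurd hj (by simp [initConf, Conf.Amap, AMap.empty])
      · exact .inl (mnames_mono (step_mset_mono hst₂) h)
    · exact .inl h
    · exact nomatch habs
  have main : ∀ {s₀ : Trace} {C1 F1 : Conf}, ORun C1 s₀ F1 → ∀ {C2 : Conf}, R C1 C2 →
      BarbO C1 → BarbO C2 →
      (∀ a, (∃ j, ((C2.Amap) a j).isSome) → a ∈ MNames C2.Mset ∨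
        ∃ j, ((C1.Amap) a j).isSome) →
      ∃ F2, WTrace C2 s₀ F2 ∧ BarbO F2 ∧ F2.Mset = F1.Mset := by
    intro s₀ C1 F1 ho
    induction ho with
    | nil =>
        intro C2 hR hB1 hB2 hAinv
        exact ⟨C2, .nil .refl, hB2,
          Set.Subset.antisymm (hs _ _ hR).2.2 (hs' _ _ hR).2.2⟩
    | cons hst1 htau hst3 ht ih =>
        rename_i X1 X2 X3 iq wq Dq sq
        intro C2 hR hB1 hB2 hAinv
        obtain ⟨A₁c, M₁c, u₁c, hC1eq, hfreshw⟩ := ocall_src_barb hst1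
        subst hC1eq
        obtain ⟨i0, vi0, w0, T10, T20, -, -, -, hi0, -, -, -, -, hη0, hX1⟩ :=
          vis_from_opp hst1
        injection hη0 with g1 g2
        subst g1
        subst g2
        have hMeq : C2.Mset = (Conf.opp A₁c M₁c [] [] [] u₁c).Mset :=
          Set.Subset.antisymm (hs _ _ hR).2.2 (hs' _ _ hR).2.2
        have hfr : ∀ a ∈ wq.names, a ∉ C2.names := by
          intro a ha hmem
          obtain ⟨hA1none, hM1⟩ := hfreshw a ha
          rcases hmem with (hmem | hmem) | hmem
          · rcases hAinv a hmem with h | ⟨j, hj⟩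
            · rw [hMeq] at h
              exact hM1 h
            · rw [show (Conf.opp A₁c M₁c [] [] [] u₁c).Amap a j = A₁c a j from rfl,
                hA1none j] at hj
              exact nomatch hj
          · rw [hMeq] at hmem
            exact hM1 hmem
          · obtain ⟨A₂c, M₂c, u₂c, rfl⟩ := hB2
            simp [Conf.tr, traceIntros, Conf.names] at hmem
        have hFin : Conf.Final (.opp A₁c M₁c [] [] [] u₁c) := ⟨_, _, _, _, _, rfl⟩
        obtain ⟨-, h2, -⟩ := hs _ _ hR
        obtain ⟨C2', hW2', hR'⟩ := h2 hFin iq wq _ _ hfr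
          ⟨_, ⟨_, _, .refl, hst1, htau⟩, ⟨_, _, .refl, hst3, .refl⟩⟩
        obtain ⟨Cb2, Cc2, hst1', hta', hst3', hB2'⟩ := wstep2_parts hB2 hW2'
        have hB3 : BarbO _ := pret_target_barbO hst3
        have hAinv' : ∀ a, (∃ j, ((C2'.Amap) a j).isSome) → a ∈ MNames C2'.Mset ∨
            ∃ j, ((X2.Amap) a j).isSome := by
          intro a h
          rcases chunk2_anew hst1' hta' hst3' a h with h | h | h
          · rcases hAinv a h with h | ⟨j, hj⟩
            · refine .inl (mnames_mono ?_ h)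
              exact (step_mset_mono hst1').trans
                ((taus_mset_mono hta').trans (step_mset_mono hst3'))
            · exact .inr ⟨j, chunk2_amono hst1 htau hst3 a j hj⟩
          · exact .inl h
          · refine .inr ⟨0, ?_⟩
            refine step_amap_mono hst3 a 0 (taus_amap_mono htau a 0 ?_)
            rw [hX1]
            simp [Conf.Amap, AMap.upd, h]
        obtain ⟨F2, hw2, hBF2, hMF⟩ := ih hR' hB3 hB2' hAinv'
        exact ⟨F2, wtrace_append (wtrace_chunk2 hst1' hta' hst3') hw2, hBF2, hMF⟩
  obtain ⟨F2, hw2, hBF2, hMF⟩ := main ho hRb hBb hB2b hAinv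
  have hfull : WTrace (initConf e2) (Move.pret D₀ :: s') F2 :=
    wtrace_append (.cons hW2b (.nil .refl)) hw2
  obtain ⟨A₂f, M₂f, u₂f, hF2⟩ := hBF2
  subst hF2
  have hMM : M₂f = M := hMF
  refine ⟨A₂f, [], [], u₂f, ?_⟩
  rw [show ((Move.pret D₀ :: s', M) : Trace × Set Trace).2 = M from rfl, ← hMM]
  exact hfull

theorem isWeakSim_congr {R S : Conf → Conf → Prop} (h : ∀ a b, R a b ↔ S a b)
    (hS : IsWeakSim S) : IsWeakSim R := by
  intro C1 C2 hR
  obtain ⟨h1, h2, h3⟩ := hS C1 C2 ((h C1 C2).mp hR)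
  refine ⟨fun hI D' C1' hW => ?_, fun hF i w D' C1' hfr hW => ?_, h3⟩
  · obtain ⟨C2', hw2, hr2⟩ := h1 hI D' C1' hW
    exact ⟨C2', hw2, (h C1' C2').mpr hr2⟩
  · obtain ⟨C2', hw2, hr2⟩ := h2 hF i w D' C1' hfr hW
    exact ⟨C2', hw2, (h C1' C2').mpr hr2⟩

theorem bisim_iff_sem (e1 e2 : Expr) (T : Ty)
    (h1 : Typed [] e1 T) (h2 : Typed [] e2 T) :
    ExprBisim e1 e2 ↔ Sem e1 = Sem e2 := by
  constructor
  · rintro ⟨R, hs, hs', hR0⟩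
    apply Set.Subset.antisymm
    · exact bisim_sem_sub R hs hs' hR0
    · exact bisim_sem_sub (fun a b => R b a) hs'
        (isWeakSim_congr (fun a b => Iff.rfl) hs) hR0
  · intro hSem
    refine ⟨SimR e1 e2, simR_isWeakSim h1 h2 hSem, ?_, .inl ⟨rfl, rfl⟩⟩
    refine isWeakSim_congr (fun a b => ?_) (simR_isWeakSim h2 h1 hSem.symm)
    constructor
    · rintro (⟨hb, ha⟩ | ⟨t, hr1, hr2, hB1, hB2, hM⟩)
      · exact .inl ⟨ha, hb⟩
      · exact .inr ⟨t, hr2, hr1, hB2, hB1, hM.symm⟩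
    · rintro (⟨ha, hb⟩ | ⟨t, hr2, hr1, hB2, hB1, hM⟩)
      · exact .inl ⟨hb, ha⟩
      · exact .inr ⟨t, hr1, hr2, hB1, hB2, hM.symm⟩

end PCFv
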